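/- arXiv:1504.08118 — 10 statements merged into one kernel-verified Lean document; each statement's English description precedes it below -/
import Mathlib

section
/- Let f : [0,∞) → (0,∞) be a twice continuously differentiable probability density function such that for every d > 0 the integral ∫₀¹ f(dy)·f(d(1−y)) dy is positive and finite, and suppose the limit L := lim_{x→∞} sign((d²/dx²) log f(x)) exists. Define f_{Z_d}(x) = f(dx)·f(d(1−x)) / ∫₀¹ f(dy)·f(d(1−y)) dy for x ∈ [0,1]. Then f_{Z_d} is eventually in d strictly convex at the point x = 1/2 (that is, there exists d₀ such that f_{Z_d}''(1/2) > 0 for all d > d₀) if and only if L = 1. -/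
open MeasureTheory Real Filter Set

lemma sign_pos_of_gt_half {y : ℝ} (h : (1/2:ℝ) < Real.sign y) : 0 < y := by
  rcases lt_trichotomy y 0 with h1 | h1 | h1
  · rw [Real.sign_of_neg h1] at h; norm_num at h
  · rw [h1, Real.sign_zero] at h; norm_num at h
  · exact h1

lemma key_lemma (f : ℝ → ℝ)
    (hpos : ∀ x, 0 ≤ x → 0 < f x)
    (hsmooth : ContDiffOn ℝ 2 f (Set.Ici (0 : ℝ)))
    (d : ℝ) (hd : 0 < d) :
    deriv (deriv (fun x => f (d * x) * f (d * (1 - x)))) (1 / 2)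
      = 2 * d ^ 2 * (f (d / 2)) ^ 2
        * deriv (deriv (fun t => Real.log (f t))) (d / 2) := by
  have hopen : IsOpen (Set.Ioi (0:ℝ)) := isOpen_Ioi
  have hf : ContDiffOn ℝ 2 f (Set.Ioi 0) := hsmooth.mono Ioi_subset_Ici_self
  have hF1 : ContDiffOn ℝ 1 (deriv f) (Set.Ioi 0) :=
    hf.deriv_of_isOpen hopen (by norm_num)
  have hA : ∀ x : ℝ, 0 < x → HasDerivAt f (deriv f x) x := fun x hx =>
    ((hf.differentiableOn (by norm_num)).differentiableAt
      (hopen.mem_nhds hx)).hasDerivAt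
  have hB : ∀ x : ℝ, 0 < x → HasDerivAt (deriv f) (deriv (deriv f) x) x := fun x hx =>
    ((hF1.differentiableOn (by norm_num)).differentiableAt (hopen.mem_nhds hx)).hasDerivAt
  set c : ℝ := d / 2 with hc
  have hcpos : 0 < c := by positivity
  have hfc : 0 < f c := hpos c hcpos.le
  have hlog : ∀ x : ℝ, 0 < x →
      HasDerivAt (fun t => Real.log (f t)) (deriv f x / f x) x := fun x hx =>
    (hA x hx).log (hpos x hx.le).ne'
  have hlogd : Set.EqOn (deriv (fun t => Real.log (f t)))
      (fun x => deriv f x / f x) (Set.Ioi 0) := fun x hx => (hlog x hx).deriv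
  have hlogd' : deriv (fun t => Real.log (f t)) =ᶠ[nhds c]
      (fun x => deriv f x / f x) :=
    Filter.eventuallyEq_of_mem (hopen.mem_nhds hcpos) hlogd
  have hdiv : HasDerivAt (fun x => deriv f x / f x)
      ((deriv (deriv f) c * f c - deriv f c * deriv f c) / (f c) ^ 2) c :=
    (hB c hcpos).div (hA c hcpos) hfc.ne'
  have hlog2 : deriv (deriv (fun t => Real.log (f t))) c
      = (deriv (deriv f) c * f c - deriv f c * deriv f c) / (f c) ^ 2 := by
    rw [hlogd'.deriv_eq]; exact hdiv.deriv
  have hmem : ∀ x : ℝ, x ∈ Set.Ioo (0:ℝ) 1 → 0 < d * x ∧ 0 < d * (1 - x) := by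
    intro x hx
    constructor
    · exact mul_pos hd hx.1
    · exact mul_pos hd (by linarith [hx.2])
  have hu : ∀ x : ℝ, x ∈ Set.Ioo (0:ℝ) 1 →
      HasDerivAt (fun x => f (d * x)) (d * deriv f (d * x)) x := by
    intro x hx
    have h1 : HasDerivAt (fun x : ℝ => d * x) d x := by
      simpa using (hasDerivAt_id x).const_mul d
    simpa [mul_comm, Function.comp_def] using ((hA _ (hmem x hx).1).comp x h1)
  have hv : ∀ x : ℝ, x ∈ Set.Ioo (0:ℝ) 1 →
      HasDerivAt (fun x => f (d * (1 - x))) (-(d * deriv f (d * (1 - x)))) x := by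
    intro x hx
    have h1 : HasDerivAt (fun x : ℝ => d * (1 - x)) (-d) x := by
      have := ((hasDerivAt_id x).const_sub 1).const_mul d
      simpa using this
    have := (hA _ (hmem x hx).2).comp x h1
    simpa [mul_comm, Function.comp_def] using this
  set G : ℝ → ℝ := fun x => d * deriv f (d * x) * f (d * (1 - x))
      - f (d * x) * (d * deriv f (d * (1 - x))) with hG
  have hg : ∀ x : ℝ, x ∈ Set.Ioo (0:ℝ) 1 →
      HasDerivAt (fun x => f (d * x) * f (d * (1 - x))) (G x) x := by
    intro x hx
    have := (hu x hx).mul (hv x hx)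
    simpa [hG, mul_comm, mul_assoc, mul_left_comm, sub_eq_add_neg, Pi.mul_def] using this
  have hhalf : (1/2 : ℝ) ∈ Set.Ioo (0:ℝ) 1 := by norm_num
  have hgd : deriv (fun x => f (d * x) * f (d * (1 - x))) =ᶠ[nhds (1/2 : ℝ)] G :=
    Filter.eventuallyEq_of_mem (isOpen_Ioo.mem_nhds hhalf) (fun x hx => (hg x hx).deriv)
  have hu2 : ∀ x : ℝ, x ∈ Set.Ioo (0:ℝ) 1 →
      HasDerivAt (fun x => deriv f (d * x)) (d * deriv (deriv f) (d * x)) x := by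
    intro x hx
    have h1 : HasDerivAt (fun x : ℝ => d * x) d x := by
      simpa using (hasDerivAt_id x).const_mul d
    simpa [mul_comm, Function.comp_def] using ((hB _ (hmem x hx).1).comp x h1)
  have hv2 : ∀ x : ℝ, x ∈ Set.Ioo (0:ℝ) 1 →
      HasDerivAt (fun x => deriv f (d * (1 - x))) (-(d * deriv (deriv f) (d * (1 - x)))) x := by
    intro x hx
    have h1 : HasDerivAt (fun x : ℝ => d * (1 - x)) (-d) x := by
      have := ((hasDerivAt_id x).const_sub 1).const_mul d
      simpa using this
    simpa [mul_comm, Function.comp_def] using ((hB _ (hmem x hx).2).comp x h1)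
  have hGd : HasDerivAt G
      ((d * (d * deriv (deriv f) c) * f c + (d * deriv f c) * (-(d * deriv f c)))
        - (f c * (-(d * (d * deriv (deriv f) c))) + (d * deriv f c) * (d * deriv f c)))
      (1/2 : ℝ) := by
    have e1 : d * (1/2 : ℝ) = c := by rw [hc]; ring
    have e2 : d * (1 - (1/2 : ℝ)) = c := by rw [hc]; ring
    have h1 := ((hu2 _ hhalf).const_mul d).mul (hv _ hhalf)
    have h2 := (hu _ hhalf).mul ((hv2 _ hhalf).const_mul d)
    have := h1.sub h2
    rw [e1, e2] at this
    have hGeq : G = (((fun y => d * deriv f (d * y)) * fun x => f (d * (1 - x))) -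
        (fun x => f (d * x)) * fun y => d * deriv f (d * (1 - y))) := by
      funext x; simp only [hG, Pi.mul_apply, Pi.sub_apply]
    rw [hGeq]
    exact this.congr_deriv (by ring)
  have : deriv (deriv (fun x => f (d * x) * f (d * (1 - x)))) (1/2 : ℝ) = deriv G (1/2) :=
    hgd.deriv_eq
  rw [this, hGd.deriv, hlog2]
  field_simp
  ring

/-- If `L := lim_{x→∞} sign((log f)''(x))` exists, then `f_{Z_d}` is
eventually in `d` strictly convex at `x = 1/2` iff `L = 1`. -/
theorem stmt_1
    (f : ℝ → ℝ)
    (hpos : ∀ x, 0 ≤ x → 0 < f x)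
    (hsmooth : ContDiffOn ℝ 2 f (Set.Ici (0 : ℝ)))
    (hdens : ∫ x in Set.Ici (0 : ℝ), f x = 1)
    (hint : ∀ d > (0 : ℝ),
      IntervalIntegrable (fun y => f (d * y) * f (d * (1 - y))) volume 0 1)
    (hintpos : ∀ d > (0 : ℝ), 0 < ∫ y in (0 : ℝ)..1, f (d * y) * f (d * (1 - y)))
    (L : ℝ)
    (hL : Filter.Tendsto
      (fun x => Real.sign (deriv (deriv (fun t => Real.log (f t))) x))
      Filter.atTop (nhds L))
    (fZ : ℝ → ℝ → ℝ)
    (hfZ : ∀ d x, fZ d x =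
      f (d * x) * f (d * (1 - x)) / ∫ y in (0 : ℝ)..1, f (d * y) * f (d * (1 - y))) :
    (∃ d₀ : ℝ, ∀ d > d₀, 0 < deriv (deriv (fZ d)) (1 / 2)) ↔ L = 1 := by
  set h : ℝ → ℝ := deriv (deriv (fun t => Real.log (f t))) with hh
  -- main relation
  have hrel : ∀ d : ℝ, 0 < d →
      deriv (deriv (fZ d)) (1/2)
        = (2 * d ^ 2 * (f (d / 2)) ^ 2
            / ∫ y in (0:ℝ)..1, f (d * y) * f (d * (1 - y))) * h (d / 2) := by
    intro d hd
    have hfZd : fZ d = fun x => (f (d * x) * f (d * (1 - x)))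
        / ∫ y in (0:ℝ)..1, f (d * y) * f (d * (1 - y)) := by
      funext x; exact hfZ d x
    have h1 : deriv (fZ d) = fun x =>
        deriv (fun x => f (d * x) * f (d * (1 - x))) x
          / ∫ y in (0:ℝ)..1, f (d * y) * f (d * (1 - y)) := by
      funext x
      rw [hfZd]
      exact deriv_div_const _
    rw [h1, deriv_div_const, key_lemma f hpos hsmooth d hd]
    ring
  have hpos_iff : ∀ d : ℝ, 0 < d →
      (0 < deriv (deriv (fZ d)) (1/2) ↔ 0 < h (d / 2)) := by
    intro d hd
    rw [hrel d hd]
    have hC : 0 < 2 * d ^ 2 * (f (d / 2)) ^ 2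
        / ∫ y in (0:ℝ)..1, f (d * y) * f (d * (1 - y)) := by
      have := hintpos d hd
      have hf2 := hpos (d/2) (by positivity)
      positivity
    constructor
    · intro hx
      by_contra hcon
      push_neg at hcon
      nlinarith
    · intro hx
      exact mul_pos hC hx
  constructor
  · rintro ⟨d₀, hd₀⟩
    have hev : ∀ᶠ x in Filter.atTop, Real.sign (h x) = 1 := by
      rw [Filter.eventually_atTop]
      refine ⟨max d₀ 0 / 2 + 1, fun x hx => ?_⟩
      have hx0 : 0 < x := by
        have : (0:ℝ) ≤ max d₀ 0 / 2 := by positivity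
        linarith
      have hd : d₀ < 2 * x := by
        have h1 : d₀ ≤ max d₀ 0 := le_max_left _ _
        linarith
      have hd2 : 0 < 2 * x := by linarith
      have := hd₀ (2 * x) hd
      rw [hpos_iff (2 * x) hd2] at this
      have he : 2 * x / 2 = x := by ring
      rw [he] at this
      exact Real.sign_of_pos this
    have : Filter.Tendsto (fun x => Real.sign (h x)) Filter.atTop (nhds 1) :=
      Filter.Tendsto.congr' (Filter.EventuallyEq.symm hev) tendsto_const_nhds
    exact tendsto_nhds_unique hL this
  · intro hL1
    subst hL1
    have hev : ∀ᶠ x in Filter.atTop, (1/2 : ℝ) < Real.sign (h x) :=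
      hL.eventually (eventually_gt_nhds (by norm_num))
    rw [Filter.eventually_atTop] at hev
    obtain ⟨X, hX⟩ := hev
    refine ⟨max (2 * X) 0, fun d hd => ?_⟩
    have hd0 : 0 < d := lt_of_le_of_lt (le_max_right _ _) hd
    have hdX : X ≤ d / 2 := by
      have : 2 * X ≤ max (2 * X) 0 := le_max_left _ _
      linarith
    have := sign_pos_of_gt_half (hX (d / 2) hdX)
    rw [hpos_iff d hd0]
    exact this
end

section
/- Let f : [0,∞) → (0,∞) be a twice continuously differentiable probability density function such that for every d > 0 the integral ∫₀¹ f(dy)·f(d(1−y)) dy is positive and finite, and suppose the limit L := lim_{x→∞} sign((d²/dx²) log f(x)) exists. Define f_{Z_d}(x) = f(dx)·f(d(1−x)) / ∫₀¹ f(dy)·f(d(1−y)) dy for x ∈ [0,1]. Then f_{Z_d} is eventually in d strictly concave at the point x = 1/2 (that is, there exists d₀ such that f_{Z_d}''(1/2) < 0 for all d > d₀) if and only if L = −1. -/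
open MeasureTheory Real Filter Set

/-- If `L := lim_{x→∞} sign((log f)''(x))` exists, then `f_{Z_d}` is
eventually in `d` strictly concave at `x = 1/2` iff `L = -1`. -/
theorem stmt_2
    (f : ℝ → ℝ)
    (hpos : ∀ x, 0 ≤ x → 0 < f x)
    (hsmooth : ContDiffOn ℝ 2 f (Set.Ici (0 : ℝ)))
    (hdens : ∫ x in Set.Ici (0 : ℝ), f x = 1)
    (hint : ∀ d > (0 : ℝ),
      IntervalIntegrable (fun y => f (d * y) * f (d * (1 - y))) volume 0 1)
    (hintpos : ∀ d > (0 : ℝ), 0 < ∫ y in (0 : ℝ)..1, f (d * y) * f (d * (1 - y)))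
    (L : ℝ)
    (hL : Filter.Tendsto
      (fun x => Real.sign (deriv (deriv (fun t => Real.log (f t))) x))
      Filter.atTop (nhds L))
    (fZ : ℝ → ℝ → ℝ)
    (hfZ : ∀ d x, fZ d x =
      f (d * x) * f (d * (1 - x)) / ∫ y in (0 : ℝ)..1, f (d * y) * f (d * (1 - y))) :
    (∃ d₀ : ℝ, ∀ d > d₀, deriv (deriv (fZ d)) (1 / 2) < 0) ↔ L = -1 := by
  -- basic differentiability facts
  have hD1 : ∀ t : ℝ, 0 < t → HasDerivAt f (deriv f t) t := fun t ht =>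
    ((hsmooth.contDiffAt (Ici_mem_nhds ht)).differentiableAt (by norm_num)).hasDerivAt
  have hf2 : ContDiffOn ℝ 1 (deriv f) (Ioi (0:ℝ)) :=
    (hsmooth.mono Ioi_subset_Ici_self).deriv_of_isOpen isOpen_Ioi (by norm_num)
  have hD2 : ∀ t : ℝ, 0 < t → HasDerivAt (deriv f) (deriv (deriv f) t) t := fun t ht =>
    ((hf2.contDiffAt (Ioi_mem_nhds ht)).differentiableAt (by norm_num)).hasDerivAt
  -- the second derivative of `log ∘ f`
  have hlog : ∀ t : ℝ, 0 < t →
      (deriv (deriv (fun s => Real.log (f s))) t < 0 ↔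
        f t * deriv (deriv f) t - (deriv f t) ^ 2 < 0) := by
    intro t ht
    have heq : Set.EqOn (deriv (fun s => Real.log (f s))) (fun s => deriv f s / f s)
        (Ioi (0:ℝ)) := fun s hs => ((hD1 s hs).log (ne_of_gt (hpos s (le_of_lt hs)))).deriv
    have hev : deriv (fun s => Real.log (f s)) =ᶠ[nhds t] (fun s => deriv f s / f s) := by
      filter_upwards [Ioi_mem_nhds ht] with s hs using heq hs
    have hq : HasDerivAt (fun s => deriv f s / f s)
        ((deriv (deriv f) t * f t - deriv f t * deriv f t) / f t ^ 2) t :=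
      (hD2 t ht).div (hD1 t ht) (ne_of_gt (hpos t ht.le))
    rw [hev.deriv_eq, hq.deriv]
    have hft : (0:ℝ) < f t ^ 2 := pow_pos (hpos t ht.le) 2
    rw [div_neg_iff]
    constructor
    · rintro (⟨_, h⟩ | ⟨h, _⟩) <;> nlinarith
    · intro h; right; constructor <;> nlinarith
  -- key computation: sign of the second derivative of `fZ d` at `1/2`
  have key : ∀ d : ℝ, 0 < d →
      (deriv (deriv (fZ d)) (1 / 2) < 0 ↔
        f (d / 2) * deriv (deriv f) (d / 2) - (deriv f (d / 2)) ^ 2 < 0) := by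
    intro d hd
    set C := ∫ y in (0:ℝ)..1, f (d * y) * f (d * (1 - y)) with hC
    have hCpos : 0 < C := hintpos d hd
    have hfZd : fZ d = fun x => f (d * x) * f (d * (1 - x)) / C := funext (hfZ d)
    -- first derivative of the numerator on (0,1)
    have hF : ∀ x ∈ Ioo (0:ℝ) 1, HasDerivAt (fun x => f (d * x) * f (d * (1 - x)))
        (d * deriv f (d * x) * f (d * (1 - x)) - d * f (d * x) * deriv f (d * (1 - x))) x := by
      intro x hx
      have h1 : HasDerivAt (fun y : ℝ => f (d * y)) (deriv f (d * x) * (d * 1)) x :=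
        (hD1 (d * x) (mul_pos hd hx.1)).comp x ((hasDerivAt_id x).const_mul d)
      have h2 : HasDerivAt (fun y : ℝ => f (d * (1 - y))) (deriv f (d * (1 - x)) * (d * -1)) x :=
        (hD1 (d * (1 - x)) (mul_pos hd (by linarith [hx.2]))).comp x
          (((hasDerivAt_id x).const_sub 1).const_mul d)
      have := h1.mul h2
      refine this.congr_deriv ?_
      ring
    have hev : deriv (fun x => f (d * x) * f (d * (1 - x))) =ᶠ[nhds (1/2 : ℝ)]
        (fun x => d * deriv f (d * x) * f (d * (1 - x))
          - d * f (d * x) * deriv f (d * (1 - x))) := by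
      filter_upwards [Ioo_mem_nhds (by norm_num : (0:ℝ) < 1/2) (by norm_num : (1/2:ℝ) < 1)]
        with x hx using (hF x hx).deriv
    -- second derivative of the numerator at 1/2
    have hmem : d * (1/2 : ℝ) = d / 2 := by ring
    have hmem' : d * (1 - 1/2 : ℝ) = d / 2 := by ring
    have hd2 : (0:ℝ) < d / 2 := by linarith
    have hG : HasDerivAt (fun x => d * deriv f (d * x) * f (d * (1 - x))
          - d * f (d * x) * deriv f (d * (1 - x)))
        (2 * d ^ 2 * (f (d / 2) * deriv (deriv f) (d / 2) - (deriv f (d / 2)) ^ 2))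
        (1/2 : ℝ) := by
      have hin1 : HasDerivAt (fun y : ℝ => d * y) (d * 1) (1/2 : ℝ) :=
        (hasDerivAt_id _).const_mul d
      have hin2 : HasDerivAt (fun y : ℝ => d * (1 - y)) (d * -1) (1/2 : ℝ) :=
        ((hasDerivAt_id _).const_sub 1).const_mul d
      have pa : (0:ℝ) < d * (1/2) := by rw [hmem]; exact hd2
      have pb : (0:ℝ) < d * (1 - 1/2) := by rw [hmem']; exact hd2
      have a1 : HasDerivAt (fun y : ℝ => f (d * y)) (deriv f (d * (1/2)) * (d * 1)) (1/2:ℝ) :=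
        (hD1 _ pa).comp _ hin1
      have a2 : HasDerivAt (fun y : ℝ => f (d * (1 - y)))
          (deriv f (d * (1 - 1/2)) * (d * -1)) (1/2:ℝ) := (hD1 _ pb).comp (1/2 : ℝ) hin2
      have b1 : HasDerivAt (fun y : ℝ => deriv f (d * y))
          (deriv (deriv f) (d * (1/2)) * (d * 1)) (1/2:ℝ) := (hD2 _ pa).comp _ hin1
      have b2 : HasDerivAt (fun y : ℝ => deriv f (d * (1 - y)))
          (deriv (deriv f) (d * (1 - 1/2)) * (d * -1)) (1/2:ℝ) := by have := (hD2 _ pb).comp (1/2 : ℝ) hin2; exact this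
      have t1 := ((b1.const_mul d).mul a2)
      have t2 := ((a1.const_mul d).mul b2)
      have := t1.sub t2
      refine this.congr_deriv ?_
      rw [hmem, hmem']
      ring
    -- put things together
    have hd2' : deriv (deriv (fZ d)) (1/2 : ℝ)
        = 2 * d ^ 2 * (f (d / 2) * deriv (deriv f) (d / 2) - (deriv f (d / 2)) ^ 2) / C := by
      have e1 : deriv (fZ d) = fun x => deriv (fun x => f (d * x) * f (d * (1 - x))) x / C := by
        funext x
        rw [hfZd, deriv_div_const]
      rw [e1, deriv_div_const, hev.deriv_eq, hG.deriv]
    rw [hd2', div_neg_iff]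
    have h2d : (0:ℝ) < 2 * d ^ 2 := by positivity
    constructor
    · rintro (⟨_, h⟩ | ⟨h, _⟩)
      · exact absurd h (not_lt.2 hCpos.le)
      · nlinarith
    · intro h; right; exact ⟨by nlinarith, hCpos⟩
  constructor
  · rintro ⟨d₀, hd₀⟩
    have hconst : (fun x => Real.sign (deriv (deriv (fun t => Real.log (f t))) x))
        =ᶠ[atTop] (fun _ => (-1 : ℝ)) := by
      filter_upwards [eventually_gt_atTop (max (d₀ / 2) 0)] with x hx
      have hx0 : 0 < x := lt_of_le_of_lt (le_max_right _ _) hx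
      have hxd : d₀ < 2 * x := by
        have := lt_of_le_of_lt (le_max_left (d₀/2) 0) hx
        linarith
      have h2x : (0:ℝ) < 2 * x := by linarith
      have := (key (2 * x) h2x).1 (hd₀ (2 * x) hxd)
      rw [show (2 * x) / 2 = x by ring] at this
      exact Real.sign_of_neg ((hlog x hx0).2 this)
    have : Tendsto (fun x => Real.sign (deriv (deriv (fun t => Real.log (f t))) x))
        atTop (nhds (-1 : ℝ)) := Tendsto.congr' hconst.symm tendsto_const_nhds
    exact tendsto_nhds_unique hL this
  · intro hL1
    subst hL1
    have hev : ∀ᶠ x in atTop,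
        Real.sign (deriv (deriv (fun t => Real.log (f t))) x) < 0 :=
      hL.eventually_lt_const (by norm_num)
    obtain ⟨M, hM⟩ := eventually_atTop.1 hev
    refine ⟨max (2 * M) 0, fun d hd => ?_⟩
    have hd0 : 0 < d := lt_of_le_of_lt (le_max_right _ _) hd
    have hdM : M ≤ d / 2 := by
      have := lt_of_le_of_lt (le_max_left (2*M) 0) hd
      linarith
    have hs := hM (d / 2) hdM
    have hG : deriv (deriv (fun t => Real.log (f t))) (d / 2) < 0 := by
      by_contra hc
      push_neg at hc
      rcases eq_or_lt_of_le hc with h | h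
      · rw [← h, Real.sign_zero] at hs; norm_num at hs
      · rw [Real.sign_of_pos h] at hs; norm_num at hs
    exact (key d hd0).2 ((hlog (d / 2) (by linarith)).1 hG)
end

section
/- Let f : [0,∞) → (0,∞) be a twice continuously differentiable probability density function such that for every d > 0 the integral ∫₀¹ f(dy)·f(d(1−y)) dy is positive and finite, and suppose there exists x₀ > 0 such that the function x ↦ f'(x)/f(x) is strictly decreasing on (x₀,∞). Define f_{Z_d}(x) = f(dx)·f(d(1−x)) / ∫₀¹ f(dy)·f(d(1−y)) dy for x ∈ [0,1]. Then for every d > 2x₀ with f_{Z_d}''(1/2) < 0, the function f_{Z_d} is monotone increasing on the interval [x₀/d, 1/2], has no critical point in (x₀/d, 1/2), and attains a local maximum at x = 1/2. -/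
open MeasureTheory Real Filter Set

/-- If `f'/f` is strictly decreasing on `(x₀,∞)`, then for every `d > 2x₀`
with `f_{Z_d}''(1/2) < 0`, the density `f_{Z_d}` is monotone increasing on `[x₀/d, 1/2]`,
has no critical point in `(x₀/d, 1/2)`, and has a local maximum at `x = 1/2`. -/
theorem stmt_9
    (f : ℝ → ℝ)
    (hpos : ∀ x, 0 ≤ x → 0 < f x)
    (hsmooth : ContDiffOn ℝ 2 f (Set.Ici (0 : ℝ)))
    (hdens : ∫ x in Set.Ici (0 : ℝ), f x = 1)
    (hint : ∀ d > (0 : ℝ),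
      IntervalIntegrable (fun y => f (d * y) * f (d * (1 - y))) volume 0 1)
    (hintpos : ∀ d > (0 : ℝ), 0 < ∫ y in (0 : ℝ)..1, f (d * y) * f (d * (1 - y)))
    (x₀ : ℝ) (hx₀ : 0 < x₀)
    (hdec : StrictAntiOn (fun x => deriv f x / f x) (Set.Ioi x₀))
    (fZ : ℝ → ℝ → ℝ)
    (hfZ : ∀ d x, fZ d x =
      f (d * x) * f (d * (1 - x)) / ∫ y in (0 : ℝ)..1, f (d * y) * f (d * (1 - y))) :
    ∀ d : ℝ, 2 * x₀ < d → deriv (deriv (fZ d)) (1 / 2) < 0 →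
      MonotoneOn (fZ d) (Set.Icc (x₀ / d) (1 / 2)) ∧
      (∀ x ∈ Set.Ioo (x₀ / d) (1 / 2), deriv (fZ d) x ≠ 0) ∧
      IsLocalMax (fZ d) (1 / 2) := by
  intro d hd h2nd
  have hd0 : 0 < d := lt_trans (by positivity) hd
  set C := ∫ y in (0 : ℝ)..1, f (d * y) * f (d * (1 - y)) with hCdef
  have hC0 : 0 < C := hintpos d hd0
  have hfZfun : fZ d = fun x => f (d * x) * f (d * (1 - x)) / C :=
    funext fun x => hfZ d x
  -- f is differentiable at positive points
  have hfd : ∀ a : ℝ, 0 < a → HasDerivAt f (deriv f a) a := by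
    intro a ha
    have h1 : ContDiffAt ℝ 2 f a := hsmooth.contDiffAt (Ici_mem_nhds ha)
    exact (h1.differentiableAt (by norm_num)).hasDerivAt
  -- derivative formula
  have hderiv : ∀ x : ℝ, 0 < d * x → 0 < d * (1 - x) →
      HasDerivAt (fZ d)
        ((deriv f (d * x) * d * f (d * (1 - x)) +
          f (d * x) * (deriv f (d * (1 - x)) * (d * -1))) / C) x := by
    intro x h1 h2
    have Ha : HasDerivAt (fun x : ℝ => d * x) (d * 1) x :=
      (hasDerivAt_id x).const_mul d
    have Hb : HasDerivAt (fun x : ℝ => d * (1 - x)) (d * -1) x :=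
      ((hasDerivAt_id x).const_sub 1).const_mul d
    have H1 : HasDerivAt (fun x => f (d * x)) (deriv f (d * x) * (d * 1)) x :=
      (hfd _ h1).comp x Ha
    have H2 : HasDerivAt (fun x => f (d * (1 - x))) (deriv f (d * (1 - x)) * (d * -1)) x :=
      (hfd _ h2).comp x Hb
    have := (H1.mul H2).div_const C
    rw [hfZfun]
    have e : (deriv f (d * x) * d * f (d * (1 - x)) + f (d * x) * (deriv f (d * (1 - x)) * (d * -1))) / C =
        (deriv f (d * x) * (d * 1) * f (d * (1 - x)) + f (d * x) * (deriv f (d * (1 - x)) * (d * -1))) / C := by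
      ring
    rw [e]
    exact this
  -- positivity of the derivative on the open interval
  have hdpos : ∀ x ∈ Set.Ioo (x₀ / d) (1 / 2 : ℝ), 0 < deriv (fZ d) x := by
    intro x hx
    have hxl : x₀ / d < x := hx.1
    have hxr : x < 1 / 2 := hx.2
    have ha : x₀ < d * x := by
      rw [div_lt_iff₀ hd0] at hxl; linarith [mul_comm x₀ d⁻¹]
    have hb : x₀ < d * (1 - x) := by nlinarith
    have hab : d * x < d * (1 - x) := by nlinarith
    have ha0 : 0 < d * x := lt_trans hx₀ ha
    have hb0 : 0 < d * (1 - x) := lt_trans hx₀ hb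
    have hfa : 0 < f (d * x) := hpos _ ha0.le
    have hfb : 0 < f (d * (1 - x)) := hpos _ hb0.le
    have hL : deriv f (d * (1 - x)) / f (d * (1 - x)) < deriv f (d * x) / f (d * x) :=
      hdec ha hb hab
    have hnum : deriv f (d * (1 - x)) * f (d * x) < deriv f (d * x) * f (d * (1 - x)) := by
      rw [div_lt_div_iff₀ hfb hfa] at hL
      exact hL
    have hD := hderiv x ha0 hb0
    rw [hD.deriv]
    have : 0 < deriv f (d * x) * d * f (d * (1 - x)) +
        f (d * x) * (deriv f (d * (1 - x)) * (d * -1)) := by nlinarith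
    positivity
  -- continuity on the closed interval
  have hcont : ContinuousOn (fZ d) (Set.Icc (x₀ / d) (1 / 2)) := by
    intro x hx
    have hxl : x₀ / d ≤ x := hx.1
    have hxr : x ≤ 1 / 2 := hx.2
    have ha0 : 0 < d * x := by
      have : x₀ ≤ d * x := by rw [div_le_iff₀ hd0] at hxl; linarith [mul_comm x₀ d⁻¹]
      linarith
    have hb0 : 0 < d * (1 - x) := by nlinarith
    exact ((hderiv x ha0 hb0).differentiableAt.continuousAt).continuousWithinAt
  have hmono : StrictMonoOn (fZ d) (Set.Icc (x₀ / d) (1 / 2)) := by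
    apply strictMonoOn_of_deriv_pos (convex_Icc _ _) hcont
    intro x hx
    rw [interior_Icc] at hx
    exact hdpos x hx
  have hmono' : MonotoneOn (fZ d) (Set.Icc (x₀ / d) (1 / 2)) := hmono.monotoneOn
  refine ⟨hmono', fun x hx => ne_of_gt (hdpos x hx), ?_⟩
  -- local max at 1/2 via symmetry
  have hsymm : ∀ x : ℝ, fZ d (1 - x) = fZ d x := by
    intro x
    rw [hfZ, hfZ]
    have h1 : (1 : ℝ) - (1 - x) = x := by ring
    rw [h1, mul_comm (f (d * (1 - x)))]
  have hhalf : x₀ / d < 1 / 2 := by rw [div_lt_iff₀ hd0]; linarith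
  have hmem : Set.Ioo (x₀ / d) (1 - x₀ / d) ∈ nhds (1 / 2 : ℝ) :=
    Ioo_mem_nhds hhalf (by linarith)
  filter_upwards [hmem] with x hx
  rcases le_or_gt x (1 / 2) with h | h
  · exact hmono' ⟨hx.1.le, h⟩ ⟨hhalf.le, le_refl _⟩ h
  · have h1 : 1 - x ∈ Set.Icc (x₀ / d) (1 / 2) := ⟨by linarith [hx.2], by linarith⟩
    calc fZ d x = fZ d (1 - x) := (hsymm x).symm
      _ ≤ fZ d (1 / 2) := hmono' h1 ⟨hhalf.le, le_refl _⟩ (by linarith)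
end

section
/- Let f : [0,∞) → (0,∞) be a twice continuously differentiable, eventually decreasing probability density function such that for every d > 0 the integral ∫₀¹ f(dy)·f(d(1−y)) dy is positive and finite, and suppose there exists x₀ > 0 such that x ↦ f'(x)/f(x) is strictly decreasing on (x₀,∞). Define f_{Z_d}(x) = f(dx)·f(d(1−x)) / ∫₀¹ f(dy)·f(d(1−y)) dy for x ∈ [0,1], and assume f_{Z_d}(x) → 0 as d → ∞ for every x ∈ (0,1/2). Then for every c ∈ (0,1/2), f_{Z_d} → 0 uniformly on [0,c] as d → ∞. -/
open MeasureTheory Real Filter Set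

set_option maxHeartbeats 1600000

/-- Under eventual decrease of `f`, eventual strict decrease of `f'/f`,
and pointwise convergence `f_{Z_d}(x) → 0` on `(0,1/2)`, the convergence `f_{Z_d} → 0`
is uniform on `[0,c]` for every `c ∈ (0,1/2)`. -/
theorem stmt_10
    (f : ℝ → ℝ)
    (hpos : ∀ x, 0 ≤ x → 0 < f x)
    (hsmooth : ContDiffOn ℝ 2 f (Set.Ici (0 : ℝ)))
    (hdens : ∫ x in Set.Ici (0 : ℝ), f x = 1)
    (hdecr : ∃ y₀ : ℝ, AntitoneOn f (Set.Ici y₀))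
    (hint : ∀ d > (0 : ℝ),
      IntervalIntegrable (fun y => f (d * y) * f (d * (1 - y))) volume 0 1)
    (hintpos : ∀ d > (0 : ℝ), 0 < ∫ y in (0 : ℝ)..1, f (d * y) * f (d * (1 - y)))
    (x₀ : ℝ) (hx₀ : 0 < x₀)
    (hdec : StrictAntiOn (fun x => deriv f x / f x) (Set.Ioi x₀))
    (fZ : ℝ → ℝ → ℝ)
    (hfZ : ∀ d x, fZ d x =
      f (d * x) * f (d * (1 - x)) / ∫ y in (0 : ℝ)..1, f (d * y) * f (d * (1 - y)))
    (hto0 : ∀ x ∈ Set.Ioo (0 : ℝ) (1 / 2),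
      Filter.Tendsto (fun d => fZ d x) Filter.atTop (nhds 0)) :
    ∀ c ∈ Set.Ioo (0 : ℝ) (1 / 2),
      TendstoUniformlyOn fZ 0 Filter.atTop (Set.Icc 0 c) := by
  rintro c ⟨hc0, hc2⟩
  obtain ⟨y₀, hy₀⟩ := hdecr
  have hcont : ContinuousOn f (Set.Ici 0) := hsmooth.continuousOn
  have hdiff : ∀ t : ℝ, 0 < t → HasDerivAt f (deriv f t) t := by
    intro t ht
    have h1 : ContDiffAt ℝ 2 f t := hsmooth.contDiffAt (Ici_mem_nhds ht)
    exact (h1.differentiableAt (by norm_num)).hasDerivAt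
  -- maximum of f on [0, x₀]
  obtain ⟨z, hz, hzmax⟩ := (isCompact_Icc : IsCompact (Set.Icc (0:ℝ) x₀)).exists_isMaxOn
    (Set.nonempty_Icc.mpr hx₀.le) (hcont.mono (fun w hw => hw.1))
  set M := f z with hMdef
  have hMpos : 0 < M := hpos z hz.1
  have hf2 : 0 < f (2*x₀) := hpos _ (by positivity)
  set K := max 1 (M / f (2*x₀)) with hKdef
  have hK1 : (1:ℝ) ≤ K := le_max_left _ _
  have hK0 : (0:ℝ) < K := lt_of_lt_of_le one_pos hK1
  set D := max (2*x₀/c) (max (2*x₀+2) (y₀+2*x₀)) with hDdef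
  -- Key claim: for large d, fZ d x ≤ K * fZ d c on [0, c]
  have key : ∀ d, D ≤ d → ∀ x ∈ Set.Icc (0:ℝ) c, fZ d x ≤ K * fZ d c := by
    intro d hdD x hx
    obtain ⟨hx0, hxc⟩ := hx
    have hd2 : 2*x₀+2 ≤ d := le_trans (le_trans (le_max_left _ _) (le_max_right _ _)) hdD
    have hdy : y₀+2*x₀ ≤ d := le_trans (le_trans (le_max_right _ _) (le_max_right _ _)) hdD
    have hd0 : 0 < d := by nlinarith
    have hdc : 2*x₀/d ≤ c := by
      have h1 : 2*x₀/c ≤ d := le_trans (le_max_left _ _) hdD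
      rw [div_le_iff₀ hd0]
      rw [div_le_iff₀ hc0] at h1
      nlinarith
    have hxdc : x₀/d < c := lt_of_lt_of_le (by rw [div_lt_div_iff₀ hd0 hd0]; nlinarith) hdc
    have hdcx₀ : x₀ < d*(1-c) := by nlinarith
    have hIpos : 0 < ∫ y in (0:ℝ)..1, f (d * y) * f (d * (1 - y)) := hintpos d hd0
    -- monotone on [x₀/d, c]
    have hmono : MonotoneOn (fun x => f (d*x) * f (d*(1-x))) (Set.Icc (x₀/d) c) := by
      have hsm : StrictMonoOn (fun x => f (d*x) * f (d*(1-x))) (Set.Icc (x₀/d) c) := by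
        apply strictMonoOn_of_deriv_pos (convex_Icc _ _)
        · apply ContinuousOn.mul
          · apply hcont.comp (continuous_const.mul continuous_id).continuousOn
            intro w hw
            simp only [Set.mem_Ici, id_eq]
            have h1 : 0 < x₀/d := by positivity
            show 0 ≤ d * w
            nlinarith [hw.1]
          · apply hcont.comp (by fun_prop : Continuous (fun x : ℝ => d*(1-x))).continuousOn
            intro w hw
            simp only [Set.mem_Ici]
            nlinarith [hw.2]
        · intro x hxint
          rw [interior_Icc] at hxint
          obtain ⟨hx1, hx2⟩ := hxint
          have hux₀ : x₀ < d*x := by rw [div_lt_iff₀ hd0] at hx1; linarith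
          have hvx₀ : x₀ < d*(1-x) := by nlinarith
          have huv : d*x < d*(1-x) := by nlinarith
          have hupos : 0 < d*x := lt_trans hx₀ hux₀
          have hvpos : 0 < d*(1-x) := lt_trans hx₀ hvx₀
          have h1 : HasDerivAt (fun x : ℝ => f (d*x)) (deriv f (d*x) * d) x := by
            have hin : HasDerivAt (fun x : ℝ => d*x) d x := by
              simpa using (hasDerivAt_id x).const_mul d
            exact (hdiff _ hupos).comp x hin
          have h2 : HasDerivAt (fun x : ℝ => f (d*(1-x))) (deriv f (d*(1-x)) * (-d)) x := by
            have hin : HasDerivAt (fun x : ℝ => d*(1-x)) (-d) x := by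
              simpa using ((hasDerivAt_const x (1:ℝ)).sub (hasDerivAt_id x)).const_mul d
            exact (hdiff _ hvpos).comp x hin
          have hgd : HasDerivAt (fun x => f (d*x) * f (d*(1-x)))
              (deriv f (d*x) * d * f (d*(1-x)) + f (d*x) * (deriv f (d*(1-x)) * (-d))) x :=
            h1.mul h2
          rw [hgd.deriv]
          have hlt : deriv f (d*(1-x)) / f (d*(1-x)) < deriv f (d*x) / f (d*x) := by
            simpa using hdec (Set.mem_Ioi.mpr hux₀) (Set.mem_Ioi.mpr hvx₀) huv
          have hfu : 0 < f (d*x) := hpos _ hupos.le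
          have hfv : 0 < f (d*(1-x)) := hpos _ hvpos.le
          rw [div_lt_div_iff₀ hfv hfu] at hlt
          nlinarith
      exact hsm.monotoneOn
    have hmem2 : 2*x₀/d ∈ Set.Icc (x₀/d) c :=
      ⟨by gcongr; linarith, hdc⟩
    have hmemc : c ∈ Set.Icc (x₀/d) c := ⟨hxdc.le, le_refl c⟩
    have hgc0 : 0 ≤ f (d*c) * f (d*(1-c)) :=
      mul_nonneg (hpos _ (by positivity)).le (hpos _ (by nlinarith)).le
    have hgc2 : f (d*(2*x₀/d)) * f (d*(1-2*x₀/d)) ≤ f (d*c) * f (d*(1-c)) := by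
      simpa using hmono hmem2 hmemc hdc
    have hgx : f (d*x) * f (d*(1-x)) ≤ K * (f (d*c) * f (d*(1-c))) := by
      rcases le_or_gt (x₀/d) x with hcase | hcase
      · have h1 : f (d*x) * f (d*(1-x)) ≤ f (d*c) * f (d*(1-c)) := by
          simpa using hmono ⟨hcase, hxc⟩ hmemc hxc
        nlinarith
      · -- x ∈ [0, x₀/d]
        have hdxx₀ : d*x ≤ x₀ := ((lt_div_iff₀' hd0).mp hcase).le
        have hfM : f (d*x) ≤ M := hzmax ⟨by positivity, hdxx₀⟩
        have hfdd : f (d*(1-x)) ≤ f (d - x₀) := by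
          apply hy₀ (Set.mem_Ici.mpr (by linarith)) (Set.mem_Ici.mpr (by nlinarith))
          nlinarith
        have hfpos2 : 0 < f (d*(1-x)) := hpos _ (by nlinarith)
        have hstep : f (d*x) * f (d*(1-x)) ≤ M * f (d - x₀) :=
          mul_le_mul hfM hfdd hfpos2.le hMpos.le
        have e1 : d * (2*x₀/d) = 2*x₀ := by field_simp
        have e2 : d * (1 - 2*x₀/d) = d - 2*x₀ := by field_simp
        rw [e1, e2] at hgc2
        have hfdd2 : f (d - x₀) ≤ f (d - 2*x₀) := by
          apply hy₀ (Set.mem_Ici.mpr (by linarith)) (Set.mem_Ici.mpr (by linarith))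
          linarith
        have hfd2pos : 0 < f (d - 2*x₀) := hpos _ (by nlinarith)
        have hchain : f (d*x) * f (d*(1-x)) ≤ (M / f (2*x₀)) * (f (2*x₀) * f (d - 2*x₀)) := by
          have he : (M / f (2*x₀)) * (f (2*x₀) * f (d - 2*x₀)) = M * f (d - 2*x₀) := by
            field_simp
          rw [he]
          calc f (d*x) * f (d*(1-x)) ≤ M * f (d - x₀) := hstep
            _ ≤ M * f (d - 2*x₀) := by nlinarith
        have hMK : M / f (2*x₀) ≤ K := le_max_right _ _
        have hg20 : 0 ≤ f (2*x₀) * f (d - 2*x₀) := mul_nonneg hf2.le hfd2pos.le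
        calc f (d*x) * f (d*(1-x)) ≤ (M / f (2*x₀)) * (f (2*x₀) * f (d - 2*x₀)) := hchain
          _ ≤ K * (f (2*x₀) * f (d - 2*x₀)) := by nlinarith [div_pos hMpos hf2]
          _ ≤ K * (f (d*c) * f (d*(1-c))) := by nlinarith
    rw [hfZ d x, hfZ d c, div_le_iff₀ hIpos]
    have hre : K * (f (d*c) * f (d*(1-c)) / ∫ y in (0:ℝ)..1, f (d * y) * f (d * (1 - y)))
        * (∫ y in (0:ℝ)..1, f (d * y) * f (d * (1 - y))) = K * (f (d*c) * f (d*(1-c))) := by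
      field_simp
    rw [hre]
    exact hgx
  -- conclude uniform convergence
  rw [Metric.tendstoUniformlyOn_iff]
  intro ε hε
  have h1 := hto0 c ⟨hc0, hc2⟩
  have h2 : ∀ᶠ d in atTop, |fZ d c| < ε / K := by
    have := h1 (Metric.ball_mem_nhds 0 (div_pos hε hK0))
    filter_upwards [this] with d hd
    simpa [Real.dist_eq] using hd
  filter_upwards [eventually_ge_atTop D, h2] with d hdD hdc x hx
  have hd2 : 2*x₀+2 ≤ d := le_trans (le_trans (le_max_left _ _) (le_max_right _ _)) hdD
  have hd0 : 0 < d := by nlinarith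
  have hfZnn : 0 ≤ fZ d x := by
    rw [hfZ]
    apply div_nonneg _ (hintpos d hd0).le
    exact mul_nonneg (hpos _ (by nlinarith [hx.1])).le
      (hpos _ (by nlinarith [hx.2])).le
  have hb := key d hdD x hx
  have : fZ d x < ε := by
    calc fZ d x ≤ K * fZ d c := hb
      _ ≤ K * |fZ d c| := by nlinarith [le_abs_self (fZ d c), abs_nonneg (fZ d c)]
      _ < K * (ε / K) := by nlinarith [abs_nonneg (fZ d c)]
      _ = ε := by field_simp
  simpa [Real.dist_eq, abs_of_nonneg hfZnn] using this
end

section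
/- Let f : [0,∞) → (0,∞) be a twice continuously differentiable, eventually decreasing probability density function such that for every d > 0 the integral ∫₀¹ f(dy)·f(d(1−y)) dy is positive and finite. Define f_{Z_d}(x) = f(dx)·f(d(1−x)) / ∫₀¹ f(dy)·f(d(1−y)) dy for x ∈ [0,1], and let μ_d be the probability measure on [0,1] with density f_{Z_d}. Suppose there exists x₀ such that (d²/dx²) log f(x) < 0 for all x > x₀ (i.e. L = −1), and suppose f_{Z_d}(x) → 0 as d → ∞ for every x ∈ (0,1/2). Then μ_d converges in distribution, as d → ∞, to the Dirac measure δ_{1/2} concentrated at the point 1/2. -/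
open MeasureTheory Real Filter Set
open scoped ENNReal

open scoped Topology

lemma aux_cd (f : ℝ → ℝ)
    (hpos : ∀ x, 0 ≤ x → 0 < f x)
    (hsmooth : ContDiffOn ℝ 2 f (Set.Ici (0 : ℝ)))
    (x : ℝ) (hx : 0 < x) : ContDiffAt ℝ 2 (fun t => Real.log (f t)) x := by
  have hf : ContDiffAt ℝ 2 f x := hsmooth.contDiffAt
    (mem_nhds_iff.2 ⟨Set.Ioi 0, fun y hy => Set.mem_Ici.2 (le_of_lt (Set.mem_Ioi.1 hy)), isOpen_Ioi, hx⟩)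
  exact hf.log (hpos x hx.le).ne'

lemma aux_anti (f : ℝ → ℝ)
    (hpos : ∀ x, 0 ≤ x → 0 < f x)
    (hsmooth : ContDiffOn ℝ 2 f (Set.Ici (0 : ℝ)))
    (x₀ : ℝ)
    (hlogcc : ∀ x > x₀, deriv (deriv (fun t => Real.log (f t))) x < 0)
    (c : ℝ) (hc0 : 0 < c) (hcx : x₀ < c) :
    AntitoneOn (deriv (fun t => Real.log (f t))) (Set.Ici c) := by
  have hcont : ContinuousOn (deriv (fun t => Real.log (f t))) (Set.Ioi 0) := by
    have hcd : ContDiffOn ℝ 2 (fun t => Real.log (f t)) (Set.Ioi 0) :=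
      fun x hx => (aux_cd f hpos hsmooth x hx).contDiffWithinAt
    exact hcd.continuousOn_deriv_of_isOpen isOpen_Ioi (by norm_num)
  apply StrictAntiOn.antitoneOn
  apply strictAntiOn_of_deriv_neg (convex_Ici c)
  · exact hcont.mono (fun x hx => lt_of_lt_of_le hc0 hx)
  · intro x hx
    rw [interior_Ici] at hx
    exact hlogcc x (lt_trans hcx hx)

lemma aux_mono (f : ℝ → ℝ)
    (hpos : ∀ x, 0 ≤ x → 0 < f x)
    (hsmooth : ContDiffOn ℝ 2 f (Set.Ici (0 : ℝ)))
    (c : ℝ) (hc1 : 1 ≤ c)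
    (hanti : AntitoneOn (deriv (fun t => Real.log (f t))) (Set.Ici c))
    (d : ℝ) (hd : 4 * c ≤ d) :
    MonotoneOn (fun x => f (d * x) * f (d * (1 - x))) (Set.Icc (c / d) (1/2)) := by
  have hc0 : 0 < c := lt_of_lt_of_le one_pos hc1
  have hd0 : 0 < d := by nlinarith
  set L := fun t => Real.log (f t) with hL
  set G := fun x => L (d * x) + L (d * (1 - x)) with hG
  have hdiff : ∀ x ∈ Set.Icc (c/d) (1/2:ℝ), DifferentiableAt ℝ G x := by
    intro x hx
    have h1 : (0:ℝ) < d * x := by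
      have h := hx.1
      rw [div_le_iff₀ hd0] at h
      linarith
    have h2 : (0:ℝ) < d * (1 - x) := by nlinarith [hx.2]
    have d1 : DifferentiableAt ℝ L (d * x) :=
      (aux_cd f hpos hsmooth _ h1).differentiableAt (by norm_num)
    have d2 : DifferentiableAt ℝ L (d * (1 - x)) :=
      (aux_cd f hpos hsmooth _ h2).differentiableAt (by norm_num)
    have D1 : DifferentiableAt ℝ (fun x : ℝ => L (d * x)) x :=
      d1.comp x ((differentiable_id.const_mul d).differentiableAt)
    have D2 : DifferentiableAt ℝ (fun x : ℝ => L (d * (1 - x))) x :=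
      d2.comp x (((differentiable_const (1:ℝ)).sub differentiable_id).const_mul d |>.differentiableAt)
    exact D1.add D2
  have hGmono : MonotoneOn G (Set.Icc (c / d) (1/2)) := by
    apply monotoneOn_of_deriv_nonneg (convex_Icc _ _)
    · exact fun x hx => (hdiff x hx).continuousAt.continuousWithinAt
    · rw [interior_Icc]
      exact fun x hx => (hdiff x (Set.mem_Icc_of_Ioo hx)).differentiableWithinAt
    · -- deriv nonneg
      rw [interior_Icc]
      intro x hx
      have hx1 : c / d < x := hx.1
      have hx2 : x < 1/2 := hx.2
      have h1 : c < d * x := by rw [div_lt_iff₀ hd0] at hx1; linarith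
      have h2 : c ≤ d * (1 - x) := by nlinarith
      have h10 : (0:ℝ) < d * x := by linarith
      have h20 : (0:ℝ) < d * (1 - x) := by linarith
      have d1 : DifferentiableAt ℝ L (d * x) :=
        (aux_cd f hpos hsmooth _ h10).differentiableAt (by norm_num)
      have d2 : DifferentiableAt ℝ L (d * (1 - x)) :=
        (aux_cd f hpos hsmooth _ h20).differentiableAt (by norm_num)
      have H1 : HasDerivAt (fun x : ℝ => L (d * x)) (deriv L (d * x) * d) x := by
        have hin : HasDerivAt (fun x : ℝ => d * x) d x := by
          simpa using (hasDerivAt_id x).const_mul d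
        exact (d1.hasDerivAt.comp x hin)
      have H2 : HasDerivAt (fun x : ℝ => L (d * (1 - x))) (deriv L (d * (1 - x)) * (-d)) x := by
        have hin : HasDerivAt (fun x : ℝ => d * (1 - x)) (-d) x := by
          have : HasDerivAt (fun x : ℝ => (1:ℝ) - x) (-1) x := by
            simpa using (hasDerivAt_id' x).const_sub (1:ℝ)
          simpa using this.const_mul d
        exact (d2.hasDerivAt.comp x hin)
      have hDG : deriv G x = deriv L (d * x) * d + deriv L (d * (1 - x)) * (-d) :=
        (H1.add H2).deriv
      rw [hDG]
      have hle : deriv L (d * (1 - x)) ≤ deriv L (d * x) :=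
        hanti (Set.mem_Ici.2 h1.le) (Set.mem_Ici.2 h2) (by nlinarith)
      nlinarith
  intro a ha b hb hab
  have key : ∀ s ∈ Set.Icc (c/d) (1/2:ℝ), f (d * s) * f (d * (1 - s)) = Real.exp (G s) := by
    intro s hs
    have hs1 : (0:ℝ) ≤ d * s := by
      have : (0:ℝ) ≤ c / d := by positivity
      nlinarith [hs.1]
    have hs2 : (0:ℝ) ≤ d * (1 - s) := by nlinarith [hs.2]
    rw [hG]
    simp only [hL]
    rw [Real.exp_add, Real.exp_log (hpos _ hs1), Real.exp_log (hpos _ hs2)]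
  simp only []
  rw [key a ha, key b hb]
  exact Real.exp_le_exp.2 (hGmono ha hb hab)

set_option maxHeartbeats 1000000 in
/-- If `(log f)'' < 0` eventually (`L = −1`) and `f_{Z_d}(x) → 0` for all
`x ∈ (0,1/2)`, then the laws `μ_d` of `Z_d` converge in distribution to `δ_{1/2}`:
`liminf_{d→∞} μ_d(A) ≥ δ_{1/2}(A)` for every open set `A`. -/
theorem stmt_11
    (f : ℝ → ℝ)
    (hpos : ∀ x, 0 ≤ x → 0 < f x)
    (hsmooth : ContDiffOn ℝ 2 f (Set.Ici (0 : ℝ)))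
    (hdens : ∫ x in Set.Ici (0 : ℝ), f x = 1)
    (hdecr : ∃ y₀ : ℝ, AntitoneOn f (Set.Ici y₀))
    (hint : ∀ d > (0 : ℝ),
      IntervalIntegrable (fun y => f (d * y) * f (d * (1 - y))) volume 0 1)
    (hintpos : ∀ d > (0 : ℝ), 0 < ∫ y in (0 : ℝ)..1, f (d * y) * f (d * (1 - y)))
    (x₀ : ℝ)
    (hlogcc : ∀ x > x₀, deriv (deriv (fun t => Real.log (f t))) x < 0)
    (fZ : ℝ → ℝ → ℝ)
    (hfZ : ∀ d x, fZ d x =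
      f (d * x) * f (d * (1 - x)) / ∫ y in (0 : ℝ)..1, f (d * y) * f (d * (1 - y)))
    (hto0 : ∀ x ∈ Set.Ioo (0 : ℝ) (1 / 2),
      Filter.Tendsto (fun d => fZ d x) Filter.atTop (nhds 0))
    (μ : ℝ → Measure ℝ)
    (hμ : ∀ d, μ d = (volume.restrict (Set.Icc (0 : ℝ) 1)).withDensity
      (fun x => ENNReal.ofReal (fZ d x)))
    (hprob : ∀ d > (0 : ℝ), IsProbabilityMeasure (μ d)) :
    ∀ A : Set ℝ, IsOpen A →
      Measure.dirac (1 / 2 : ℝ) A ≤ Filter.liminf (fun d => μ d A) Filter.atTop := by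

  intro A hA
  by_cases hmem : (1/2 : ℝ) ∈ A
  case neg =>
    rw [Measure.dirac_apply' _ hA.measurableSet, Set.indicator_of_notMem hmem]
    exact bot_le
  -- main case
  obtain ⟨ε, hε0, hball⟩ := Metric.isOpen_iff.mp hA _ hmem
  set e : ℝ := min ε (1/8) with he
  have he0 : 0 < e := lt_min hε0 (by norm_num)
  have he8 : e ≤ 1/8 := min_le_right _ _
  have heε : e ≤ ε := min_le_left _ _
  have hIA : Set.Ioo (1/2 - e) (1/2 + e) ⊆ A := by
    intro x hx
    obtain ⟨hx1, hx2⟩ := hx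
    apply hball
    rw [Real.ball_eq_Ioo]
    exact ⟨by linarith, by linarith⟩
  obtain ⟨y₀, hy₀⟩ := hdecr
  set c : ℝ := max (max (x₀ + 1) y₀) 1 with hc
  have hc1 : 1 ≤ c := le_max_right _ _
  have hc0 : 0 < c := lt_of_lt_of_le one_pos hc1
  have hcx : x₀ < c := lt_of_lt_of_le (by linarith) (le_trans (le_max_left _ _) (le_max_left _ _))
  have hcy : y₀ ≤ c := le_trans (le_max_right _ _) (le_max_left _ _)
  have hanti := aux_anti f hpos hsmooth x₀ hlogcc c hc0 hcx
  -- bound M for f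
  obtain ⟨z, hz, hzmax⟩ := (isCompact_Icc (a := (0:ℝ)) (b := c)).exists_isMaxOn
    ⟨0, by constructor <;> linarith⟩
    (hsmooth.continuousOn.mono (fun t ht => ht.1))
  set M : ℝ := f z with hMdef
  have hMpos : 0 < M := hpos z hz.1
  have hM : ∀ t, 0 ≤ t → f t ≤ M := by
    intro t ht
    by_cases h : t ≤ c
    · exact hzmax ⟨ht, h⟩
    · push_neg at h
      have h1 : f t ≤ f c := hy₀ (Set.mem_Ici.2 hcy) (Set.mem_Ici.2 (by linarith)) h.le
      exact h1.trans (hzmax ⟨hc0.le, le_refl c⟩)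
  set C : ℝ := M / f c with hCdef
  have hfc : 0 < f c := hpos c hc0.le
  have hC0 : 0 ≤ C := by positivity
  set B : ℝ → ℝ := fun d => fZ d (1/2 - e) + C * fZ d (1/4) with hBdef
  have hB0 : Tendsto B atTop (𝓝 0) := by
    have h1 := hto0 (1/2 - e) ⟨by linarith, by linarith⟩
    have h2 := hto0 (1/4) ⟨by norm_num, by norm_num⟩
    have h3 := h1.add (h2.const_mul C)
    rw [hBdef]
    simpa only [mul_zero, add_zero] using h3
  -- main eventual bound
  have hbound : ∀ d, 4 * c ≤ d → 1 - ENNReal.ofReal (B d) ≤ μ d A := by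
    intro d hd
    have hd0 : (0:ℝ) < d := by nlinarith
    have hmono := aux_mono f hpos hsmooth c hc1 hanti d hd
    set g : ℝ → ℝ := fun x => f (d * x) * f (d * (1 - x)) with hgdef
    set Id : ℝ := ∫ y in (0:ℝ)..1, f (d * y) * f (d * (1 - y)) with hId
    have hIpos : 0 < Id := hintpos d hd0
    have hcd14 : c / d ≤ 1/4 := by rw [div_le_iff₀ hd0]; linarith
    have hgnn : ∀ s, 0 ≤ s → s ≤ 1 → 0 ≤ g s := by
      intro s h1 h2
      exact mul_nonneg (hpos _ (by nlinarith)).le (hpos _ (by nlinarith)).le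
    have hgsym : ∀ x : ℝ, g x = g (1 - x) := by
      intro x
      show f (d * x) * f (d * (1 - x)) = f (d * (1 - x)) * f (d * (1 - (1 - x)))
      rw [show (1:ℝ) - (1 - x) = x by ring, mul_comm]
    -- pointwise bound on g
    have hgbound : ∀ x ∈ Set.Icc (0:ℝ) 1, x ∉ Set.Ioo (1/2 - e) (1/2 + e) →
        g x ≤ g (1/2 - e) + C * g (1/4) := by
      intro x hx hxn
      have hmem14 : (1/4 : ℝ) ∈ Set.Icc (c/d) (1/2:ℝ) := ⟨hcd14, by norm_num⟩
      have hmem12e : (1/2 - e : ℝ) ∈ Set.Icc (c/d) (1/2:ℝ) := ⟨by linarith, by linarith⟩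
      have claim1 : ∀ t, c/d ≤ t → t ≤ 1/2 - e → g t ≤ g (1/2 - e) := by
        intro t h1 h2
        exact hmono ⟨h1, by linarith⟩ hmem12e h2
      have claim2 : ∀ t, 0 ≤ t → t ≤ c/d → g t ≤ C * g (1/4) := by
        intro t h1 h2
        have hdt : d * t ≤ c := by
          rw [le_div_iff₀ hd0] at h2
          linarith [h2]
        have hstep1 : f (d * t) ≤ M := hM _ (by positivity)
        have hstep2 : f (d * (1 - t)) ≤ f (d - c) := by
          apply hy₀ (Set.mem_Ici.2 (by linarith)) (Set.mem_Ici.2 (by nlinarith)) (by nlinarith)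
        have hgt : g t ≤ M * f (d - c) := by
          have := mul_le_mul hstep1 hstep2 (hpos _ (by nlinarith)).le hMpos.le
          exact this
        have hgcd : g (c/d) = f c * f (d - c) := by
          show f (d * (c/d)) * f (d * (1 - c/d)) = f c * f (d - c)
          rw [show d * (c/d) = c by field_simp, show d * (1 - c/d) = d - c by field_simp]
        have hmonostep : g (c/d) ≤ g (1/4) := hmono ⟨le_refl _, by linarith⟩ hmem14 hcd14
        calc g t ≤ M * f (d - c) := hgt
          _ = C * (f c * f (d - c)) := by rw [hCdef]; field_simp
          _ = C * g (c/d) := by rw [hgcd]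
          _ ≤ C * g (1/4) := by
              apply mul_le_mul_of_nonneg_left hmonostep hC0
      have hcases : x ≤ 1/2 - e ∨ 1/2 + e ≤ x := by
        rcases le_or_gt x (1/2 - e) with h | h
        · exact Or.inl h
        · right
          rcases le_or_gt (1/2 + e) x with h' | h'
          · exact h'
          · exact absurd ⟨h, h'⟩ hxn
      have hg14nn : 0 ≤ g (1/4) := hgnn _ (by norm_num) (by norm_num)
      have hg12nn : 0 ≤ g (1/2 - e) := hgnn _ (by linarith) (by linarith)
      rcases hcases with h | h
      · rcases le_or_gt (c/d) x with h' | h'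
        · have := claim1 x h' h
          nlinarith [mul_nonneg hC0 hg14nn]
        · have := claim2 x hx.1 h'.le
          nlinarith
      · rw [hgsym x]
        have hx1 : 1 - x ≤ 1/2 - e := by linarith
        have hx0 : 0 ≤ 1 - x := by linarith [hx.2]
        rcases le_or_gt (c/d) (1 - x) with h' | h'
        · have := claim1 _ h' hx1
          nlinarith [mul_nonneg hC0 hg14nn]
        · have := claim2 _ hx0 h'.le
          nlinarith
    -- pointwise bound on fZ
    have hfZbound : ∀ x ∈ Set.Icc (0:ℝ) 1, x ∉ Set.Ioo (1/2 - e) (1/2 + e) →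
        fZ d x ≤ B d := by
      intro x hx hxn
      have h1 := hgbound x hx hxn
      have e1 : fZ d x = g x / Id := hfZ d x
      have e2 : fZ d (1/2 - e) = g (1/2 - e) / Id := hfZ d _
      have e3 : fZ d (1/4) = g (1/4) / Id := hfZ d _
      show fZ d x ≤ fZ d (1/2 - e) + C * fZ d (1/4)
      rw [e1, e2, e3, ← mul_div_assoc, ← add_div]
      gcongr
    -- measure bound
    have hBd0 : 0 ≤ B d := by
      have h0 : (0:ℝ) ∈ Set.Icc (0:ℝ) 1 := by norm_num
      have := hfZbound 0 h0 (by simp [Set.mem_Ioo]; intro h; linarith)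
      have hfz0 : 0 ≤ fZ d 0 := by
        rw [hfZ]
        have := hgnn 0 le_rfl zero_le_one
        exact div_nonneg this hIpos.le
      linarith
    set I : Set ℝ := Set.Ioo (1/2 - e) (1/2 + e) with hIdef
    have hcompl : μ d Iᶜ ≤ ENNReal.ofReal (B d) := by
      rw [hμ d, withDensity_apply _ measurableSet_Ioo.compl]
      set ν := (volume.restrict (Set.Icc (0:ℝ) 1)).restrict Iᶜ with hν
      have hae1 : ∀ᵐ x ∂ν, x ∈ Iᶜ := ae_restrict_mem measurableSet_Ioo.compl
      have hae2 : ∀ᵐ x ∂ν, x ∈ Set.Icc (0:ℝ) 1 := by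
        exact ae_mono Measure.restrict_le_self (ae_restrict_mem measurableSet_Icc)
      calc ∫⁻ x, ENNReal.ofReal (fZ d x) ∂ν
          ≤ ∫⁻ _, ENNReal.ofReal (B d) ∂ν := by
            apply lintegral_mono_ae
            filter_upwards [hae1, hae2] with x h1 h2
            exact ENNReal.ofReal_le_ofReal (hfZbound x h2 h1)
        _ = ENNReal.ofReal (B d) * ν Set.univ := by rw [lintegral_const]
        _ ≤ ENNReal.ofReal (B d) * 1 := by
            gcongr
            calc ν Set.univ = (volume.restrict (Set.Icc (0:ℝ) 1)) Iᶜ :=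
                  Measure.restrict_apply_univ _
              _ ≤ (volume.restrict (Set.Icc (0:ℝ) 1)) Set.univ := measure_mono (Set.subset_univ _)
              _ = volume (Set.Icc (0:ℝ) 1) := Measure.restrict_apply_univ _
              _ = 1 := by rw [Real.volume_Icc]; norm_num
        _ = ENNReal.ofReal (B d) := mul_one _
    have hprobd := hprob d hd0
    have huniv : μ d Set.univ = 1 := measure_univ
    have h1le : (1:ℝ≥0∞) ≤ μ d I + μ d Iᶜ := by
      rw [← huniv, ← Set.union_compl_self I]
      exact measure_union_le _ _
    have hμI : 1 - ENNReal.ofReal (B d) ≤ μ d I := by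
      have : (1:ℝ≥0∞) ≤ μ d I + ENNReal.ofReal (B d) :=
        le_trans h1le (add_le_add le_rfl hcompl)
      exact tsub_le_iff_right.2 this
    exact le_trans hμI (measure_mono hIA)
  -- conclusion
  have hlim : Tendsto (fun d => 1 - ENNReal.ofReal (B d)) atTop (𝓝 1) := by
    have h1 : Tendsto (fun d => ENNReal.ofReal (B d)) atTop (𝓝 0) := by
      simpa using ENNReal.tendsto_ofReal hB0
    have := ENNReal.Tendsto.sub (tendsto_const_nhds : Tendsto (fun _ : ℝ => (1:ℝ≥0∞)) atTop (𝓝 1))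
      h1 (Or.inl ENNReal.one_ne_top)
    simpa using this
  rw [Measure.dirac_apply' _ hA.measurableSet, Set.indicator_of_mem hmem, Pi.one_apply]
  calc (1:ℝ≥0∞) = liminf (fun d => 1 - ENNReal.ofReal (B d)) atTop := hlim.liminf_eq.symm
    _ ≤ liminf (fun d => μ d A) atTop :=
        liminf_le_liminf (by
          filter_upwards [eventually_ge_atTop (4*c)] with d hd
          exact hbound d hd)
end

section
/- Let f : [0,∞) → (0,∞) be a twice continuously differentiable, eventually decreasing probability density function such that for every d > 0 the integral ∫₀¹ f(dy)·f(d(1−y)) dy is positive and finite. Define f_{Z_d}(x) = f(dx)·f(d(1−x)) / ∫₀¹ f(dy)·f(d(1−y)) dy for x ∈ [0,1], and let μ_d be the probability measure on [0,1] with density f_{Z_d}. Suppose there exists x₀ such that (d²/dx²) log f(x) > 0 for all x > x₀ (i.e. L = 1), and suppose f_{Z_d}(x) → 0 as d → ∞ for every x ∈ (0,1/2). Then μ_d converges in distribution, as d → ∞, to the measure (1/2)·δ_0 + (1/2)·δ_1, where δ_0 and δ_1 are Dirac measures at 0 and 1. -/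
open MeasureTheory Real Filter Set
open scoped ENNReal

lemma fz_symm (f : ℝ → ℝ) (fZ : ℝ → ℝ → ℝ)
    (hfZ : ∀ d x, fZ d x =
      f (d * x) * f (d * (1 - x)) / ∫ y in (0 : ℝ)..1, f (d * y) * f (d * (1 - y)))
    (d x : ℝ) : fZ d (1 - x) = fZ d x := by
  rw [hfZ, hfZ, show d * (1 - (1 - x)) = d * x by ring, mul_comm]

lemma meas_symm (fZ : ℝ → ℝ → ℝ) (hsymm : ∀ d x, fZ d (1 - x) = fZ d x)
    (μ : ℝ → Measure ℝ)
    (hμ : ∀ d, μ d = (volume.restrict (Set.Icc (0 : ℝ) 1)).withDensity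
      (fun x => ENNReal.ofReal (fZ d x)))
    (d ε : ℝ) (hε1 : ε ≤ 1) :
    μ d (Set.Ioc (1 - ε) 1) = μ d (Set.Ico 0 ε) := by
  have h1 : Set.Ico (0:ℝ) ε ∩ Set.Icc 0 1 = Set.Ico 0 ε :=
    Set.inter_eq_self_of_subset_left (fun x hx => ⟨hx.1, hx.2.le.trans hε1⟩)
  have h2 : Set.Ioc (1 - ε) 1 ∩ Set.Icc (0:ℝ) 1 = Set.Ioc (1 - ε) 1 :=
    Set.inter_eq_self_of_subset_left (fun x hx => ⟨le_trans (by linarith) hx.1.le, hx.2⟩)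
  rw [hμ, withDensity_apply _ measurableSet_Ioc, withDensity_apply _ measurableSet_Ico,
    Measure.restrict_restrict measurableSet_Ioc, Measure.restrict_restrict measurableSet_Ico,
    h1, h2]
  have hMP : MeasurePreserving (fun x : ℝ => 1 - x) volume volume :=
    Measure.measurePreserving_sub_left volume 1
  have hemb : MeasurableEmbedding (fun x : ℝ => 1 - x) :=
    (MeasurableEquiv.subLeft (1:ℝ)).measurableEmbedding
  have hpre : (fun x : ℝ => 1 - x) ⁻¹' Set.Ioc (1 - ε) 1 = Set.Ico 0 ε := by
    ext x
    simp only [Set.mem_preimage, Set.mem_Ioc, Set.mem_Ico]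
    constructor <;> intro h <;> constructor <;> linarith [h.1, h.2]
  calc ∫⁻ x in Set.Ioc (1 - ε) 1, ENNReal.ofReal (fZ d x)
      = ∫⁻ x in (fun x : ℝ => 1 - x) ⁻¹' Set.Ioc (1 - ε) 1,
          ENNReal.ofReal (fZ d (1 - x)) :=
        (hMP.setLIntegral_comp_preimage_emb hemb _ _).symm
    _ = ∫⁻ x in Set.Ico 0 ε, ENNReal.ofReal (fZ d x) := by
        rw [hpre]; simp_rw [hsymm]

lemma fz_bound (f : ℝ → ℝ)
    (hpos : ∀ x, 0 ≤ x → 0 < f x)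
    (hsmooth : ContDiffOn ℝ 2 f (Set.Ici (0 : ℝ)))
    (hintpos : ∀ d > (0 : ℝ), 0 < ∫ y in (0 : ℝ)..1, f (d * y) * f (d * (1 - y)))
    (x₀ : ℝ)
    (hlogcv : ∀ x > x₀, 0 < deriv (deriv (fun t => Real.log (f t))) x)
    (fZ : ℝ → ℝ → ℝ)
    (hfZ : ∀ d x, fZ d x =
      f (d * x) * f (d * (1 - x)) / ∫ y in (0 : ℝ)..1, f (d * y) * f (d * (1 - y)))
    (ε : ℝ) (hε0 : 0 < ε) (hε2 : ε < 1/2)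
    (d : ℝ) (hd : 0 < d) (hdε : max x₀ 0 < d * ε) :
    ∀ x ∈ Set.Icc ε (1 - ε), fZ d x ≤ fZ d ε := by
  intro x hx
  have hC : 0 < ∫ y in (0 : ℝ)..1, f (d * y) * f (d * (1 - y)) := hintpos d hd
  set g : ℝ → ℝ := fun t => Real.log (f t) with hg
  have ha0 : (0:ℝ) ≤ max x₀ 0 := le_max_right _ _
  have hIcc_sub : Set.Icc (d*ε) (d*(1-ε)) ⊆ Set.Ici (0:ℝ) := fun t ht =>
    le_trans (le_trans ha0 hdε.le) ht.1
  have hεle : d * ε ≤ d * (1-ε) := by nlinarith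
  have hcont : ContinuousOn g (Set.Icc (d*ε) (d*(1-ε))) :=
    ContinuousOn.log ((hsmooth.continuousOn).mono hIcc_sub)
      (fun t ht => (hpos t (hIcc_sub ht)).ne')
  have hconvg : ConvexOn ℝ (Set.Icc (d*ε) (d*(1-ε))) g := by
    refine (strictConvexOn_of_deriv2_pos (convex_Icc _ _) hcont ?_).convexOn
    intro t ht
    rw [interior_Icc] at ht
    have hxt : x₀ < t := lt_of_le_of_lt (le_max_left x₀ 0) (lt_trans hdε ht.1)
    exact hlogcv t hxt
  have mem1 : ∀ z ∈ Set.Icc ε (1-ε), d * z ∈ Set.Icc (d*ε) (d*(1-ε)) := fun z hz =>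
    ⟨mul_le_mul_of_nonneg_left hz.1 hd.le, mul_le_mul_of_nonneg_left hz.2 hd.le⟩
  have mem2 : ∀ z ∈ Set.Icc ε (1-ε), d * (1-z) ∈ Set.Icc (d*ε) (d*(1-ε)) := fun z hz =>
    ⟨mul_le_mul_of_nonneg_left (by linarith [hz.2]) hd.le,
     mul_le_mul_of_nonneg_left (by linarith [hz.1]) hd.le⟩
  have hconvh : ConvexOn ℝ (Set.Icc ε (1-ε)) (fun z => g (d*z) + g (d*(1-z))) := by
    refine ⟨convex_Icc _ _, ?_⟩
    intro u hu v hv p q hp hq hpq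
    have h1 := hconvg.2 (mem1 u hu) (mem1 v hv) hp hq hpq
    have h2 := hconvg.2 (mem2 u hu) (mem2 v hv) hp hq hpq
    simp only [smul_eq_mul] at h1 h2 ⊢
    have e1 : d * (p*u + q*v) = p*(d*u) + q*(d*v) := by ring
    have e2 : d * (1 - (p*u + q*v)) = p*(d*(1-u)) + q*(d*(1-v)) := by
      linear_combination (-d) * hpq
    rw [e1, e2]
    linarith
  have hmem_eps : ε ∈ Set.Icc ε (1-ε) := Set.left_mem_Icc.mpr (by linarith)
  have hmem_eps' : (1-ε) ∈ Set.Icc ε (1-ε) := Set.right_mem_Icc.mpr (by linarith)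
  have hmax := hconvh.le_max_of_mem_Icc hmem_eps hmem_eps' hx
  have hmax' : g (d*x) + g (d*(1-x)) ≤ g (d*ε) + g (d*(1-ε)) := by
    rcases max_cases (g (d*ε) + g (d*(1-ε))) (g (d*(1-ε)) + g (d*(1-(1-ε)))) with ⟨he, _⟩ | ⟨he, _⟩
    · calc g (d*x) + g (d*(1-x)) ≤ _ := hmax
        _ = _ := he
    · calc g (d*x) + g (d*(1-x)) ≤ _ := hmax
        _ = g (d*(1-ε)) + g (d*(1-(1-ε))) := he
        _ = g (d*ε) + g (d*(1-ε)) := by rw [show d*(1-(1-ε)) = d*ε by ring]; ring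
  have hx0 : (0:ℝ) ≤ d * x := by nlinarith [hx.1]
  have hx1 : (0:ℝ) ≤ d * (1-x) := by nlinarith [hx.2]
  have he0 : (0:ℝ) ≤ d * ε := by nlinarith
  have he1 : (0:ℝ) ≤ d * (1-ε) := by nlinarith
  have hNx : f (d*x) * f (d*(1-x)) = Real.exp (g (d*x) + g (d*(1-x))) := by
    rw [Real.exp_add, Real.exp_log (hpos _ hx0), Real.exp_log (hpos _ hx1)]
  have hNe : f (d*ε) * f (d*(1-ε)) = Real.exp (g (d*ε) + g (d*(1-ε))) := by
    rw [Real.exp_add, Real.exp_log (hpos _ he0), Real.exp_log (hpos _ he1)]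
  have hN : f (d*x) * f (d*(1-x)) ≤ f (d*ε) * f (d*(1-ε)) := by
    rw [hNx, hNe]
    exact Real.exp_le_exp.mpr hmax'
  rw [hfZ, hfZ]
  gcongr

lemma mid_tendsto
    (fZ : ℝ → ℝ → ℝ)
    (hto0 : ∀ x ∈ Set.Ioo (0 : ℝ) (1 / 2),
      Filter.Tendsto (fun d => fZ d x) Filter.atTop (nhds 0))
    (μ : ℝ → Measure ℝ)
    (hμ : ∀ d, μ d = (volume.restrict (Set.Icc (0 : ℝ) 1)).withDensity
      (fun x => ENNReal.ofReal (fZ d x)))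
    (x₀ ε : ℝ) (hε0 : 0 < ε) (hε2 : ε < 1/2)
    (bound : ∀ d : ℝ, 0 < d → max x₀ 0 < d * ε →
      ∀ x ∈ Set.Icc ε (1 - ε), fZ d x ≤ fZ d ε) :
    Filter.Tendsto (fun d => μ d (Set.Icc ε (1-ε))) Filter.atTop (nhds 0) := by
  have hev : ∀ᶠ d in atTop,
      μ d (Set.Icc ε (1-ε)) ≤ ENNReal.ofReal (fZ d ε) * volume (Set.Icc ε (1-ε)) := by
    filter_upwards [eventually_gt_atTop 0, eventually_gt_atTop (max x₀ 0 / ε)] with d hd hd2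
    have hdε : max x₀ 0 < d * ε := by
      rw [div_lt_iff₀ hε0] at hd2; linarith
    have hb := bound d hd hdε
    rw [hμ d, withDensity_apply _ measurableSet_Icc, Measure.restrict_restrict measurableSet_Icc,
      Set.inter_eq_self_of_subset_left (Set.Icc_subset_Icc (by linarith) (by linarith))]
    calc ∫⁻ x in Set.Icc ε (1-ε), ENNReal.ofReal (fZ d x) ∂volume
        ≤ ∫⁻ _ in Set.Icc ε (1-ε), ENNReal.ofReal (fZ d ε) ∂volume :=
          setLIntegral_mono measurable_const (fun x hx => ENNReal.ofReal_le_ofReal (hb x hx))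
      _ = ENNReal.ofReal (fZ d ε) * volume (Set.Icc ε (1-ε)) := setLIntegral_const _ _
  have hub : Filter.Tendsto (fun d => ENNReal.ofReal (fZ d ε) * volume (Set.Icc ε (1-ε)))
      Filter.atTop (nhds 0) := by
    have h0 := ENNReal.tendsto_ofReal (hto0 ε ⟨hε0, hε2⟩)
    have hvol : volume (Set.Icc ε (1-ε)) ≠ ⊤ := by
      rw [Real.volume_Icc]; exact ENNReal.ofReal_ne_top
    have := ENNReal.Tendsto.mul_const h0 (Or.inr hvol)
    simpa using this
  exact tendsto_of_tendsto_of_tendsto_of_le_of_le' tendsto_const_nhds hub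
    (Filter.Eventually.of_forall fun d => zero_le) hev

/-- If `(log f)'' > 0` eventually (`L = 1`) and `f_{Z_d}(x) → 0` for all
`x ∈ (0,1/2)`, then the laws `μ_d` of `Z_d` converge in distribution to
`(1/2)·δ₀ + (1/2)·δ₁`: `liminf_{d→∞} μ_d(A) ≥ ((1/2)δ₀ + (1/2)δ₁)(A)` for every open `A`. -/
theorem stmt_12
    (f : ℝ → ℝ)
    (hpos : ∀ x, 0 ≤ x → 0 < f x)
    (hsmooth : ContDiffOn ℝ 2 f (Set.Ici (0 : ℝ)))
    (hdens : ∫ x in Set.Ici (0 : ℝ), f x = 1)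
    (hdecr : ∃ y₀ : ℝ, AntitoneOn f (Set.Ici y₀))
    (hint : ∀ d > (0 : ℝ),
      IntervalIntegrable (fun y => f (d * y) * f (d * (1 - y))) volume 0 1)
    (hintpos : ∀ d > (0 : ℝ), 0 < ∫ y in (0 : ℝ)..1, f (d * y) * f (d * (1 - y)))
    (x₀ : ℝ)
    (hlogcv : ∀ x > x₀, 0 < deriv (deriv (fun t => Real.log (f t))) x)
    (fZ : ℝ → ℝ → ℝ)
    (hfZ : ∀ d x, fZ d x =
      f (d * x) * f (d * (1 - x)) / ∫ y in (0 : ℝ)..1, f (d * y) * f (d * (1 - y)))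
    (hto0 : ∀ x ∈ Set.Ioo (0 : ℝ) (1 / 2),
      Filter.Tendsto (fun d => fZ d x) Filter.atTop (nhds 0))
    (μ : ℝ → Measure ℝ)
    (hμ : ∀ d, μ d = (volume.restrict (Set.Icc (0 : ℝ) 1)).withDensity
      (fun x => ENNReal.ofReal (fZ d x)))
    (hprob : ∀ d > (0 : ℝ), IsProbabilityMeasure (μ d)) :
    ∀ A : Set ℝ, IsOpen A →
      ((1 / 2 : ℝ≥0∞) • Measure.dirac (0 : ℝ) + (1 / 2 : ℝ≥0∞) • Measure.dirac (1 : ℝ)) A ≤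
        Filter.liminf (fun d => μ d A) Filter.atTop := by
  intro A hA
  classical
  have hsymm : ∀ d x, fZ d (1 - x) = fZ d x := fz_symm f fZ hfZ
  -- the key eventual inequality and convergence for each ε ∈ (0, 1/2)
  have key : ∀ ε : ℝ, 0 < ε → ε < 1/2 →
      (∀ᶠ d in atTop, 1 ≤ 2 * μ d (Set.Ico 0 ε) + μ d (Set.Icc ε (1-ε))) ∧
      Filter.Tendsto (fun d => μ d (Set.Icc ε (1-ε))) Filter.atTop (nhds 0) := by
    intro ε hε0 hε2
    constructor
    · filter_upwards [eventually_gt_atTop 0] with d hd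
      have h1 : μ d Set.univ = 1 := (hprob d hd).measure_univ
      have hcompl : μ d ((Set.Icc (0:ℝ) 1)ᶜ) = 0 := by
        rw [hμ d, withDensity_apply _ measurableSet_Icc.compl,
          Measure.restrict_restrict measurableSet_Icc.compl, Set.compl_inter_self,
          Measure.restrict_empty, lintegral_zero_measure]
      have hIcc1 : (1:ℝ≥0∞) ≤ μ d (Set.Icc 0 1) := by
        calc (1:ℝ≥0∞) = μ d Set.univ := h1.symm
          _ = μ d ((Set.Icc (0:ℝ) 1)ᶜ ∪ Set.Icc 0 1) := by rw [Set.compl_union_self]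
          _ ≤ μ d ((Set.Icc (0:ℝ) 1)ᶜ) + μ d (Set.Icc 0 1) := measure_union_le _ _
          _ = μ d (Set.Icc 0 1) := by rw [hcompl, zero_add]
      have hcover : Set.Icc (0:ℝ) 1 ⊆
          Set.Ico 0 ε ∪ (Set.Icc ε (1-ε) ∪ Set.Ioc (1-ε) 1) := by
        intro x hx
        by_cases h : x < ε
        · exact Or.inl ⟨hx.1, h⟩
        · by_cases h' : x ≤ 1-ε
          · exact Or.inr (Or.inl ⟨not_lt.mp h, h'⟩)
          · exact Or.inr (Or.inr ⟨not_le.mp h', hx.2⟩)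
      have hsum : μ d (Set.Icc (0:ℝ) 1) ≤
          μ d (Set.Ico 0 ε) + (μ d (Set.Icc ε (1-ε)) + μ d (Set.Ioc (1-ε) 1)) :=
        le_trans (measure_mono hcover)
          (le_trans (measure_union_le _ _) (add_le_add_right (measure_union_le _ _) _))
      have hms := meas_symm fZ hsymm μ hμ d ε (by linarith)
      calc (1:ℝ≥0∞) ≤ μ d (Set.Icc 0 1) := hIcc1
        _ ≤ μ d (Set.Ico 0 ε) + (μ d (Set.Icc ε (1-ε)) + μ d (Set.Ioc (1-ε) 1)) := hsum
        _ = 2 * μ d (Set.Ico 0 ε) + μ d (Set.Icc ε (1-ε)) := by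
            rw [hms, two_mul]; ring
    · exact mid_tendsto fZ hto0 μ hμ x₀ ε hε0 hε2
        (fun d hd hdε => fz_bound f hpos hsmooth hintpos x₀ hlogcv fZ hfZ ε hε0 hε2 d hd hdε)
  by_cases h0 : (0:ℝ) ∈ A <;> by_cases h1 : (1:ℝ) ∈ A
  · -- both endpoints in A
    obtain ⟨ε₀, hε₀, hball0⟩ := Metric.isOpen_iff.mp hA 0 h0
    obtain ⟨ε₁, hε₁, hball1⟩ := Metric.isOpen_iff.mp hA 1 h1
    set ε : ℝ := min (min ε₀ ε₁) (1/4) with hεdef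
    have hle0 : ε ≤ ε₀ := le_trans (min_le_left _ _) (min_le_left _ _)
    have hle1 : ε ≤ ε₁ := le_trans (min_le_left _ _) (min_le_right _ _)
    have hle4 : ε ≤ 1/4 := min_le_right _ _
    have hε0' : 0 < ε := lt_min (lt_min hε₀ hε₁) (by norm_num)
    have hεh : ε < 1/2 := lt_of_le_of_lt hle4 (by norm_num)
    obtain ⟨hkey, hmid⟩ := key ε hε0' hεh
    have hsub0 : Set.Ico (0:ℝ) ε ⊆ A := fun x hx => hball0 (by
      rw [Metric.mem_ball, Real.dist_eq]
      rw [abs_lt]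
      constructor <;> [linarith [hx.1]; linarith [hx.2]])
    have hsub1 : Set.Ioc (1-ε) 1 ⊆ A := fun x hx => hball1 (by
      rw [Metric.mem_ball, Real.dist_eq]
      rw [abs_lt]
      constructor <;> [linarith [hx.1]; linarith [hx.2]])
    have hdisj : Disjoint (Set.Ico (0:ℝ) ε) (Set.Ioc (1-ε) 1) := by
      rw [Set.disjoint_left]
      intro x hx1 hx2
      have := hx1.2; have := hx2.1; linarith
    have hev : ∀ᶠ d in atTop, 1 - μ d (Set.Icc ε (1-ε)) ≤ μ d A := by
      filter_upwards [hkey] with d hk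
      rw [tsub_le_iff_right]
      have hun : μ d (Set.Ico 0 ε) + μ d (Set.Ioc (1-ε) 1) = μ d (Set.Ico 0 ε ∪ Set.Ioc (1-ε) 1) :=
        (measure_union hdisj measurableSet_Ioc).symm
      have hms := meas_symm fZ hsymm μ hμ d ε (by linarith)
      calc (1:ℝ≥0∞) ≤ 2 * μ d (Set.Ico 0 ε) + μ d (Set.Icc ε (1-ε)) := hk
        _ = μ d (Set.Ico 0 ε ∪ Set.Ioc (1-ε) 1) + μ d (Set.Icc ε (1-ε)) := by
            rw [← hun, hms, two_mul]
        _ ≤ μ d A + μ d (Set.Icc ε (1-ε)) := by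
            exact add_le_add_left (measure_mono (Set.union_subset hsub0 hsub1)) _
    have hlim1 : Filter.Tendsto (fun d => 1 - μ d (Set.Icc ε (1-ε))) Filter.atTop (nhds 1) := by
      have := ENNReal.Tendsto.sub (tendsto_const_nhds (x := (1:ℝ≥0∞))) hmid
        (Or.inl ENNReal.one_ne_top)
      simpa using this
    have hfinal : (1:ℝ≥0∞) ≤ Filter.liminf (fun d => μ d A) Filter.atTop := by
      rw [← hlim1.liminf_eq]
      exact Filter.liminf_le_liminf hev
    calc ((1 / 2 : ℝ≥0∞) • Measure.dirac (0 : ℝ) + (1 / 2 : ℝ≥0∞) • Measure.dirac (1 : ℝ)) A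
        = 1 := by
          simp [Measure.dirac_apply' _ hA.measurableSet, Set.indicator_of_mem h0,
            Set.indicator_of_mem h1]
          exact ENNReal.inv_two_add_inv_two
      _ ≤ _ := hfinal
  · -- 0 ∈ A, 1 ∉ A
    obtain ⟨ε₀, hε₀, hball0⟩ := Metric.isOpen_iff.mp hA 0 h0
    set ε : ℝ := min ε₀ (1/4) with hεdef
    have hle0 : ε ≤ ε₀ := min_le_left _ _
    have hle4 : ε ≤ 1/4 := min_le_right _ _
    have hε0' : 0 < ε := lt_min hε₀ (by norm_num)
    have hεh : ε < 1/2 := lt_of_le_of_lt hle4 (by norm_num)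
    obtain ⟨hkey, hmid⟩ := key ε hε0' hεh
    have hsub0 : Set.Ico (0:ℝ) ε ⊆ A := fun x hx => hball0 (by
      rw [Metric.mem_ball, Real.dist_eq]
      rw [abs_lt]
      constructor <;> [linarith [hx.1]; linarith [hx.2]])
    have hev : ∀ᶠ d in atTop, (1 - μ d (Set.Icc ε (1-ε))) / 2 ≤ μ d A := by
      filter_upwards [hkey] with d hk
      have h2 : (1 - μ d (Set.Icc ε (1-ε))) / 2 ≤ μ d (Set.Ico 0 ε) := by
        rw [ENNReal.div_le_iff_le_mul (Or.inl (by norm_num)) (Or.inl (by norm_num))]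
        rw [tsub_le_iff_right]
        calc (1:ℝ≥0∞) ≤ 2 * μ d (Set.Ico 0 ε) + μ d (Set.Icc ε (1-ε)) := hk
          _ = μ d (Set.Ico 0 ε) * 2 + μ d (Set.Icc ε (1-ε)) := by rw [mul_comm]
      exact le_trans h2 (measure_mono hsub0)
    have hlim1 : Filter.Tendsto (fun d => (1 - μ d (Set.Icc ε (1-ε))) / 2)
        Filter.atTop (nhds (1/2)) := by
      have hs := ENNReal.Tendsto.sub (tendsto_const_nhds (x := (1:ℝ≥0∞))) hmid
        (Or.inl ENNReal.one_ne_top)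
      have := ENNReal.Tendsto.mul_const (b := (2:ℝ≥0∞)⁻¹) hs (Or.inr (by norm_num))
      simp only [tsub_zero] at this
      simpa [div_eq_mul_inv] using this
    have hfinal : (1/2:ℝ≥0∞) ≤ Filter.liminf (fun d => μ d A) Filter.atTop := by
      rw [← hlim1.liminf_eq]
      exact Filter.liminf_le_liminf hev
    calc ((1 / 2 : ℝ≥0∞) • Measure.dirac (0 : ℝ) + (1 / 2 : ℝ≥0∞) • Measure.dirac (1 : ℝ)) A
        = 1/2 := by
          simp [Measure.dirac_apply' _ hA.measurableSet, Set.indicator_of_mem h0,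
            Set.indicator_of_notMem h1]
      _ ≤ _ := hfinal
  · -- 0 ∉ A, 1 ∈ A
    obtain ⟨ε₁, hε₁, hball1⟩ := Metric.isOpen_iff.mp hA 1 h1
    set ε : ℝ := min ε₁ (1/4) with hεdef
    have hle1 : ε ≤ ε₁ := min_le_left _ _
    have hle4 : ε ≤ 1/4 := min_le_right _ _
    have hε0' : 0 < ε := lt_min hε₁ (by norm_num)
    have hεh : ε < 1/2 := lt_of_le_of_lt hle4 (by norm_num)
    obtain ⟨hkey, hmid⟩ := key ε hε0' hεh
    have hsub1 : Set.Ioc (1-ε) 1 ⊆ A := fun x hx => hball1 (by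
      rw [Metric.mem_ball, Real.dist_eq]
      rw [abs_lt]
      constructor <;> [linarith [hx.1]; linarith [hx.2]])
    have hev : ∀ᶠ d in atTop, (1 - μ d (Set.Icc ε (1-ε))) / 2 ≤ μ d A := by
      filter_upwards [hkey] with d hk
      have hms := meas_symm fZ hsymm μ hμ d ε (by linarith)
      have h2 : (1 - μ d (Set.Icc ε (1-ε))) / 2 ≤ μ d (Set.Ioc (1-ε) 1) := by
        rw [hms, ENNReal.div_le_iff_le_mul (Or.inl (by norm_num)) (Or.inl (by norm_num))]
        rw [tsub_le_iff_right]
        calc (1:ℝ≥0∞) ≤ 2 * μ d (Set.Ico 0 ε) + μ d (Set.Icc ε (1-ε)) := hk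
          _ = μ d (Set.Ico 0 ε) * 2 + μ d (Set.Icc ε (1-ε)) := by rw [mul_comm]
      exact le_trans h2 (measure_mono hsub1)
    have hlim1 : Filter.Tendsto (fun d => (1 - μ d (Set.Icc ε (1-ε))) / 2)
        Filter.atTop (nhds (1/2)) := by
      have hs := ENNReal.Tendsto.sub (tendsto_const_nhds (x := (1:ℝ≥0∞))) hmid
        (Or.inl ENNReal.one_ne_top)
      have := ENNReal.Tendsto.mul_const (b := (2:ℝ≥0∞)⁻¹) hs (Or.inr (by norm_num))
      simp only [tsub_zero] at this
      simpa [div_eq_mul_inv] using this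
    have hfinal : (1/2:ℝ≥0∞) ≤ Filter.liminf (fun d => μ d A) Filter.atTop := by
      rw [← hlim1.liminf_eq]
      exact Filter.liminf_le_liminf hev
    calc ((1 / 2 : ℝ≥0∞) • Measure.dirac (0 : ℝ) + (1 / 2 : ℝ≥0∞) • Measure.dirac (1 : ℝ)) A
        = 1/2 := by
          simp [Measure.dirac_apply' _ hA.measurableSet, Set.indicator_of_notMem h0,
            Set.indicator_of_mem h1]
      _ ≤ _ := hfinal
  · -- neither endpoint
    have : ((1 / 2 : ℝ≥0∞) • Measure.dirac (0 : ℝ) + (1 / 2 : ℝ≥0∞) • Measure.dirac (1 : ℝ)) A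
        = 0 := by
      simp [Measure.dirac_apply' _ hA.measurableSet, Set.indicator_of_notMem h0,
        Set.indicator_of_notMem h1]
    rw [this]
    exact zero_le
end

section
/- Let −∞ < a < b < ∞ and let (g_d)_{d>0} be a family of functions on [a,b] such that each g_d is continuously differentiable on [a,b] and is either monotone increasing or monotone decreasing, and suppose there exists M > 0 with 0 < |g_d(x)| < M for every d > 0 and every x ∈ [a,b]. If lim_{d→∞} |g_d'(x)/g_d(x)| = ∞ for every x ∈ (a,b), then g_d(x) → 0 as d → ∞ for every x ∈ (a,b). -/
open Real Filter Set MeasureTheory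

/-- A function monotone on `Icc a b` and differentiable at an interior point
has nonnegative derivative there. -/
lemma stmt13_mono_deriv_nonneg {f : ℝ → ℝ} {a b y : ℝ} (hy : y ∈ Set.Ioo a b)
    (hf : MonotoneOn f (Set.Icc a b)) (hd : DifferentiableAt ℝ f y) :
    0 ≤ deriv f y := by
  have hslope : Tendsto (slope f y) (nhdsWithin y {y}ᶜ) (nhds (deriv f y)) :=
    hasDerivAt_iff_tendsto_slope.mp hd.hasDerivAt
  have h2 : Tendsto (slope f y) (nhdsWithin y (Set.Ioi y)) (nhds (deriv f y)) :=
    hslope.mono_left (nhdsWithin_mono y (fun z hz => ne_of_gt hz))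
  refine ge_of_tendsto h2 ?_
  filter_upwards [Ioo_mem_nhdsGT_of_mem ⟨le_refl y, hy.2⟩] with z hz
  have h3 : f y ≤ f z := hf ⟨hy.1.le, hy.2.le⟩ ⟨(hy.1.trans hz.1).le, hz.2.le⟩ hz.1.le
  have h4 : 0 < z - y := sub_pos.mpr hz.1
  rw [slope_def_field]
  exact div_nonneg (sub_nonneg.mpr h3) h4.le

/-- Key integral bound: for a monotone C¹ function bounded by `M` in absolute
value and with `|f| ≥ ε` on `[c₁, c₂]`, the integral of `|f'/f|` over `(c₁,c₂)`
is at most `2M/ε`. -/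
lemma stmt13_key {f : ℝ → ℝ} {a b c₁ c₂ ε M : ℝ} (hab : a < b)
    (hac : a < c₁) (hcc : c₁ < c₂) (hcb : c₂ < b) (hε : 0 < ε)
    (hsm : ContDiffOn ℝ 1 f (Set.Icc a b))
    (hb : ∀ x ∈ Set.Icc a b, |f x| < M)
    (hmono : MonotoneOn f (Set.Icc a b) ∨ AntitoneOn f (Set.Icc a b))
    (hlow : ∀ y ∈ Set.Icc c₁ c₂, ε ≤ |f y|) :
    ∫⁻ y in Set.Ioo c₁ c₂, ENNReal.ofReal |deriv f y / f y| ≤ ENNReal.ofReal (2 * M / ε) := by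
  have hIcc : Set.Icc c₁ c₂ ⊆ Set.Ioo a b := Set.Icc_subset_Ioo hac hcb
  have hIoo : Set.Ioo a b ⊆ Set.Icc a b := Set.Ioo_subset_Icc_self
  have hdiff : ∀ y ∈ Set.Ioo a b, DifferentiableAt ℝ f y := by
    intro y hy
    have h1 : Set.Icc a b ∈ nhds y := Icc_mem_nhds hy.1 hy.2
    exact ((hsm.differentiableOn one_ne_zero) y (hIoo hy)).differentiableAt h1
  have hderivcont : ContinuousOn (deriv f) (Set.Ioo a b) := by
    have h := hsm.continuousOn_derivWithin (uniqueDiffOn_Icc hab) le_rfl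
    exact (h.mono hIoo).congr fun y hy =>
      (derivWithin_of_mem_nhds (Icc_mem_nhds hy.1 hy.2)).symm
  have hFTC : ∫ y in c₁..c₂, deriv f y = f c₂ - f c₁ := by
    apply intervalIntegral.integral_eq_sub_of_hasDerivAt
    · intro y hy
      rw [Set.uIcc_of_le hcc.le] at hy
      exact (hdiff y (hIcc hy)).hasDerivAt
    · apply ContinuousOn.intervalIntegrable
      rw [Set.uIcc_of_le hcc.le]
      exact hderivcont.mono hIcc
  -- continuity / integrability facts on `Icc c₁ c₂`
  have hcontf : ContinuousOn f (Set.Icc c₁ c₂) :=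
    (hsm.continuousOn).mono (hIcc.trans hIoo)
  have hcontd : ContinuousOn (deriv f) (Set.Icc c₁ c₂) := hderivcont.mono hIcc
  have hne : ∀ y ∈ Set.Icc c₁ c₂, f y ≠ 0 := by
    intro y hy
    intro h0
    have := hlow y hy
    rw [h0, abs_zero] at this
    linarith
  have hcontφ : ContinuousOn (fun y => |deriv f y / f y|) (Set.Icc c₁ c₂) :=
    (hcontd.div hcontf hne).abs
  have hintφ : IntegrableOn (fun y => |deriv f y / f y|) (Set.Ioo c₁ c₂) :=
    (hcontφ.integrableOn_Icc).mono_set Set.Ioo_subset_Icc_self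
  have hintd : IntegrableOn (fun y => |deriv f y| / ε) (Set.Ioo c₁ c₂) :=
    ((hcontd.abs.div_const ε).integrableOn_Icc).mono_set Set.Ioo_subset_Icc_self
  -- bound on the variation
  have hvar : ∫ y in Set.Ioo c₁ c₂, |deriv f y| ≤ 2 * M := by
    have hM1 : |f c₁| < M := hb c₁ ((hIcc.trans hIoo) ⟨le_refl c₁, hcc.le⟩)
    have hM2 : |f c₂| < M := hb c₂ ((hIcc.trans hIoo) ⟨hcc.le, le_refl c₂⟩)
    have hioo : ∫ y in Set.Ioo c₁ c₂, deriv f y = f c₂ - f c₁ := by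
      rw [← MeasureTheory.integral_Ioc_eq_integral_Ioo, ← intervalIntegral.integral_of_le hcc.le]
      exact hFTC
    rcases hmono with hm | hm
    · have heq : ∫ y in Set.Ioo c₁ c₂, |deriv f y| = ∫ y in Set.Ioo c₁ c₂, deriv f y := by
        apply MeasureTheory.setIntegral_congr_fun measurableSet_Ioo
        intro y hy
        exact abs_of_nonneg (stmt13_mono_deriv_nonneg (hIcc (Set.Ioo_subset_Icc_self hy)) hm
          (hdiff y (hIcc (Set.Ioo_subset_Icc_self hy))))
      rw [heq, hioo]
      have := abs_le.mp hM1.le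
      have := abs_le.mp hM2.le
      linarith [(abs_le.mp hM1.le).1, (abs_le.mp hM2.le).2]
    · have hm' : MonotoneOn (fun x => -f x) (Set.Icc a b) := hm.neg
      have heq : ∫ y in Set.Ioo c₁ c₂, |deriv f y| = ∫ y in Set.Ioo c₁ c₂, -deriv f y := by
        apply MeasureTheory.setIntegral_congr_fun measurableSet_Ioo
        intro y hy
        have hy' := hIcc (Set.Ioo_subset_Icc_self hy)
        have hd' : DifferentiableAt ℝ f y := hdiff y hy'
        have : 0 ≤ deriv (fun x => -f x) y :=
          stmt13_mono_deriv_nonneg hy' hm' hd'.neg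
        rw [deriv.fun_neg] at this
        exact abs_of_nonpos (by linarith)
      rw [heq, MeasureTheory.integral_neg, hioo]
      linarith [(abs_le.mp hM1.le).2, (abs_le.mp hM2.le).1]
  -- now the main chain
  have hnn : 0 ≤ᵐ[volume.restrict (Set.Ioo c₁ c₂)] fun y => |deriv f y / f y| :=
    Filter.Eventually.of_forall fun y => abs_nonneg _
  rw [← MeasureTheory.ofReal_integral_eq_lintegral_ofReal hintφ hnn]
  apply ENNReal.ofReal_le_ofReal
  have hstep : ∫ y in Set.Ioo c₁ c₂, |deriv f y / f y| ≤ ∫ y in Set.Ioo c₁ c₂, |deriv f y| / ε := by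
    apply MeasureTheory.setIntegral_mono_on hintφ hintd measurableSet_Ioo
    intro y hy
    rw [abs_div]
    exact div_le_div_of_nonneg_left (abs_nonneg _) hε (hlow y (Set.Ioo_subset_Icc_self hy))
  refine hstep.trans ?_
  rw [MeasureTheory.integral_div]
  gcongr

/-- Continuity of `deriv` on the interior, for a `C¹` function on `Icc a b`. -/
lemma stmt13_derivcont {f : ℝ → ℝ} {a b : ℝ} (hab : a < b)
    (hsm : ContDiffOn ℝ 1 f (Set.Icc a b)) :
    ContinuousOn (deriv f) (Set.Ioo a b) := by
  have h := hsm.continuousOn_derivWithin (uniqueDiffOn_Icc hab) le_rfl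
  exact (h.mono Set.Ioo_subset_Icc_self).congr fun y hy =>
    (derivWithin_of_mem_nhds (Icc_mem_nhds hy.1 hy.2)).symm

/-- The Fatou argument: it is impossible that frequently in `d`, the function
`g d` is monotone and has `|g d| ≥ ε` on a fixed subinterval `[c₁, c₂]`. -/
lemma stmt13_aux {g : ℝ → ℝ → ℝ} {a b c₁ c₂ ε M : ℝ} (hab : a < b)
    (hac : a < c₁) (hcc : c₁ < c₂) (hcb : c₂ < b) (hε : 0 < ε)
    (hsmooth : ∀ d > (0:ℝ), ContDiffOn ℝ 1 (g d) (Set.Icc a b))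
    (hbdd : ∀ d > (0:ℝ), ∀ x ∈ Set.Icc a b, 0 < |g d x| ∧ |g d x| < M)
    (hlim : ∀ x ∈ Set.Ioo a b,
      Filter.Tendsto (fun d => |deriv (g d) x / g d x|) Filter.atTop Filter.atTop)
    (hfreq : ∃ᶠ d in Filter.atTop, 0 < d ∧
      (MonotoneOn (g d) (Set.Icc a b) ∨ AntitoneOn (g d) (Set.Icc a b)) ∧
      ∀ y ∈ Set.Icc c₁ c₂, ε ≤ |g d y|) : False := by
  have h1 := Filter.frequently_atTop.mp hfreq
  choose u hu hP using fun n : ℕ => h1 (n : ℝ)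
  have hu_t : Filter.Tendsto u Filter.atTop Filter.atTop :=
    tendsto_atTop_mono hu tendsto_natCast_atTop_atTop
  set F : ℕ → ℝ → ENNReal := fun n y => ENNReal.ofReal |deriv (g (u n)) y / g (u n) y| with hF
  have hsub : Set.Ioo c₁ c₂ ⊆ Set.Ioo a b :=
    (Set.Ioo_subset_Icc_self.trans (Set.Icc_subset_Ioo hac hcb))
  have hmeas : ∀ n, AEMeasurable (F n) (volume.restrict (Set.Ioo c₁ c₂)) := by
    intro n
    have hcd : ContinuousOn (deriv (g (u n))) (Set.Ioo c₁ c₂) :=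
      (stmt13_derivcont hab (hsmooth _ (hP n).1)).mono hsub
    have hcf : ContinuousOn (g (u n)) (Set.Ioo c₁ c₂) :=
      (hsmooth _ (hP n).1).continuousOn.mono (hsub.trans Set.Ioo_subset_Icc_self)
    have hne : ∀ y ∈ Set.Ioo c₁ c₂, g (u n) y ≠ 0 := by
      intro y hy
      have := (hbdd _ (hP n).1 y ((hsub.trans Set.Ioo_subset_Icc_self) hy)).1
      exact abs_pos.mp this
    exact ENNReal.measurable_ofReal.comp_aemeasurable
      (((hcd.div hcf hne).abs).aemeasurable measurableSet_Ioo)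
  have hbound : ∀ n, ∫⁻ y in Set.Ioo c₁ c₂, F n y ≤ ENNReal.ofReal (2 * M / ε) := fun n =>
    stmt13_key hab hac hcc hcb hε (hsmooth _ (hP n).1)
      (fun x hx => (hbdd _ (hP n).1 x hx).2) (hP n).2.1 (hP n).2.2
  have fatou := MeasureTheory.lintegral_liminf_le' (u := Filter.atTop) hmeas
  have htop : ∀ y ∈ Set.Ioo c₁ c₂, Filter.liminf (fun n => F n y) Filter.atTop = ⊤ := by
    intro y hy
    have hy' : y ∈ Set.Ioo a b := hsub hy
    have h2 : Filter.Tendsto (fun n => |deriv (g (u n)) y / g (u n) y|)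
        Filter.atTop Filter.atTop := (hlim y hy').comp hu_t
    exact (ENNReal.tendsto_ofReal_atTop.comp h2).liminf_eq
  have hLHS : ∫⁻ y in Set.Ioo c₁ c₂, Filter.liminf (fun n => F n y) Filter.atTop = ⊤ := by
    rw [MeasureTheory.setLIntegral_congr_fun measurableSet_Ioo
      (fun y hy => htop y hy)]
    rw [MeasureTheory.setLIntegral_const]
    rw [ENNReal.top_mul]
    · simp [Real.volume_Ioo, hcc, sub_pos.mpr hcc]
  have hfin : Filter.liminf (fun n => ∫⁻ y in Set.Ioo c₁ c₂, F n y) Filter.atTop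
      ≤ ENNReal.ofReal (2 * M / ε) := by
    refine le_trans (Filter.liminf_le_liminf (Filter.Eventually.of_forall hbound)) ?_
    simp
  have : (⊤ : ENNReal) ≤ ENNReal.ofReal (2 * M / ε) := hLHS ▸ fatou.trans hfin
  exact absurd (top_le_iff.mp this) (ENNReal.ofReal_ne_top)


/-- An analytic lemma: a family `(g_d)_{d>0}` of monotone, continuously
differentiable, uniformly bounded, nonvanishing functions on `[a,b]` with
`|g_d'(x)/g_d(x)| → ∞` on `(a,b)` must satisfy `g_d(x) → 0` on `(a,b)`. -/
theorem stmt_13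
    (a b : ℝ) (hab : a < b)
    (g : ℝ → ℝ → ℝ) (M : ℝ)
    (hmono : ∀ d > (0 : ℝ),
      MonotoneOn (g d) (Set.Icc a b) ∨ AntitoneOn (g d) (Set.Icc a b))
    (hsmooth : ∀ d > (0 : ℝ), ContDiffOn ℝ 1 (g d) (Set.Icc a b))
    (hbdd : ∀ d > (0 : ℝ), ∀ x ∈ Set.Icc a b, 0 < |g d x| ∧ |g d x| < M)
    (hlim : ∀ x ∈ Set.Ioo a b,
      Filter.Tendsto (fun d => |deriv (g d) x / g d x|) Filter.atTop Filter.atTop) :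
    ∀ x ∈ Set.Ioo a b, Filter.Tendsto (fun d => g d x) Filter.atTop (nhds 0) := by
  intro x₀ hx₀
  by_contra hcon
  rw [Metric.tendsto_atTop] at hcon
  push_neg at hcon
  obtain ⟨ε, hε, hfr⟩ := hcon
  have hfr' : ∃ᶠ d in Filter.atTop, ε ≤ |g d x₀| := by
    rw [Filter.frequently_atTop]
    intro N
    obtain ⟨d, hd1, hd2⟩ := hfr N
    exact ⟨d, hd1, by simpa [Real.dist_eq] using hd2⟩
  have hx₀ab : x₀ ∈ Set.Icc a b := Set.Ioo_subset_Icc_self hx₀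
  set m₁ := (a + x₀) / 2 with hm₁
  set m₂ := (x₀ + b) / 2 with hm₂
  have ham₁ : a < m₁ := by rw [hm₁]; linarith [hx₀.1]
  have hm₁x : m₁ < x₀ := by rw [hm₁]; linarith [hx₀.1]
  have hxm₂ : x₀ < m₂ := by rw [hm₂]; linarith [hx₀.2]
  have hm₂b : m₂ < b := by rw [hm₂]; linarith [hx₀.2]
  have hfreq2 : ∃ᶠ d in Filter.atTop,
      (0 < d ∧ (MonotoneOn (g d) (Set.Icc a b) ∨ AntitoneOn (g d) (Set.Icc a b)) ∧
        ∀ y ∈ Set.Icc m₁ x₀, ε ≤ |g d y|) ∨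
      (0 < d ∧ (MonotoneOn (g d) (Set.Icc a b) ∨ AntitoneOn (g d) (Set.Icc a b)) ∧
        ∀ y ∈ Set.Icc x₀ m₂, ε ≤ |g d y|) := by
    apply (hfr'.and_eventually (Filter.eventually_gt_atTop 0)).mono
    rintro d ⟨hd1, hd2⟩
    have hne : g d x₀ ≠ 0 := abs_pos.mp (hbdd d hd2 x₀ hx₀ab).1
    have hmemL : ∀ y ∈ Set.Icc m₁ x₀, y ∈ Set.Icc a b := fun y hy =>
      ⟨ham₁.le.trans hy.1, hy.2.trans hx₀.2.le⟩
    have hmemR : ∀ y ∈ Set.Icc x₀ m₂, y ∈ Set.Icc a b := fun y hy =>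
      ⟨hx₀.1.le.trans hy.1, hy.2.trans hm₂b.le⟩
    rcases hmono d hd2 with hm | hm
    · rcases hne.lt_or_gt with hneg | hpos
      · left
        refine ⟨hd2, Or.inl hm, fun y hy => ?_⟩
        have h3 : g d y ≤ g d x₀ := hm (hmemL y hy) hx₀ab hy.2
        calc ε ≤ |g d x₀| := hd1
          _ = -(g d x₀) := abs_of_neg hneg
          _ ≤ -(g d y) := by linarith
          _ ≤ |g d y| := neg_le_abs _
      · right
        refine ⟨hd2, Or.inl hm, fun y hy => ?_⟩
        have h3 : g d x₀ ≤ g d y := hm hx₀ab (hmemR y hy) hy.1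
        calc ε ≤ |g d x₀| := hd1
          _ = g d x₀ := abs_of_pos hpos
          _ ≤ g d y := h3
          _ ≤ |g d y| := le_abs_self _
    · rcases hne.lt_or_gt with hneg | hpos
      · right
        refine ⟨hd2, Or.inr hm, fun y hy => ?_⟩
        have h3 : g d y ≤ g d x₀ := hm hx₀ab (hmemR y hy) hy.1
        calc ε ≤ |g d x₀| := hd1
          _ = -(g d x₀) := abs_of_neg hneg
          _ ≤ -(g d y) := by linarith
          _ ≤ |g d y| := neg_le_abs _
      · left
        refine ⟨hd2, Or.inr hm, fun y hy => ?_⟩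
        have h3 : g d x₀ ≤ g d y := hm (hmemL y hy) hx₀ab hy.2
        calc ε ≤ |g d x₀| := hd1
          _ = g d x₀ := abs_of_pos hpos
          _ ≤ g d y := h3
          _ ≤ |g d y| := le_abs_self _
  rcases Filter.frequently_or_distrib.mp hfreq2 with h | h
  · exact stmt13_aux hab ham₁ hm₁x hx₀.2 hε hsmooth hbdd hlim h
  · exact stmt13_aux hab hx₀.1 hxm₂ hm₂b hε hsmooth hbdd hlim h
end

section
/- Let f : [0,∞) → (0,∞) be a twice continuously differentiable probability density function such that for every d > 0 the integral ∫₀¹ f(dy)·f(d(1−y)) dy is positive and finite. Suppose f is eventually strictly log-convex or eventually strictly log-concave (i.e. there exists x₀ such that (d²/dx²) log f(x) > 0 for all x > x₀, or (d²/dx²) log f(x) < 0 for all x > x₀), and suppose that for every x ∈ (0,1/2) one has lim_{d→∞} d·| f'(dx)/f(dx) − f'(d(1−x))/f(d(1−x)) | = ∞. Define f_{Z_d}(x) = f(dx)·f(d(1−x)) / ∫₀¹ f(dy)·f(d(1−y)) dy. Then f_{Z_d}(x) → 0 as d → ∞ for every x ∈ (0,1/2). -/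
open MeasureTheory Real Filter Set

set_option maxHeartbeats 1000000

/-- Auxiliary: lower bound on the full integral from a pointwise lower bound on a
subinterval, giving an upper bound on the ratio. -/
lemma aux_int_bound (f : ℝ → ℝ) (d a b K N : ℝ) (hab : a < b) (ha : 0 ≤ a) (hb : b ≤ 1)
    (hN : 0 ≤ N)
    (hnn : ∀ y ∈ Set.Icc (0:ℝ) 1, 0 ≤ f (d * y) * f (d * (1 - y)))
    (hint : IntervalIntegrable (fun y => f (d * y) * f (d * (1 - y))) volume 0 1)
    (hK : ∀ y ∈ Set.Icc a b, K ≤ f (d * y) * f (d * (1 - y))) (hKpos : 0 < K) :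
    N / ∫ y in (0:ℝ)..1, f (d * y) * f (d * (1 - y)) ≤ N / ((b - a) * K) := by
  have h1 : IntervalIntegrable (fun y => f (d*y) * f (d*(1-y))) volume a b := by
    apply hint.mono_set
    rw [Set.uIcc_of_le hab.le, Set.uIcc_of_le (by norm_num : (0:ℝ) ≤ 1)]
    exact Set.Icc_subset_Icc ha hb
  have h2 : (b - a) * K ≤ ∫ y in a..b, f (d*y) * f (d*(1-y)) := by
    have := intervalIntegral.integral_mono_on hab.le intervalIntegrable_const h1 hK
    simpa [smul_eq_mul] using this
  have h3 : (∫ y in a..b, f (d*y)*f (d*(1-y))) ≤ ∫ y in (0:ℝ)..1, f (d*y)*f (d*(1-y)) := by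
    apply intervalIntegral.integral_mono_interval ha hab.le hb ?_ hint
    filter_upwards [ae_restrict_mem measurableSet_Ioc] with y hy
    exact hnn y ⟨hy.1.le, hy.2⟩
  have hpos : 0 < (b - a) * K := by
    have : 0 < b - a := by linarith
    positivity
  gcongr
  linarith

/-- Auxiliary: existence of a large positive `M` making the bound less than `ε`. -/
lemma aux_exists_M (c₁ c₂ ε : ℝ) (hc₁ : 0 < c₁) (hc₂ : 0 < c₂) (hε : 0 < ε) :
    ∃ M : ℝ, 0 < M ∧ 1 / (c₁ * Real.exp (M * c₂)) < ε := by
  have h1 : Filter.Tendsto (fun M : ℝ => M * c₂) Filter.atTop Filter.atTop :=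
    Filter.Tendsto.atTop_mul_const hc₂ Filter.tendsto_id
  have h2 : Filter.Tendsto (fun M : ℝ => c₁ * Real.exp (M * c₂)) Filter.atTop Filter.atTop :=
    Filter.Tendsto.const_mul_atTop hc₁ (Real.tendsto_exp_atTop.comp h1)
  have h3 : Filter.Tendsto (fun M : ℝ => 1 / (c₁ * Real.exp (M * c₂)))
      Filter.atTop (nhds 0) := by
    have := h2.inv_tendsto_atTop
    simpa [Pi.inv_def, one_div] using this
  obtain ⟨M, hM1, hM2⟩ :=
    ((h3.eventually (gt_mem_nhds hε)).and (Filter.eventually_gt_atTop 0)).exists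
  exact ⟨M, hM2, hM1⟩

/-- If `f` is eventually strictly log-convex or log-concave and
`d·|f'(dx)/f(dx) − f'(d(1−x))/f(d(1−x))| → ∞` for every `x ∈ (0,1/2)`, then
`f_{Z_d}(x) → 0` for every `x ∈ (0,1/2)`. -/
theorem stmt_14
    (f : ℝ → ℝ)
    (hpos : ∀ x, 0 ≤ x → 0 < f x)
    (hsmooth : ContDiffOn ℝ 2 f (Set.Ici (0 : ℝ)))
    (hdens : ∫ x in Set.Ici (0 : ℝ), f x = 1)
    (hint : ∀ d > (0 : ℝ),
      IntervalIntegrable (fun y => f (d * y) * f (d * (1 - y))) volume 0 1)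
    (hintpos : ∀ d > (0 : ℝ), 0 < ∫ y in (0 : ℝ)..1, f (d * y) * f (d * (1 - y)))
    (hlog : (∃ x₀ : ℝ, ∀ x > x₀, 0 < deriv (deriv (fun t => Real.log (f t))) x) ∨
            (∃ x₀ : ℝ, ∀ x > x₀, deriv (deriv (fun t => Real.log (f t))) x < 0))
    (hratio : ∀ x ∈ Set.Ioo (0 : ℝ) (1 / 2),
      Filter.Tendsto
        (fun d => d * |deriv f (d * x) / f (d * x) -
          deriv f (d * (1 - x)) / f (d * (1 - x))|)
        Filter.atTop Filter.atTop)
    (fZ : ℝ → ℝ → ℝ)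
    (hfZ : ∀ d x, fZ d x =
      f (d * x) * f (d * (1 - x)) / ∫ y in (0 : ℝ)..1, f (d * y) * f (d * (1 - y))) :
    ∀ x ∈ Set.Ioo (0 : ℝ) (1 / 2),
      Filter.Tendsto (fun d => fZ d x) Filter.atTop (nhds 0) := by
  intro x hx
  obtain ⟨hx0, hx12⟩ := hx
  have hx1 : x < 1 := by linarith
  -- the derivative of f exists at positive points
  have hfd : ∀ t : ℝ, 0 < t → HasDerivAt f (deriv f t) t := by
    intro t ht
    exact ((hsmooth.differentiableOn (by norm_num)).differentiableAt
      (Ici_mem_nhds ht)).hasDerivAt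
  obtain ⟨ψ, hψdef⟩ : ∃ ψ : ℝ → ℝ, ψ = fun t => deriv f t / f t := ⟨_, rfl⟩
  have hφ : ∀ t : ℝ, 0 < t → HasDerivAt (fun u => Real.log (f u)) (ψ t) t := by
    intro t ht
    have h := (Real.hasDerivAt_log (hpos t ht.le).ne').comp t (hfd t ht)
    simpa [hψdef, div_eq_inv_mul, Function.comp_def] using h
  have hψeq : ∀ t : ℝ, 0 < t → deriv (fun u => Real.log (f u)) t = ψ t :=
    fun t ht => (hφ t ht).deriv
  have hψcont : ContinuousOn ψ (Set.Ioi (0:ℝ)) := by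
    rw [hψdef]
    have h1 : ContinuousOn (deriv f) (Set.Ioi (0:ℝ)) :=
      (hsmooth.mono Set.Ioi_subset_Ici_self).continuousOn_deriv_of_isOpen
        isOpen_Ioi (by norm_num)
    exact h1.div (hsmooth.continuousOn.mono Set.Ioi_subset_Ici_self)
      (fun t ht => (hpos t (le_of_lt ht)).ne')
  have hψderiv : ∀ t : ℝ, 0 < t →
      deriv ψ t = deriv (deriv (fun u => Real.log (f u))) t := by
    intro t ht
    apply Filter.EventuallyEq.deriv_eq
    filter_upwards [Ioi_mem_nhds ht] with s hs
    exact (hψeq s hs).symm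
  -- Threshold and monotonicity of ψ, per case
  rcases hlog with ⟨x₀, hcc⟩ | ⟨x₀, hcc⟩
  · -- log-convex case
    set a₀ : ℝ := max x₀ 0 + 1 with ha₀def
    have ha₀pos : 0 < a₀ := by positivity
    have ha₀x₀ : x₀ < a₀ := lt_of_le_of_lt (le_max_left _ _) (lt_add_one _)
    have hmono : StrictMonoOn ψ (Set.Ici a₀) := by
      apply strictMonoOn_of_deriv_pos (convex_Ici a₀)
      · exact hψcont.mono (fun t ht => lt_of_lt_of_le ha₀pos ht)
      · intro t ht
        rw [interior_Ici] at ht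
        rw [hψderiv t (lt_trans ha₀pos ht)]
        exact hcc t (lt_trans ha₀x₀ ht)
    -- main estimate, log-convex case
    rw [Metric.tendsto_nhds]
    intro ε hε
    obtain ⟨M, hM0, hMε⟩ := aux_exists_M (x/4) (x/4) ε (by linarith) (by linarith) hε
    filter_upwards [Filter.eventually_gt_atTop (2*a₀/x),
      (hratio x ⟨hx0, hx12⟩).eventually_gt_atTop M] with d hd hMd
    have hd0 : 0 < d := lt_trans (by positivity) hd
    have hdx2 : a₀ < d * (x/2) := by
      rw [div_lt_iff₀ hx0] at hd; nlinarith
    have harg : ∀ t : ℝ, x/2 ≤ t → t ≤ 1 → a₀ ≤ d * t := by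
      intro t h1 h2; nlinarith
    obtain ⟨G, hGdef⟩ : ∃ G : ℝ → ℝ, G = fun y => ψ (d*y) - ψ (d*(1-y)) := ⟨_, rfl⟩
    have hGmono : ∀ s t : ℝ, x/2 ≤ s → s ≤ t → t ≤ 1/2 → G s ≤ G t := by
      intro s t hs hst ht
      have hs1 : s ≤ 1 := by linarith
      have ht1 : t ≤ 1 := by linarith
      have e1 : ψ (d*s) ≤ ψ (d*t) :=
        hmono.monotoneOn (harg s hs hs1) (harg t (le_trans hs hst) ht1) (by nlinarith)
      have e2 : ψ (d*(1-t)) ≤ ψ (d*(1-s)) :=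
        hmono.monotoneOn (harg (1-t) (by linarith) (by linarith))
          (harg (1-s) (by linarith) (by linarith)) (by nlinarith)
      simp only [hGdef]; linarith
    have hG0 : G (1/2) = 0 := by
      simp only [hGdef]; norm_num
    have hGx : d * G x < -M := by
      have h1 : G x ≤ 0 := by
        have h := hGmono x (1/2) (by linarith) (by linarith) le_rfl
        rw [hG0] at h; exact h
      have h2 : M < d * |G x| := by
        simp only [hGdef, hψdef]; exact hMd
      rw [abs_of_nonpos h1] at h2; linarith
    obtain ⟨g, hgdef⟩ : ∃ g : ℝ → ℝ,
        g = fun t => Real.log (f (d*t)) + Real.log (f (d*(1-t))) := ⟨_, rfl⟩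
    have hg : ∀ y : ℝ, 0 < y → y < 1 → HasDerivAt g (d * G y) y := by
      intro y h1 h2
      have p1 : 0 < d * y := by positivity
      have p2 : 0 < d * (1-y) := by nlinarith
      have e1 : HasDerivAt (fun t : ℝ => d*t) d y := by
        simpa using (hasDerivAt_id y).const_mul d
      have e2 : HasDerivAt (fun t : ℝ => d*(1-t)) (d * (-1)) y :=
        ((hasDerivAt_id y).const_sub 1).const_mul d
      have h3 := (hφ (d*y) p1).comp y e1
      have h4 := (hφ (d*(1-y)) p2).comp y e2
      have h5 := h3.add h4
      have : HasDerivAt g (ψ (d*y) * d + ψ (d*(1-y)) * (d * (-1))) y := by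
        simpa [hgdef, Function.comp_def, Pi.add_def] using h5
      convert this using 1
      simp only [hGdef]; ring
    have hgexp : ∀ y : ℝ, 0 < y → y < 1 → Real.exp (g y) = f (d*y) * f (d*(1-y)) := by
      intro y h1 h2
      have p1 : 0 < d*y := by positivity
      have p2 : 0 < d*(1-y) := by nlinarith
      simp only [hgdef]
      rw [Real.exp_add, Real.exp_log (hpos _ p1.le), Real.exp_log (hpos _ p2.le)]
    obtain ⟨N, hNdef⟩ : ∃ N : ℝ, N = f (d*x) * f (d*(1-x)) := ⟨_, rfl⟩
    have hNpos : 0 < N := by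
      rw [hNdef]; exact mul_pos (hpos _ (by positivity)) (hpos _ (by nlinarith))
    have hkey : ∀ y ∈ Set.Icc (x/2) (3*x/4),
        N * Real.exp (M * (x/4)) ≤ f (d*y) * f (d*(1-y)) := by
      rintro y ⟨hy1, hy2⟩
      have hyx : y < x := by linarith
      have hy0 : 0 < y := by linarith
      have hy1' : y < 1 := by linarith
      obtain ⟨c, hc, hceq⟩ := exists_hasDerivAt_eq_slope g (fun t => d * G t) hyx
        (fun t ht => ((hg t (by linarith [ht.1]) (by linarith [ht.2])).continuousAt).continuousWithinAt)
        (fun t ht => hg t (by linarith [ht.1]) (by linarith [ht.2]))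
      have hGc : G c ≤ G x := hGmono c x (by linarith [hc.1]) hc.2.le (by linarith)
      have hslope : (g x - g y) / (x - y) < -M := by
        rw [← hceq]; nlinarith
      have hxy : 0 < x - y := by linarith
      rw [div_lt_iff₀ hxy] at hslope
      have h6 : M * (x/4) ≤ M * (x - y) :=
        mul_le_mul_of_nonneg_left (by linarith) hM0.le
      have hgy : g x + M * (x/4) ≤ g y := by linarith
      have h7 := Real.exp_le_exp.2 hgy
      rw [Real.exp_add, hgexp x hx0 hx1, hgexp y hy0 hy1'] at h7
      rw [hNdef]
      exact h7
    have hbound := aux_int_bound f d (x/2) (3*x/4) (N * Real.exp (M*(x/4))) N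
      (by linarith) (by linarith) (by linarith) hNpos.le
      (fun y hy => mul_nonneg (hpos _ (by nlinarith [hy.1])).le
        (hpos _ (by nlinarith [hy.2])).le)
      (hint d hd0) hkey (by positivity)
    rw [Real.dist_0_eq_abs, hfZ d x]
    have hIpos := hintpos d hd0
    rw [← hNdef, abs_of_pos (div_pos hNpos hIpos)]
    have heq : N / ((3*x/4 - x/2) * (N * Real.exp (M*(x/4))))
        = 1 / ((x/4) * Real.exp (M*(x/4))) := by
      rw [div_eq_div_iff
        (mul_pos (show (0:ℝ) < 3*x/4 - x/2 by linarith)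
          (mul_pos hNpos (Real.exp_pos _))).ne'
        (mul_pos (show (0:ℝ) < x/4 by linarith) (Real.exp_pos _)).ne']
      ring
    calc N / ∫ y in (0:ℝ)..1, f (d * y) * f (d * (1 - y))
        ≤ N / ((3*x/4 - x/2) * (N * Real.exp (M*(x/4)))) := hbound
      _ = 1 / ((x/4) * Real.exp (M*(x/4))) := heq
      _ < ε := hMε

  · -- log-concave case
    set a₀ : ℝ := max x₀ 0 + 1 with ha₀def
    have ha₀pos : 0 < a₀ := by positivity
    have ha₀x₀ : x₀ < a₀ := lt_of_le_of_lt (le_max_left _ _) (lt_add_one _)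
    have hanti : StrictAntiOn ψ (Set.Ici a₀) := by
      apply strictAntiOn_of_deriv_neg (convex_Ici a₀)
      · exact hψcont.mono (fun t ht => lt_of_lt_of_le ha₀pos ht)
      · intro t ht
        rw [interior_Ici] at ht
        rw [hψderiv t (lt_trans ha₀pos ht)]
        exact hcc t (lt_trans ha₀x₀ ht)
    rw [Metric.tendsto_nhds]
    intro ε hε
    obtain ⟨M, hM0, hMε⟩ :=
      aux_exists_M (1/8 - x/4) (1/4 - x/2) ε (by linarith) (by linarith) hε
    filter_upwards [Filter.eventually_gt_atTop (2*a₀/x),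
      (hratio (x/2 + 1/4) ⟨by linarith, by linarith⟩).eventually_gt_atTop M] with d hd hMd
    have hd0 : 0 < d := lt_trans (by positivity) hd
    have hdx2 : a₀ < d * (x/2) := by
      rw [div_lt_iff₀ hx0] at hd; nlinarith
    have harg : ∀ t : ℝ, x/2 ≤ t → t ≤ 1 → a₀ ≤ d * t := by
      intro t h1 h2; nlinarith
    obtain ⟨G, hGdef⟩ : ∃ G : ℝ → ℝ, G = fun y => ψ (d*y) - ψ (d*(1-y)) := ⟨_, rfl⟩
    have hGanti : ∀ s t : ℝ, x/2 ≤ s → s ≤ t → t ≤ 1/2 → G t ≤ G s := by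
      intro s t hs hst ht
      have hs1 : s ≤ 1 := by linarith
      have ht1 : t ≤ 1 := by linarith
      have e1 : ψ (d*t) ≤ ψ (d*s) :=
        (hanti.antitoneOn) (harg s hs hs1) (harg t (le_trans hs hst) ht1) (by nlinarith)
      have e2 : ψ (d*(1-s)) ≤ ψ (d*(1-t)) :=
        (hanti.antitoneOn) (harg (1-t) (by linarith) (by linarith))
          (harg (1-s) (by linarith) (by linarith)) (by nlinarith)
      simp only [hGdef]; linarith
    have hG0 : G (1/2) = 0 := by
      simp only [hGdef]; norm_num
    have hGx' : M < d * G (x/2 + 1/4) := by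
      have h1 : 0 ≤ G (x/2 + 1/4) := by
        have h := hGanti (x/2 + 1/4) (1/2) (by linarith) (by linarith) le_rfl
        rw [hG0] at h; exact h
      have h2 : M < d * |G (x/2 + 1/4)| := by
        simp only [hGdef, hψdef]; exact hMd
      rw [abs_of_nonneg h1] at h2; exact h2
    obtain ⟨g, hgdef⟩ : ∃ g : ℝ → ℝ,
        g = fun t => Real.log (f (d*t)) + Real.log (f (d*(1-t))) := ⟨_, rfl⟩
    have hg : ∀ y : ℝ, 0 < y → y < 1 → HasDerivAt g (d * G y) y := by
      intro y h1 h2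
      have p1 : 0 < d * y := by positivity
      have p2 : 0 < d * (1-y) := by nlinarith
      have e1 : HasDerivAt (fun t : ℝ => d*t) d y := by
        simpa using (hasDerivAt_id y).const_mul d
      have e2 : HasDerivAt (fun t : ℝ => d*(1-t)) (d * (-1)) y :=
        ((hasDerivAt_id y).const_sub 1).const_mul d
      have h3 := (hφ (d*y) p1).comp y e1
      have h4 := (hφ (d*(1-y)) p2).comp y e2
      have h5 := h3.add h4
      have : HasDerivAt g (ψ (d*y) * d + ψ (d*(1-y)) * (d * (-1))) y := by
        simpa [hgdef, Function.comp_def, Pi.add_def] using h5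
      convert this using 1
      simp only [hGdef]; ring
    have hgexp : ∀ y : ℝ, 0 < y → y < 1 → Real.exp (g y) = f (d*y) * f (d*(1-y)) := by
      intro y h1 h2
      have p1 : 0 < d*y := by positivity
      have p2 : 0 < d*(1-y) := by nlinarith
      simp only [hgdef]
      rw [Real.exp_add, Real.exp_log (hpos _ p1.le), Real.exp_log (hpos _ p2.le)]
    obtain ⟨N, hNdef⟩ : ∃ N : ℝ, N = f (d*x) * f (d*(1-x)) := ⟨_, rfl⟩
    have hNpos : 0 < N := by
      rw [hNdef]; exact mul_pos (hpos _ (by positivity)) (hpos _ (by nlinarith))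
    -- step 1 : g (x/2+1/4) ≥ g x + M * (1/4 - x/2)
    have hstep1 : g x + M * (1/4 - x/2) ≤ g (x/2 + 1/4) := by
      have hxx' : x < x/2 + 1/4 := by linarith
      obtain ⟨c, hc, hceq⟩ := exists_hasDerivAt_eq_slope g (fun t => d * G t) hxx'
        (fun t ht => ((hg t (by linarith [ht.1]) (by linarith [ht.2])).continuousAt).continuousWithinAt)
        (fun t ht => hg t (by linarith [ht.1]) (by linarith [ht.2]))
      have hGc : G (x/2 + 1/4) ≤ G c :=
        hGanti c (x/2 + 1/4) (by linarith [hc.1]) hc.2.le (by linarith)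
      have hslope : M < (g (x/2 + 1/4) - g x) / (x/2 + 1/4 - x) := by
        rw [← hceq]; nlinarith
      rw [lt_div_iff₀ (by linarith : (0:ℝ) < x/2 + 1/4 - x)] at hslope
      nlinarith
    have hkey : ∀ y ∈ Set.Icc (x/2 + 1/4) (x/4 + 3/8),
        N * Real.exp (M * (1/4 - x/2)) ≤ f (d*y) * f (d*(1-y)) := by
      rintro y ⟨hy1, hy2⟩
      have hy0 : 0 < y := by linarith
      have hy1' : y < 1 := by linarith
      have hstep2 : g (x/2 + 1/4) ≤ g y := by
        rcases eq_or_lt_of_le hy1 with h | h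
        · rw [← h]
        · obtain ⟨c, hc, hceq⟩ := exists_hasDerivAt_eq_slope g (fun t => d * G t) h
            (fun t ht => ((hg t (by linarith [ht.1]) (by linarith [ht.2])).continuousAt).continuousWithinAt)
            (fun t ht => hg t (by linarith [ht.1]) (by linarith [ht.2]))
          have hGc : 0 ≤ G c := by
            have h' := hGanti c (1/2) (by linarith [hc.1]) (by linarith [hc.2]) le_rfl
            rw [hG0] at h'; exact h'
          have hslope : 0 ≤ (g y - g (x/2 + 1/4)) / (y - (x/2 + 1/4)) := by
            rw [← hceq]; exact mul_nonneg hd0.le hGc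
          rw [le_div_iff₀ (by linarith : (0:ℝ) < y - (x/2 + 1/4))] at hslope
          linarith
      have hgy : g x + M * (1/4 - x/2) ≤ g y := by linarith
      have h7 := Real.exp_le_exp.2 hgy
      rw [Real.exp_add, hgexp x hx0 hx1, hgexp y hy0 hy1'] at h7
      rw [hNdef]
      exact h7
    have hbound := aux_int_bound f d (x/2 + 1/4) (x/4 + 3/8)
      (N * Real.exp (M * (1/4 - x/2))) N
      (by linarith) (by linarith) (by linarith) hNpos.le
      (fun y hy => mul_nonneg (hpos _ (by nlinarith [hy.1])).le
        (hpos _ (by nlinarith [hy.2])).le)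
      (hint d hd0) hkey (by positivity)
    rw [Real.dist_0_eq_abs, hfZ d x]
    have hIpos := hintpos d hd0
    rw [← hNdef, abs_of_pos (div_pos hNpos hIpos)]
    have heq : N / ((x/4 + 3/8 - (x/2 + 1/4)) * (N * Real.exp (M * (1/4 - x/2))))
        = 1 / ((1/8 - x/4) * Real.exp (M * (1/4 - x/2))) := by
      rw [div_eq_div_iff
        (mul_pos (show (0:ℝ) < x/4 + 3/8 - (x/2 + 1/4) by linarith)
          (mul_pos hNpos (Real.exp_pos _))).ne'
        (mul_pos (show (0:ℝ) < 1/8 - x/4 by linarith) (Real.exp_pos _)).ne']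
      ring
    calc N / ∫ y in (0:ℝ)..1, f (d * y) * f (d * (1 - y))
        ≤ N / ((x/4 + 3/8 - (x/2 + 1/4)) * (N * Real.exp (M * (1/4 - x/2)))) := hbound
      _ = 1 / ((1/8 - x/4) * Real.exp (M * (1/4 - x/2))) := heq
      _ < ε := hMε
end

section
/- Let f_X(x) = C_X·exp(−x + √x) for x > 0, where C_X⁻¹ = ∫₀^∞ exp(−y + √y) dy, define f_{Z_d}(x) = f_X(dx)·f_X(d(1−x)) / ∫₀¹ f_X(dy)·f_X(d(1−y)) dy for x ∈ (0,1), and let μ_d be the probability measure on [0,1] with density f_{Z_d}. Then (d²/dx²) log f_X(x) = −(1/4)·x^{−3/2} < 0 for all x > 0, and for every x ∈ (0,1/2) one has d·( f_X'(dx)/f_X(dx) − f_X'(d(1−x))/f_X(d(1−x)) ) = (1/2)·√d·( x^{−1/2} − (1−x)^{−1/2} ) → ∞ as d → ∞, and consequently μ_d converges in distribution, as d → ∞, to the Dirac measure δ_{1/2} at the point 1/2. -/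
open MeasureTheory Real Filter Set
open scoped ENNReal


lemma s16_integrable : IntegrableOn (fun y : ℝ => Real.exp (-y + Real.sqrt y)) (Set.Ioi 0) := by
  have hg : IntegrableOn (fun y : ℝ => Real.exp (1/2) * Real.exp (-(1/2) * y)) (Set.Ioi 0) :=
    (exp_neg_integrableOn_Ioi 0 (by norm_num)).const_mul _
  refine hg.mono' ?_ ?_
  · exact (Real.continuous_exp.comp ((continuous_neg.add Real.continuous_sqrt))).aestronglyMeasurable
  · filter_upwards [ae_restrict_mem measurableSet_Ioi] with y hy
    have hy0 : (0:ℝ) ≤ y := (le_of_lt hy)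
    rw [Real.norm_eq_abs, abs_of_nonneg (Real.exp_nonneg _), ← Real.exp_add]
    apply Real.exp_le_exp.2
    nlinarith [sq_nonneg (Real.sqrt y - 1), Real.sq_sqrt hy0]

lemma s16_int_pos : 0 < ∫ y in Set.Ioi (0:ℝ), Real.exp (-y + Real.sqrt y) := by
  have h1 : ∫ y in Set.Ioc (0:ℝ) 1, Real.exp (-y + Real.sqrt y) ≤
      ∫ y in Set.Ioi (0:ℝ), Real.exp (-y + Real.sqrt y) := by
    apply setIntegral_mono_set s16_integrable
    · filter_upwards with y using Real.exp_nonneg _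
    · filter_upwards with y hy using hy.1
  have h2 : (Real.exp (-1) : ℝ) ≤ ∫ y in Set.Ioc (0:ℝ) 1, Real.exp (-y + Real.sqrt y) := by
    have := setIntegral_mono_on (integrableOn_const (C := Real.exp (-1)) measure_Ioc_lt_top.ne)
      (s16_integrable.mono_set Set.Ioc_subset_Ioi_self) measurableSet_Ioc
      (fun y (hy : y ∈ Set.Ioc (0:ℝ) 1) => by
        show Real.exp (-1) ≤ Real.exp (-y + Real.sqrt y)
        apply Real.exp_le_exp.2
        have := Real.sqrt_nonneg y
        nlinarith [hy.1, hy.2])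
    simpa using this.trans_eq rfl
  have : (0:ℝ) < Real.exp (-1) := Real.exp_pos _
  linarith


lemma s16_hasDeriv_fX {CX : ℝ} {fX : ℝ → ℝ}
    (hfX : ∀ x, 0 < x → fX x = CX * Real.exp (-x + Real.sqrt x)) {t : ℝ} (ht : 0 < t) :
    HasDerivAt fX (CX * Real.exp (-t + Real.sqrt t) * (-1 + 1/(2*Real.sqrt t))) t := by
  have h1 : HasDerivAt (fun s : ℝ => -s + Real.sqrt s) (-1 + 1/(2*Real.sqrt t)) t :=
    (hasDerivAt_id t).neg.add (Real.hasDerivAt_sqrt ht.ne')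
  have h2 : HasDerivAt (fun s : ℝ => CX * Real.exp (-s + Real.sqrt s))
      (CX * Real.exp (-t + Real.sqrt t) * (-1 + 1/(2*Real.sqrt t))) t := by
    have := (h1.exp).const_mul CX
    simpa [mul_assoc] using this
  refine h2.congr_of_eventuallyEq ?_
  filter_upwards [isOpen_Ioi.mem_nhds ht] with s hs using hfX s hs

lemma s16_deriv_log {CX : ℝ} {fX : ℝ → ℝ} (hCX : 0 < CX)
    (hfX : ∀ x, 0 < x → fX x = CX * Real.exp (-x + Real.sqrt x)) {t : ℝ} (ht : 0 < t) :
    deriv (fun s => Real.log (fX s)) t = -1 + 1/(2*Real.sqrt t) := by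
  have h1 : HasDerivAt (fun s : ℝ => Real.log CX + (-s + Real.sqrt s)) (-1 + 1/(2*Real.sqrt t)) t := by
    simpa using (((hasDerivAt_id t).neg.add (Real.hasDerivAt_sqrt ht.ne')).const_add (Real.log CX))
  have h2 : HasDerivAt (fun s => Real.log (fX s)) (-1 + 1/(2*Real.sqrt t)) t := by
    refine h1.congr_of_eventuallyEq ?_
    filter_upwards [isOpen_Ioi.mem_nhds ht] with s hs
    rw [hfX s hs, Real.log_mul hCX.ne' (Real.exp_ne_zero _), Real.log_exp]
  exact h2.deriv

lemma s16_part1 {CX : ℝ} {fX : ℝ → ℝ} (hCX : 0 < CX)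
    (hfX : ∀ x, 0 < x → fX x = CX * Real.exp (-x + Real.sqrt x)) {x : ℝ} (hx : 0 < x) :
    deriv (deriv (fun t => Real.log (fX t))) x = -(1 / 4) * x ^ (-(3 / 2) : ℝ) := by
  have heq : deriv (fun t => Real.log (fX t)) =ᶠ[nhds x] (fun t => -1 + 1/(2*Real.sqrt t)) := by
    filter_upwards [isOpen_Ioi.mem_nhds hx] with t ht using s16_deriv_log hCX hfX ht
  rw [heq.deriv_eq]
  have hs : Real.sqrt x ≠ 0 := (Real.sqrt_pos.2 hx).ne'
  have h1 : HasDerivAt (fun t : ℝ => 2 * Real.sqrt t) (2 * (1/(2*Real.sqrt x))) x :=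
    (Real.hasDerivAt_sqrt hx.ne').const_mul 2
  have h2 : HasDerivAt (fun t : ℝ => -1 + 1/(2*Real.sqrt t))
      (-(2 * (1/(2*Real.sqrt x))) / (2*Real.sqrt x)^2) x := by
    simpa [one_div] using (h1.inv (by positivity)).const_add (-1 : ℝ)
  rw [h2.deriv]
  have hxs : x ^ (-(3 / 2) : ℝ) = (x * Real.sqrt x)⁻¹ := by
    rw [Real.rpow_neg hx.le, show ((3:ℝ)/2) = 1 + 1/2 by norm_num,
      Real.rpow_add hx, Real.rpow_one, ← Real.sqrt_eq_rpow]
  rw [hxs]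
  have h3 : Real.sqrt x ^ 2 = x := Real.sq_sqrt hx.le
  field_simp
  nlinarith [Real.sqrt_pos.2 hx]

lemma s16_ratio {CX : ℝ} {fX : ℝ → ℝ} (hCX : 0 < CX)
    (hfX : ∀ x, 0 < x → fX x = CX * Real.exp (-x + Real.sqrt x)) {t : ℝ} (ht : 0 < t) :
    deriv fX t / fX t = -1 + 1/(2*Real.sqrt t) := by
  rw [(s16_hasDeriv_fX hfX ht).deriv, hfX t ht]
  have : CX * Real.exp (-t + Real.sqrt t) ≠ 0 := by positivity
  field_simp

lemma s16_part2_eq {CX : ℝ} {fX : ℝ → ℝ} (hCX : 0 < CX)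
    (hfX : ∀ x, 0 < x → fX x = CX * Real.exp (-x + Real.sqrt x)) {x : ℝ}
    (hx : x ∈ Set.Ioo (0:ℝ) (1/2)) {d : ℝ} (hd : 0 < d) :
    d * (deriv fX (d * x) / fX (d * x) - deriv fX (d * (1 - x)) / fX (d * (1 - x))) =
      (1 / 2) * Real.sqrt d * (x ^ (-(1 / 2) : ℝ) - (1 - x) ^ (-(1 / 2) : ℝ)) := by
  have hx0 : 0 < x := hx.1
  have hy0 : 0 < 1 - x := by linarith [hx.2]
  rw [s16_ratio hCX hfX (by positivity : 0 < d * x),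
    s16_ratio hCX hfX (by positivity : 0 < d * (1 - x)),
    Real.sqrt_mul hd.le, Real.sqrt_mul hd.le,
    Real.rpow_neg hx0.le, Real.rpow_neg hy0.le, ← Real.sqrt_eq_rpow, ← Real.sqrt_eq_rpow]
  have hd2 : Real.sqrt d * Real.sqrt d = d := Real.mul_self_sqrt hd.le
  have sx : 0 < Real.sqrt x := Real.sqrt_pos.2 hx0
  have sy : 0 < Real.sqrt (1 - x) := Real.sqrt_pos.2 hy0
  have sd : 0 < Real.sqrt d := Real.sqrt_pos.2 hd
  rw [← hd2]
  field_simp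
  rw [Real.sqrt_sq sd.le]
  ring

lemma s16_part2_tendsto {CX : ℝ} {fX : ℝ → ℝ} (hCX : 0 < CX)
    (hfX : ∀ x, 0 < x → fX x = CX * Real.exp (-x + Real.sqrt x)) {x : ℝ}
    (hx : x ∈ Set.Ioo (0:ℝ) (1/2)) :
    Filter.Tendsto
      (fun d => d * (deriv fX (d * x) / fX (d * x) -
        deriv fX (d * (1 - x)) / fX (d * (1 - x))))
      Filter.atTop Filter.atTop := by
  have hc : 0 < x ^ (-(1 / 2) : ℝ) - (1 - x) ^ (-(1 / 2) : ℝ) := by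
    have h1 : (1 - x) ^ (-(1 / 2) : ℝ) < x ^ (-(1 / 2) : ℝ) :=
      Real.rpow_lt_rpow_of_neg hx.1 (by linarith [hx.2]) (by norm_num)
    linarith
  have h2 : Tendsto (fun d : ℝ => (1 / 2) * Real.sqrt d *
      (x ^ (-(1 / 2) : ℝ) - (1 - x) ^ (-(1 / 2) : ℝ))) atTop atTop := by
    apply Tendsto.atTop_mul_const hc
    have hsq : Tendsto Real.sqrt atTop atTop := by
      apply tendsto_atTop_atTop.2
      intro b
      refine ⟨b^2, fun y hy => ?_⟩
      calc b ≤ |b| := le_abs_self b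
        _ = Real.sqrt (b^2) := (Real.sqrt_sq_eq_abs b).symm
        _ ≤ Real.sqrt y := Real.sqrt_le_sqrt hy
    exact hsq.const_mul_atTop (by norm_num)
  refine h2.congr' ?_
  filter_upwards [eventually_gt_atTop (0:ℝ)] with d hd
  exact (s16_part2_eq hCX hfX hx hd).symm


lemma s16_g_mono {x y : ℝ} (hx : x ∈ Set.Icc (0:ℝ) 1) (hy : y ∈ Set.Icc (0:ℝ) 1)
    (h : (x - 1/2)^2 ≤ (y - 1/2)^2) :
    Real.sqrt y + Real.sqrt (1 - y) ≤ Real.sqrt x + Real.sqrt (1 - x) := by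
  have hx1 : 0 ≤ 1 - x := by linarith [hx.2]
  have hy1 : 0 ≤ 1 - y := by linarith [hy.2]
  have h1 : Real.sqrt y * Real.sqrt (1 - y) ≤ Real.sqrt x * Real.sqrt (1 - x) := by
    rw [← Real.sqrt_mul hy.1, ← Real.sqrt_mul hx.1]
    exact Real.sqrt_le_sqrt (by nlinarith)
  have key : (Real.sqrt y + Real.sqrt (1 - y))^2 ≤ (Real.sqrt x + Real.sqrt (1 - x))^2 := by
    have e1 := Real.sq_sqrt hx.1
    have e2 := Real.sq_sqrt hx1
    have e3 := Real.sq_sqrt hy.1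
    have e4 := Real.sq_sqrt hy1
    nlinarith [h1]
  have ha : 0 ≤ Real.sqrt y + Real.sqrt (1 - y) := by positivity
  have hb : 0 ≤ Real.sqrt x + Real.sqrt (1 - x) := by positivity
  calc Real.sqrt y + Real.sqrt (1 - y) = Real.sqrt ((Real.sqrt y + Real.sqrt (1-y))^2) :=
        (Real.sqrt_sq ha).symm
    _ ≤ Real.sqrt ((Real.sqrt x + Real.sqrt (1-x))^2) := Real.sqrt_le_sqrt key
    _ = _ := Real.sqrt_sq hb

lemma s16_g_strict {x y : ℝ} (hx : x ∈ Set.Icc (0:ℝ) 1) (hy : y ∈ Set.Icc (0:ℝ) 1)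
    (h : (x - 1/2)^2 < (y - 1/2)^2) :
    Real.sqrt y + Real.sqrt (1 - y) < Real.sqrt x + Real.sqrt (1 - x) := by
  have hx1 : 0 ≤ 1 - x := by linarith [hx.2]
  have hy1 : 0 ≤ 1 - y := by linarith [hy.2]
  have h1 : Real.sqrt y * Real.sqrt (1 - y) < Real.sqrt x * Real.sqrt (1 - x) := by
    rw [← Real.sqrt_mul hy.1, ← Real.sqrt_mul hx.1]
    exact Real.sqrt_lt_sqrt (mul_nonneg hy.1 hy1) (by nlinarith)
  have key : (Real.sqrt y + Real.sqrt (1 - y))^2 < (Real.sqrt x + Real.sqrt (1 - x))^2 := by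
    have e1 := Real.sq_sqrt hx.1
    have e2 := Real.sq_sqrt hx1
    have e3 := Real.sq_sqrt hy.1
    have e4 := Real.sq_sqrt hy1
    nlinarith [h1]
  have ha : 0 ≤ Real.sqrt y + Real.sqrt (1 - y) := by positivity
  calc Real.sqrt y + Real.sqrt (1 - y) = Real.sqrt ((Real.sqrt y + Real.sqrt (1-y))^2) :=
        (Real.sqrt_sq ha).symm
    _ < Real.sqrt ((Real.sqrt x + Real.sqrt (1-x))^2) := Real.sqrt_lt_sqrt (by positivity) key
    _ = _ := Real.sqrt_sq (by positivity)

lemma s16_num_eq {CX : ℝ} {fX : ℝ → ℝ}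
    (hfX : ∀ x, 0 < x → fX x = CX * Real.exp (-x + Real.sqrt x)) {d : ℝ} (hd : 0 < d)
    {x : ℝ} (hx : x ∈ Set.Ioo (0:ℝ) 1) :
    fX (d * x) * fX (d * (1 - x)) =
      CX^2 * Real.exp (-d + Real.sqrt d * (Real.sqrt x + Real.sqrt (1 - x))) := by
  have h1 : 0 < d * x := by nlinarith [hx.1]
  have h2 : 0 < d * (1 - x) := by nlinarith [hx.2]
  have harg : (-(d*x) + Real.sqrt (d*x)) + (-(d*(1-x)) + Real.sqrt (d*(1-x))) =
      -d + Real.sqrt d * (Real.sqrt x + Real.sqrt (1 - x)) := by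
    rw [Real.sqrt_mul hd.le, Real.sqrt_mul hd.le]; ring
  calc fX (d*x) * fX (d*(1-x))
      = CX^2 * Real.exp ((-(d*x) + Real.sqrt (d*x)) + (-(d*(1-x)) + Real.sqrt (d*(1-x)))) := by
        rw [hfX _ h1, hfX _ h2, show
          CX * Real.exp (-(d*x) + Real.sqrt (d*x)) *
            (CX * Real.exp (-(d*(1-x)) + Real.sqrt (d*(1-x)))) =
          CX^2 * (Real.exp (-(d*x) + Real.sqrt (d*x)) *
            Real.exp (-(d*(1-x)) + Real.sqrt (d*(1-x)))) from by ring, ← Real.exp_add]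
    _ = _ := by rw [harg]

lemma s16_part3 {CX : ℝ} {fX : ℝ → ℝ} {fZ : ℝ → ℝ → ℝ} {μ : ℝ → Measure ℝ}
    (hCX : 0 < CX)
    (hfX : ∀ x, 0 < x → fX x = CX * Real.exp (-x + Real.sqrt x))
    (hfZ : ∀ d : ℝ, ∀ x ∈ Set.Ioo (0 : ℝ) 1, fZ d x =
      fX (d * x) * fX (d * (1 - x)) / ∫ y in (0 : ℝ)..1, fX (d * y) * fX (d * (1 - y)))
    (hμ : ∀ d, μ d = (volume.restrict (Set.Icc (0 : ℝ) 1)).withDensity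
      (fun x => ENNReal.ofReal (fZ d x)))
    (hprob : ∀ d > (0 : ℝ), IsProbabilityMeasure (μ d))
    (A : Set ℝ) (hA : IsOpen A) :
    Measure.dirac (1 / 2 : ℝ) A ≤ Filter.liminf (fun d => μ d A) Filter.atTop := by
  rw [Measure.dirac_apply' _ hA.measurableSet]
  by_cases hmem : (1/2 : ℝ) ∈ A
  swap
  · rw [Set.indicator_of_notMem hmem]
    exact zero_le
  rw [Set.indicator_of_mem hmem, Pi.one_apply]
  obtain ⟨r, hr, hball⟩ := Metric.isOpen_iff.1 hA _ hmem
  set ε : ℝ := min (r/2) (1/4) with hεdef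
  have hε0 : 0 < ε := lt_min (by linarith) (by norm_num)
  have hε4 : ε ≤ 1/4 := min_le_right _ _
  have hεr : ε < r := lt_of_le_of_lt (min_le_left _ _) (by linarith)
  set I : Set ℝ := Set.Ioo (1/2 - ε) (1/2 + ε) with hIdef
  have hImeas : MeasurableSet I := measurableSet_Ioo
  have hIA : I ⊆ A := by
    intro y hy
    apply hball
    rw [Metric.mem_ball, Real.dist_eq, abs_lt]
    exact ⟨by linarith [hy.1], by linarith [hy.2]⟩
  set g : ℝ → ℝ := fun x => Real.sqrt x + Real.sqrt (1 - x) with hgdef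
  set c1 : ℝ := g (1/2 - ε/2) with hc1
  set c2 : ℝ := g (1/2 - ε) with hc2
  have hc21 : c2 < c1 := by
    apply s16_g_strict (x := 1/2 - ε/2) (y := 1/2 - ε)
      (by constructor <;> linarith) (by constructor <;> linarith)
    nlinarith [hε0]
  -- lower bound on the normalizing constant
  have hZ : ∀ d : ℝ, 0 < d →
      ε * (CX^2 * Real.exp (-d + Real.sqrt d * c1)) ≤
        ∫ y in (0:ℝ)..1, fX (d * y) * fX (d * (1 - y)) := by
    intro d hd
    set F : ℝ → ℝ := fun y => CX^2 * Real.exp (-d + Real.sqrt d * g y) with hF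
    have hFcont : Continuous F := by
      apply continuous_const.mul
      apply Real.continuous_exp.comp
      exact continuous_const.add (continuous_const.mul
        (Real.continuous_sqrt.add (Real.continuous_sqrt.comp (continuous_const.sub continuous_id))))
    have hFint : IntegrableOn F (Set.Ioc (0:ℝ) 1) := hFcont.integrableOn_Ioc
    have hae1 : ∀ᵐ y : ℝ ∂volume, y ≠ 1 := ae_iff.2 (by simpa using measure_singleton (1:ℝ))
    have hnumF : (fun y => fX (d*y) * fX (d*(1-y))) =ᵐ[volume.restrict (Set.Ioc (0:ℝ) 1)] F := by
      filter_upwards [ae_restrict_mem measurableSet_Ioc, ae_restrict_of_ae hae1] with y hy hy1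
      exact s16_num_eq hfX hd ⟨hy.1, lt_of_le_of_ne hy.2 hy1⟩
    have hnumint : IntegrableOn (fun y => fX (d*y) * fX (d*(1-y))) (Set.Ioc (0:ℝ) 1) :=
      hFint.congr hnumF.symm
    have hnn : 0 ≤ᵐ[volume.restrict (Set.Ioc (0:ℝ) 1)] (fun y => fX (d*y) * fX (d*(1-y))) := by
      filter_upwards [hnumF] with y hy
      rw [hy]; positivity
    have hsub : Set.Ioc (1/2 - ε/2) (1/2 + ε/2) ⊆ Set.Ioc (0:ℝ) 1 :=
      Set.Ioc_subset_Ioc (by linarith) (by linarith)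
    have key1 : ∫ y in Set.Ioc (1/2 - ε/2) (1/2 + ε/2), fX (d*y) * fX (d*(1-y)) ≤
        ∫ y in Set.Ioc (0:ℝ) 1, fX (d*y) * fX (d*(1-y)) :=
      setIntegral_mono_set hnumint hnn (HasSubset.Subset.eventuallyLE hsub)
    have key2 : ε * (CX^2 * Real.exp (-d + Real.sqrt d * c1)) ≤
        ∫ y in Set.Ioc (1/2 - ε/2) (1/2 + ε/2), fX (d*y) * fX (d*(1-y)) := by
      rw [setIntegral_congr_fun measurableSet_Ioc
        (fun y (hy : y ∈ Set.Ioc (1/2 - ε/2) (1/2 + ε/2)) =>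
          s16_num_eq hfX hd ⟨by linarith [hy.1], by linarith [hy.2]⟩)]
      have hpt : ∀ y ∈ Set.Ioc (1/2 - ε/2) (1/2 + ε/2),
          CX^2 * Real.exp (-d + Real.sqrt d * c1) ≤ F y := by
        intro y hy
        have hgy : c1 ≤ g y := s16_g_mono (x := y) (y := 1/2 - ε/2)
          ⟨by linarith [hy.1], by linarith [hy.2]⟩ (by constructor <;> linarith)
          (by nlinarith [hy.1, hy.2])
        have h1 : Real.sqrt d * c1 ≤ Real.sqrt d * g y :=
          mul_le_mul_of_nonneg_left hgy (Real.sqrt_nonneg d)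
        have h2 := Real.exp_le_exp.2 (show -d + Real.sqrt d * c1 ≤ -d + Real.sqrt d * g y by linarith)
        exact mul_le_mul_of_nonneg_left h2 (by positivity)
      have hconst := setIntegral_mono_on
        (integrableOn_const measure_Ioc_lt_top.ne)
        (hFint.mono_set hsub) measurableSet_Ioc hpt
      have hval : ∫ _y in Set.Ioc (1/2 - ε/2) (1/2 + ε/2),
          (CX^2 * Real.exp (-d + Real.sqrt d * c1)) ∂volume =
          ε * (CX^2 * Real.exp (-d + Real.sqrt d * c1)) := by
        rw [setIntegral_const, Real.volume_real_Ioc, smul_eq_mul,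
          max_eq_left (by linarith)]
        ring_nf
      rw [hval] at hconst
      exact hconst
    rw [intervalIntegral.integral_of_le (by norm_num : (0:ℝ) ≤ 1)]
    exact key2.trans key1
  -- pointwise bound on the complement of I
  have hB : ∀ d : ℝ, 0 < d → ∀ x, x ∈ Set.Ioo (0:ℝ) 1 \ I →
      fZ d x ≤ Real.exp (Real.sqrt d * (c2 - c1)) / ε := by
    intro d hd x hx
    rw [hfZ d x hx.1, s16_num_eq hfX hd hx.1]
    have hgx : g x ≤ c2 := by
      apply s16_g_mono (x := 1/2 - ε) (y := x) (by constructor <;> linarith)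
        ⟨hx.1.1.le, hx.1.2.le⟩
      have hnI := hx.2
      rw [hIdef, Set.mem_Ioo, not_and_or, not_lt, not_lt] at hnI
      rcases hnI with h | h <;> nlinarith
    have hnum_le : CX^2 * Real.exp (-d + Real.sqrt d * g x) ≤
        CX^2 * Real.exp (-d + Real.sqrt d * c2) := by
      have h1 : Real.sqrt d * g x ≤ Real.sqrt d * c2 :=
        mul_le_mul_of_nonneg_left hgx (Real.sqrt_nonneg d)
      have h2 := Real.exp_le_exp.2 (show -d + Real.sqrt d * g x ≤ -d + Real.sqrt d * c2 by linarith)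
      exact mul_le_mul_of_nonneg_left h2 (by positivity)
    calc CX^2 * Real.exp (-d + Real.sqrt d * g x) /
          ∫ y in (0:ℝ)..1, fX (d * y) * fX (d * (1 - y))
        ≤ CX^2 * Real.exp (-d + Real.sqrt d * c2) /
            (ε * (CX^2 * Real.exp (-d + Real.sqrt d * c1))) :=
          div_le_div₀ (by positivity) hnum_le (by positivity) (hZ d hd)
      _ = Real.exp (Real.sqrt d * (c2 - c1)) / ε := by
          rw [show Real.sqrt d * (c2 - c1) =
            (-d + Real.sqrt d * c2) - (-d + Real.sqrt d * c1) by ring, Real.exp_sub]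
          have e1 := Real.exp_pos (-d + Real.sqrt d * c1)
          field_simp
  -- measure of the complement is small
  have hmc : MeasurableSet Iᶜ := hImeas.compl
  have hμc : ∀ d : ℝ, 0 < d →
      μ d Iᶜ ≤ ENNReal.ofReal (Real.exp (Real.sqrt d * (c2 - c1)) / ε) := by
    intro d hd
    rw [hμ d, withDensity_apply _ hmc, Measure.restrict_restrict hmc]
    calc ∫⁻ x in Iᶜ ∩ Set.Icc 0 1, ENNReal.ofReal (fZ d x) ∂volume
        ≤ ∫⁻ _x in Iᶜ ∩ Set.Icc 0 1,
            ENNReal.ofReal (Real.exp (Real.sqrt d * (c2 - c1)) / ε) ∂volume := by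
          apply lintegral_mono_ae
          have hae0 : ∀ᵐ x : ℝ ∂volume, x ≠ 0 := ae_iff.2 (by simpa using measure_singleton (0:ℝ))
          have hae1 : ∀ᵐ x : ℝ ∂volume, x ≠ 1 := ae_iff.2 (by simpa using measure_singleton (1:ℝ))
          filter_upwards [ae_restrict_mem (hmc.inter measurableSet_Icc),
            ae_restrict_of_ae hae0, ae_restrict_of_ae hae1] with x hx hx0 hx1
          apply ENNReal.ofReal_le_ofReal
          exact hB d hd x ⟨⟨lt_of_le_of_ne hx.2.1 (Ne.symm hx0),
            lt_of_le_of_ne hx.2.2 hx1⟩, hx.1⟩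
      _ = ENNReal.ofReal (Real.exp (Real.sqrt d * (c2 - c1)) / ε) *
            volume (Iᶜ ∩ Set.Icc 0 1) := setLIntegral_const _ _
      _ ≤ ENNReal.ofReal (Real.exp (Real.sqrt d * (c2 - c1)) / ε) * 1 :=
          mul_le_mul_right (le_trans (measure_mono Set.inter_subset_right)
            (by simp [Real.volume_Icc])) _
      _ = _ := mul_one _
  -- limits
  have hsq : Tendsto Real.sqrt atTop atTop := by
    apply tendsto_atTop_atTop.2
    intro b
    refine ⟨b^2, fun y hy => ?_⟩
    calc b ≤ |b| := le_abs_self b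
      _ = Real.sqrt (b^2) := (Real.sqrt_sq_eq_abs b).symm
      _ ≤ Real.sqrt y := Real.sqrt_le_sqrt hy
  have hexp : Tendsto (fun d : ℝ => Real.exp (Real.sqrt d * (c2 - c1)) / ε) atTop (nhds 0) := by
    have h1 : Tendsto (fun d : ℝ => Real.sqrt d * (c2 - c1)) atTop atBot :=
      hsq.atTop_mul_const_of_neg (by linarith)
    have h2 := Real.tendsto_exp_atBot.comp h1
    have h3 := h2.div_const ε
    simpa using h3
  have hbound : Tendsto (fun d : ℝ =>
      ENNReal.ofReal (Real.exp (Real.sqrt d * (c2 - c1)) / ε)) atTop (nhds 0) := by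
    have := (ENNReal.continuous_ofReal.tendsto 0).comp hexp
    simpa [Function.comp_def] using this
  have hcompl : Tendsto (fun d => μ d Iᶜ) atTop (nhds 0) := by
    apply tendsto_of_tendsto_of_tendsto_of_le_of_le' tendsto_const_nhds hbound
    · filter_upwards with d using zero_le
    · filter_upwards [eventually_gt_atTop (0:ℝ)] with d hd using hμc d hd
  have hIt : Tendsto (fun d => μ d I) atTop (nhds 1) := by
    have h1 : Tendsto (fun d : ℝ => 1 - μ d Iᶜ) atTop (nhds 1) := by
      have := ENNReal.Tendsto.sub
        (tendsto_const_nhds : Tendsto (fun _ : ℝ => (1:ℝ≥0∞)) atTop (nhds 1)) hcompl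
        (Or.inl ENNReal.one_ne_top)
      simpa using this
    apply h1.congr'
    filter_upwards [eventually_gt_atTop (0:ℝ)] with d hd
    have := hprob d hd
    have h2 := prob_compl_eq_one_sub (μ := μ d) hmc
    rw [compl_compl] at h2
    exact h2.symm
  have hev : ∀ᶠ d in atTop, μ d I ≤ μ d A :=
    Filter.Eventually.of_forall fun d => measure_mono hIA
  calc (1:ℝ≥0∞) = liminf (fun d => μ d I) atTop := hIt.liminf_eq.symm
    _ ≤ liminf (fun d => μ d A) atTop := liminf_le_liminf hev
/-- For `f_X(x) = C_X·exp(−x+√x)`: `(log f_X)''(x) = −(1/4)x^{−3/2} < 0`,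
`d·(f_X'(dx)/f_X(dx) − f_X'(d(1−x))/f_X(d(1−x))) = (1/2)√d·(x^{−1/2} − (1−x)^{−1/2}) → ∞`
for `x ∈ (0,1/2)`, and `μ_d → δ_{1/2}` in distribution. -/
theorem stmt_16
    (CX : ℝ)
    (hCX : CX = (∫ y in Set.Ioi (0 : ℝ), Real.exp (-y + Real.sqrt y))⁻¹)
    (fX : ℝ → ℝ)
    (hfX : ∀ x, 0 < x → fX x = CX * Real.exp (-x + Real.sqrt x))
    (fZ : ℝ → ℝ → ℝ)
    (hfZ : ∀ d : ℝ, ∀ x ∈ Set.Ioo (0 : ℝ) 1, fZ d x =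
      fX (d * x) * fX (d * (1 - x)) / ∫ y in (0 : ℝ)..1, fX (d * y) * fX (d * (1 - y)))
    (μ : ℝ → Measure ℝ)
    (hμ : ∀ d, μ d = (volume.restrict (Set.Icc (0 : ℝ) 1)).withDensity
      (fun x => ENNReal.ofReal (fZ d x)))
    (hprob : ∀ d > (0 : ℝ), IsProbabilityMeasure (μ d)) :
    (∀ x > (0 : ℝ),
      deriv (deriv (fun t => Real.log (fX t))) x = -(1 / 4) * x ^ (-(3 / 2) : ℝ) ∧
      deriv (deriv (fun t => Real.log (fX t))) x < 0) ∧
    (∀ x ∈ Set.Ioo (0 : ℝ) (1 / 2),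
      (∀ d > (0 : ℝ),
        d * (deriv fX (d * x) / fX (d * x) - deriv fX (d * (1 - x)) / fX (d * (1 - x))) =
          (1 / 2) * Real.sqrt d * (x ^ (-(1 / 2) : ℝ) - (1 - x) ^ (-(1 / 2) : ℝ))) ∧
      Filter.Tendsto
        (fun d => d * (deriv fX (d * x) / fX (d * x) -
          deriv fX (d * (1 - x)) / fX (d * (1 - x))))
        Filter.atTop Filter.atTop) ∧
    (∀ A : Set ℝ, IsOpen A →
      Measure.dirac (1 / 2 : ℝ) A ≤ Filter.liminf (fun d => μ d A) Filter.atTop) := by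
  have hCXpos : 0 < CX := by rw [hCX]; exact inv_pos.2 s16_int_pos
  refine ⟨fun x hx => ⟨s16_part1 hCXpos hfX hx, ?_⟩,
    fun x hx => ⟨fun d hd => s16_part2_eq hCXpos hfX hx hd, s16_part2_tendsto hCXpos hfX hx⟩,
    fun A hA => s16_part3 hCXpos hfX hfZ hμ hprob A hA⟩
  rw [s16_part1 hCXpos hfX hx]
  have : 0 < x ^ (-(3/2) : ℝ) := Real.rpow_pos_of_pos hx _
  linarith
end

section
/- Let f_Y(x) = C_Y·exp(−x − √x) for x > 0, where C_Y⁻¹ = ∫₀^∞ exp(−y − √y) dy, define f_{Z_d}(x) = f_Y(dx)·f_Y(d(1−x)) / ∫₀¹ f_Y(dy)·f_Y(d(1−y)) dy for x ∈ (0,1), and let μ_d be the probability measure on [0,1] with density f_{Z_d}. Then (d²/dx²) log f_Y(x) = (1/4)·x^{−3/2} > 0 for all x > 0, and for every x ∈ (0,1/2) one has d·( f_Y'(dx)/f_Y(dx) − f_Y'(d(1−x))/f_Y(d(1−x)) ) = (1/2)·√d·( −x^{−1/2} + (1−x)^{−1/2} ) → −∞ as d → ∞, and consequently μ_d converges in distribution,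 as d → ∞, to the measure (1/2)·δ_0 + (1/2)·δ_1. -/
open MeasureTheory Real Filter Set
open scoped ENNReal

lemma aux_sqrt_tendsto : Tendsto (fun d : ℝ => Real.sqrt d) atTop atTop := by
  apply tendsto_atTop_atTop.mpr
  intro b
  refine ⟨(max b 0) ^ 2, fun a ha => le_trans (le_max_left b 0) ?_⟩
  rw [← Real.sqrt_sq (le_max_right b 0)]
  exact Real.sqrt_le_sqrt ha

lemma aux_logderiv (CY : ℝ) (hCYpos : 0 < CY) (fY : ℝ → ℝ)
    (hfY : ∀ x, 0 < x → fY x = CY * Real.exp (-x - Real.sqrt x)) :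
    ∀ x > (0 : ℝ), deriv (fun t => Real.log (fY t)) x = -1 - 1 / (2 * Real.sqrt x) := by
  intro x hx
  have hev : (fun t => Real.log (fY t)) =ᶠ[nhds x]
      (fun t => Real.log CY + (-t - Real.sqrt t)) := by
    filter_upwards [Ioi_mem_nhds hx] with t ht
    rw [hfY t ht, Real.log_mul (ne_of_gt hCYpos) (Real.exp_ne_zero _), Real.log_exp]
  rw [hev.deriv_eq]
  have h1 : HasDerivAt (fun t : ℝ => Real.log CY + (-t - Real.sqrt t))
      (-1 - 1 / (2 * Real.sqrt x)) x := by
    have := ((hasDerivAt_id x).neg.sub (Real.hasDerivAt_sqrt (ne_of_gt hx))).const_add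
      (Real.log CY)
    simpa using this
  exact h1.deriv

lemma aux_fYderiv (CY : ℝ) (hCYpos : 0 < CY) (fY : ℝ → ℝ)
    (hfY : ∀ x, 0 < x → fY x = CY * Real.exp (-x - Real.sqrt x)) :
    ∀ x > (0 : ℝ), deriv fY x / fY x = -1 - 1 / (2 * Real.sqrt x) := by
  intro x hx
  have hev : fY =ᶠ[nhds x] (fun t => CY * Real.exp (-t - Real.sqrt t)) := by
    filter_upwards [Ioi_mem_nhds hx] with t ht
    exact hfY t ht
  have h1 : HasDerivAt (fun t : ℝ => CY * Real.exp (-t - Real.sqrt t))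
      (CY * (Real.exp (-x - Real.sqrt x) * (-1 - 1 / (2 * Real.sqrt x)))) x := by
    exact (((hasDerivAt_id x).neg.sub (Real.hasDerivAt_sqrt (ne_of_gt hx))).exp).const_mul CY
      |>.congr_deriv (by
        have hs : Real.sqrt x ≠ 0 := ne_of_gt (Real.sqrt_pos.mpr hx)
        simp only [Pi.sub_apply, Pi.neg_apply, id_eq]
        try field_simp
        try ring)
  rw [hev.deriv_eq, h1.deriv, hfY x hx]
  have hne : CY * Real.exp (-x - Real.sqrt x) ≠ 0 :=
    mul_ne_zero (ne_of_gt hCYpos) (Real.exp_ne_zero _)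
  field_simp

lemma aux_logderiv2 (CY : ℝ) (hCYpos : 0 < CY) (fY : ℝ → ℝ)
    (hfY : ∀ x, 0 < x → fY x = CY * Real.exp (-x - Real.sqrt x)) :
    ∀ x > (0 : ℝ), deriv (deriv (fun t => Real.log (fY t))) x
      = (1 / 4) * x ^ (-(3 / 2) : ℝ) := by
  intro x hx
  have hev : (deriv (fun t => Real.log (fY t))) =ᶠ[nhds x]
      (fun t => -1 - (1 / 2) * t ^ (-(1 / 2) : ℝ)) := by
    filter_upwards [Ioi_mem_nhds hx] with t ht
    rw [aux_logderiv CY hCYpos fY hfY t ht]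
    have hs : Real.sqrt t ≠ 0 := ne_of_gt (Real.sqrt_pos.mpr ht)
    rw [Real.rpow_neg (le_of_lt ht), ← Real.sqrt_eq_rpow]
    field_simp
  rw [hev.deriv_eq]
  have h1 : HasDerivAt (fun t : ℝ => -1 - (1 / 2) * t ^ (-(1 / 2) : ℝ))
      ((1 / 4) * x ^ (-(3 / 2) : ℝ)) x := by
    have h2 := ((Real.hasDerivAt_rpow_const (p := (-(1 / 2) : ℝ))
      (Or.inl (ne_of_gt hx))).const_mul (1 / 2)).const_sub (-1 : ℝ)
    refine HasDerivAt.congr_deriv h2 ?_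
    rw [show (-(1 / 2) : ℝ) - 1 = -(3 / 2) by norm_num]
    ring
  exact h1.deriv

lemma aux_identity (CY : ℝ) (hCYpos : 0 < CY) (fY : ℝ → ℝ)
    (hfY : ∀ x, 0 < x → fY x = CY * Real.exp (-x - Real.sqrt x))
    (x : ℝ) (hx : x ∈ Set.Ioo (0 : ℝ) (1 / 2)) :
    ∀ d > (0 : ℝ),
      d * (deriv fY (d * x) / fY (d * x) - deriv fY (d * (1 - x)) / fY (d * (1 - x))) =
        (1 / 2) * Real.sqrt d * (-x ^ (-(1 / 2) : ℝ) + (1 - x) ^ (-(1 / 2) : ℝ)) := by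
  intro d hd
  obtain ⟨hx0, hx2⟩ := hx
  have hx1 : x < 1 := lt_trans hx2 (by norm_num)
  have h1x : 0 < 1 - x := by linarith
  rw [aux_fYderiv CY hCYpos fY hfY _ (mul_pos hd hx0),
    aux_fYderiv CY hCYpos fY hfY _ (mul_pos hd h1x)]
  rw [Real.sqrt_mul (le_of_lt hd) x, Real.sqrt_mul (le_of_lt hd) (1 - x)]
  rw [Real.rpow_neg (le_of_lt hx0), ← Real.sqrt_eq_rpow,
    Real.rpow_neg (le_of_lt h1x), ← Real.sqrt_eq_rpow]
  have hsd : Real.sqrt d ≠ 0 := ne_of_gt (Real.sqrt_pos.mpr hd)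
  have hsx : Real.sqrt x ≠ 0 := ne_of_gt (Real.sqrt_pos.mpr hx0)
  have hs1x : Real.sqrt (1 - x) ≠ 0 := ne_of_gt (Real.sqrt_pos.mpr h1x)
  set s := Real.sqrt d with hs
  have hd2 : d = s * s := (Real.mul_self_sqrt (le_of_lt hd)).symm
  rw [hd2]
  field_simp
  ring

lemma aux_tendsto (CY : ℝ) (hCYpos : 0 < CY) (fY : ℝ → ℝ)
    (hfY : ∀ x, 0 < x → fY x = CY * Real.exp (-x - Real.sqrt x))
    (x : ℝ) (hx : x ∈ Set.Ioo (0 : ℝ) (1 / 2)) :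
    Filter.Tendsto
      (fun d => d * (deriv fY (d * x) / fY (d * x) -
        deriv fY (d * (1 - x)) / fY (d * (1 - x))))
      Filter.atTop Filter.atBot := by
  obtain ⟨hx0, hx2⟩ := hx
  have h1x : 0 < 1 - x := by linarith
  have hlt : x < 1 - x := by linarith
  have hr : (1 / 2) * (-x ^ (-(1 / 2) : ℝ) + (1 - x) ^ (-(1 / 2) : ℝ)) < 0 := by
    have := Real.rpow_lt_rpow_of_neg hx0 hlt (by norm_num : (-(1 / 2) : ℝ) < 0)
    nlinarith
  have hmain : Tendsto (fun d : ℝ => Real.sqrt d *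
      ((1 / 2) * (-x ^ (-(1 / 2) : ℝ) + (1 - x) ^ (-(1 / 2) : ℝ)))) atTop atBot :=
    aux_sqrt_tendsto.atTop_mul_const_of_neg hr
  apply hmain.congr'
  filter_upwards [eventually_gt_atTop (0 : ℝ)] with d hd
  rw [aux_identity CY hCYpos fY hfY x ⟨hx0, hx2⟩ d hd]
  ring

lemma aux_CY_pos : 0 < (∫ y in Set.Ioi (0 : ℝ), Real.exp (-y - Real.sqrt y))⁻¹ := by
  have hint : IntegrableOn (fun y : ℝ => Real.exp (-y - Real.sqrt y)) (Set.Ioi 0) volume := by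
    apply Integrable.mono (exp_neg_integrableOn_Ioi 0 one_pos)
    · exact (Continuous.aestronglyMeasurable (by continuity)).restrict
    · filter_upwards [ae_restrict_mem measurableSet_Ioi] with y hy
      rw [Real.norm_eq_abs, Real.norm_eq_abs, abs_of_pos (Real.exp_pos _),
        abs_of_pos (Real.exp_pos _)]
      apply Real.exp_le_exp.mpr
      have := Real.sqrt_nonneg y
      linarith
  have hpos : 0 < ∫ y in Set.Ioi (0 : ℝ), Real.exp (-y - Real.sqrt y) := by
    rw [setIntegral_pos_iff_support_of_nonneg_ae ?_ hint]
    · have : Function.support (fun y : ℝ => Real.exp (-y - Real.sqrt y)) = Set.univ := by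
        ext y; simp [Function.mem_support, Real.exp_ne_zero]
      rw [this, Set.univ_inter]
      simp [Real.volume_Ioi]
    · filter_upwards with y using le_of_lt (Real.exp_pos _)
  exact inv_pos.mpr hpos

noncomputable def auxF (CY d y : ℝ) : ℝ :=
  CY ^ 2 * Real.exp (-d - Real.sqrt d * (Real.sqrt y + Real.sqrt (1 - y)))

noncomputable def auxD (CY d : ℝ) : ℝ := ∫ y in (0:ℝ)..1, auxF CY d y

lemma auxF_cont (CY d : ℝ) : Continuous (auxF CY d) := by
  unfold auxF; continuity

lemma auxF_pos (CY d y : ℝ) (hCY : 0 < CY) : 0 < auxF CY d y :=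
  mul_pos (pow_pos hCY 2) (Real.exp_pos _)

lemma auxF_symm (CY d y : ℝ) : auxF CY d (1 - y) = auxF CY d y := by
  unfold auxF; ring_nf

lemma auxF_eq (CY : ℝ) (fY : ℝ → ℝ)
    (hfY : ∀ x, 0 < x → fY x = CY * Real.exp (-x - Real.sqrt x))
    {d y : ℝ} (hd : 0 < d) (hy : y ∈ Set.Ioo (0:ℝ) 1) :
    fY (d * y) * fY (d * (1 - y)) = auxF CY d y := by
  obtain ⟨hy0, hy1⟩ := hy
  rw [hfY _ (mul_pos hd hy0), hfY _ (mul_pos hd (by linarith))]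
  unfold auxF
  rw [Real.sqrt_mul (le_of_lt hd) y, Real.sqrt_mul (le_of_lt hd) (1 - y)]
  rw [show CY * Real.exp (-(d * y) - Real.sqrt d * Real.sqrt y) *
      (CY * Real.exp (-(d * (1 - y)) - Real.sqrt d * Real.sqrt (1 - y)))
    = CY ^ 2 * (Real.exp (-(d * y) - Real.sqrt d * Real.sqrt y) *
      Real.exp (-(d * (1 - y)) - Real.sqrt d * Real.sqrt (1 - y))) by ring, ← Real.exp_add]
  ring_nf

lemma auxD_eq (CY : ℝ) (fY : ℝ → ℝ)
    (hfY : ∀ x, 0 < x → fY x = CY * Real.exp (-x - Real.sqrt x))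
    {d : ℝ} (hd : 0 < d) :
    (∫ y in (0:ℝ)..1, fY (d * y) * fY (d * (1 - y))) = auxD CY d := by
  unfold auxD
  apply intervalIntegral.integral_congr_ae
  have h1 : ∀ᵐ y : ℝ ∂volume, y ≠ 1 := by
    have : volume ({1} : Set ℝ) = 0 := volume_singleton
    filter_upwards [measure_eq_zero_iff_ae_notMem.mp this] with y hy
    simpa using hy
  filter_upwards [h1] with y hy1 hy
  rw [Set.uIoc_of_le (by norm_num : (0:ℝ) ≤ 1)] at hy
  exact auxF_eq CY fY hfY hd ⟨hy.1, lt_of_le_of_ne hy.2 hy1⟩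

lemma key_density (CY : ℝ) (fY : ℝ → ℝ)
    (hfY : ∀ x, 0 < x → fY x = CY * Real.exp (-x - Real.sqrt x))
    (fZ : ℝ → ℝ → ℝ)
    (hfZ : ∀ d : ℝ, ∀ x ∈ Set.Ioo (0 : ℝ) 1, fZ d x =
      fY (d * x) * fY (d * (1 - x)) / ∫ y in (0 : ℝ)..1, fY (d * y) * fY (d * (1 - y)))
    {d : ℝ} (hd : 0 < d) :
    (volume.restrict (Set.Icc (0 : ℝ) 1)).withDensity (fun x => ENNReal.ofReal (fZ d x))
      = (volume.restrict (Set.Icc (0 : ℝ) 1)).withDensity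
        (fun x => ENNReal.ofReal (auxF CY d x / auxD CY d)) := by
  apply withDensity_congr_ae
  have h01 : ∀ᵐ x : ℝ ∂(volume.restrict (Set.Icc (0:ℝ) 1)), x ∈ Set.Ioo (0:ℝ) 1 := by
    have hz : (volume.restrict (Set.Icc (0:ℝ) 1)) ({0, 1} : Set ℝ) = 0 := by
      rw [Measure.restrict_apply (by measurability)]
      exact measure_mono_null Set.inter_subset_left ((Set.toFinite _).measure_zero volume)
    have hmem : ∀ᵐ x : ℝ ∂(volume.restrict (Set.Icc (0:ℝ) 1)), x ∈ Set.Icc (0:ℝ) 1 :=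
      ae_restrict_mem measurableSet_Icc
    filter_upwards [hmem, measure_eq_zero_iff_ae_notMem.mp hz] with x hx hx01
    simp only [Set.mem_insert_iff, Set.mem_singleton_iff, not_or] at hx01
    exact ⟨lt_of_le_of_ne hx.1 (Ne.symm hx01.1), lt_of_le_of_ne hx.2 hx01.2⟩
  filter_upwards [h01] with x hx
  rw [hfZ d x hx, auxF_eq CY fY hfY hd hx, auxD_eq CY fY hfY hd]

lemma auxD_lower (CY : ℝ) (hCY : 0 < CY) {d η : ℝ} (hd : 0 < d) (hη : 0 < η) (hη1 : η ≤ 1) :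
    η * (CY ^ 2 * Real.exp (-d - Real.sqrt d * (1 + Real.sqrt η))) ≤ auxD CY d := by
  have hInt : ∀ a b : ℝ, IntervalIntegrable (auxF CY d) volume a b := fun a b =>
    (auxF_cont CY d).intervalIntegrable a b
  have step2 : η * (CY ^ 2 * Real.exp (-d - Real.sqrt d * (1 + Real.sqrt η)))
      ≤ ∫ y in (0:ℝ)..η, auxF CY d y := by
    have hmono := intervalIntegral.integral_mono_on (le_of_lt hη)
      (intervalIntegrable_const
        (c := CY ^ 2 * Real.exp (-d - Real.sqrt d * (1 + Real.sqrt η)))) (hInt 0 η) ?_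
    · rw [intervalIntegral.integral_const] at hmono
      simpa using hmono
    · intro y hy
      unfold auxF
      apply mul_le_mul_of_nonneg_left _ (le_of_lt (pow_pos (by positivity) 2))
      apply Real.exp_le_exp.mpr
      have h1 : Real.sqrt y ≤ Real.sqrt η := Real.sqrt_le_sqrt hy.2
      have h2 : Real.sqrt (1 - y) ≤ 1 := Real.sqrt_le_one.mpr (by linarith [hy.1])
      nlinarith [Real.sqrt_nonneg d]
  have step1 : (∫ y in (0:ℝ)..η, auxF CY d y) ≤ auxD CY d := by
    unfold auxD
    rw [← intervalIntegral.integral_add_adjacent_intervals (hInt 0 η) (hInt η 1)]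
    have : 0 ≤ ∫ y in η..1, auxF CY d y :=
      intervalIntegral.integral_nonneg hη1 (fun y _ => le_of_lt (auxF_pos CY d y hCY))
    linarith
  linarith

lemma conc_bound (CY : ℝ) (hCY : 0 < CY) {ε : ℝ} (hε0 : 0 < ε) (hε2 : ε < 1 / 2) :
    ∃ η > (0:ℝ), ∃ c > (0:ℝ), ∀ d > (0:ℝ), ∀ x ∈ Set.Icc ε (1 - ε),
      auxF CY d x / auxD CY d ≤ (1 / η) * Real.exp (-(Real.sqrt d * c)) := by
  set hE := Real.sqrt ε + Real.sqrt (1 - ε) with hhE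
  have hε1 : ε < 1 := by linarith
  have hsε : 0 < Real.sqrt ε := Real.sqrt_pos.mpr hε0
  have hs1ε : 0 < Real.sqrt (1 - ε) := Real.sqrt_pos.mpr (by linarith)
  have hE2 : hE ^ 2 = 1 + 2 * (Real.sqrt ε * Real.sqrt (1 - ε)) := by
    rw [hhE]
    have h1 : Real.sqrt ε ^ 2 = ε := Real.sq_sqrt (le_of_lt hε0)
    have h2 : Real.sqrt (1 - ε) ^ 2 = 1 - ε := Real.sq_sqrt (by linarith)
    nlinarith
  have hE1 : 1 < hE := by nlinarith [add_pos hsε hs1ε]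
  set δ := hE - 1 with hδdef
  have hδ : 0 < δ := by simp [hδdef]; linarith
  set η := min ε (δ ^ 2 / 4) with hηdef
  have hη0 : 0 < η := lt_min hε0 (by positivity)
  have hη1 : η ≤ 1 := le_trans (min_le_left _ _) (le_of_lt hε1)
  have hsη : Real.sqrt η ≤ δ / 2 := by
    calc Real.sqrt η ≤ Real.sqrt (δ ^ 2 / 4) := Real.sqrt_le_sqrt (min_le_right _ _)
    _ = δ / 2 := by
        rw [show δ ^ 2 / 4 = (δ / 2) ^ 2 by ring, Real.sqrt_sq (by linarith)]
  refine ⟨η, hη0, δ / 2, by linarith, fun d hd x hx => ?_⟩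
  have hDpos : 0 < auxD CY d :=
    lt_of_lt_of_le (by positivity) (auxD_lower CY hCY hd hη0 hη1)
  -- numerator bound
  have hNum : auxF CY d x ≤ CY ^ 2 * Real.exp (-d - Real.sqrt d * hE) := by
    unfold auxF
    apply mul_le_mul_of_nonneg_left _ (le_of_lt (pow_pos (by positivity) 2))
    apply Real.exp_le_exp.mpr
    have hxx : Real.sqrt x + Real.sqrt (1 - x) ≥ hE := by
      have hx1 : ε ≤ x := hx.1
      have hx2 : x ≤ 1 - ε := hx.2
      have h0x : 0 < x := lt_of_lt_of_le hε0 hx1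
      have h1x : 0 < 1 - x := by linarith
      have hprod : Real.sqrt ε * Real.sqrt (1 - ε) ≤ Real.sqrt x * Real.sqrt (1 - x) := by
        rw [← Real.sqrt_mul (le_of_lt hε0), ← Real.sqrt_mul (le_of_lt h0x)]
        apply Real.sqrt_le_sqrt
        nlinarith
      have hsum2 : (Real.sqrt x + Real.sqrt (1 - x)) ^ 2 =
          1 + 2 * (Real.sqrt x * Real.sqrt (1 - x)) := by
        have h1 : Real.sqrt x ^ 2 = x := Real.sq_sqrt (le_of_lt h0x)
        have h2 : Real.sqrt (1 - x) ^ 2 = 1 - x := Real.sq_sqrt (le_of_lt h1x)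
        nlinarith
      have hsq : hE ^ 2 ≤ (Real.sqrt x + Real.sqrt (1 - x)) ^ 2 := by
        rw [hE2, hsum2]; linarith
      calc hE = Real.sqrt (hE ^ 2) := (Real.sqrt_sq (by linarith)).symm
        _ ≤ Real.sqrt ((Real.sqrt x + Real.sqrt (1 - x)) ^ 2) := Real.sqrt_le_sqrt hsq
        _ = Real.sqrt x + Real.sqrt (1 - x) := Real.sqrt_sq (by positivity)
    have := mul_le_mul_of_nonneg_left hxx (Real.sqrt_nonneg d)
    linarith
  calc auxF CY d x / auxD CY d
      ≤ (CY ^ 2 * Real.exp (-d - Real.sqrt d * hE)) /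
        (η * (CY ^ 2 * Real.exp (-d - Real.sqrt d * (1 + Real.sqrt η)))) := by
        apply div_le_div₀ (by positivity) hNum (by positivity)
        exact auxD_lower CY hCY hd hη0 hη1
    _ = (1 / η) * (Real.exp (-d - Real.sqrt d * hE) /
          Real.exp (-d - Real.sqrt d * (1 + Real.sqrt η))) := by
        have hη' : η ≠ 0 := ne_of_gt hη0
        have hC' : CY ≠ 0 := ne_of_gt hCY
        field_simp
    _ = (1 / η) * Real.exp ((-d - Real.sqrt d * hE) - (-d - Real.sqrt d * (1 + Real.sqrt η))) := by
        rw [← Real.exp_sub]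
    _ ≤ (1 / η) * Real.exp (-(Real.sqrt d * (δ / 2))) := by
        apply mul_le_mul_of_nonneg_left _ (by positivity)
        apply Real.exp_le_exp.mpr
        have hsd : 0 ≤ Real.sqrt d := Real.sqrt_nonneg d
        have : 1 + Real.sqrt η ≤ hE - δ / 2 := by
          simp only [hδdef] at hsη ⊢; linarith
        nlinarith [mul_le_mul_of_nonneg_left this hsd]

lemma wd_bound (g : ℝ → ℝ) (s : Set ℝ) (hs : MeasurableSet s)
    (hsub : s ⊆ Set.Icc (0:ℝ) 1) (B : ℝ) (hb : ∀ x ∈ s, g x ≤ B) :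
    ((volume.restrict (Set.Icc (0:ℝ) 1)).withDensity (fun x => ENNReal.ofReal (g x))) s
      ≤ ENNReal.ofReal B := by
  rw [withDensity_apply _ hs, Measure.restrict_restrict hs,
    Set.inter_eq_left.mpr hsub]
  calc (∫⁻ x in s, ENNReal.ofReal (g x) ∂volume)
      ≤ ∫⁻ _x in s, ENNReal.ofReal B ∂volume :=
        setLIntegral_mono' hs (fun x hx => ENNReal.ofReal_le_ofReal (hb x hx))
    _ = ENNReal.ofReal B * volume s := setLIntegral_const s _
    _ ≤ ENNReal.ofReal B * 1 := by
        apply mul_le_mul_right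
        calc volume s ≤ volume (Set.Icc (0:ℝ) 1) := measure_mono hsub
          _ = 1 := by rw [Real.volume_Icc]; norm_num
    _ = ENNReal.ofReal B := mul_one _

lemma wd_symm (g : ℝ → ℝ) (hg : ∀ x, g (1 - x) = g x) {ε : ℝ} (hε0 : 0 ≤ ε) (hε1 : ε ≤ 1) :
    ((volume.restrict (Set.Icc (0:ℝ) 1)).withDensity (fun x => ENNReal.ofReal (g x)))
        (Set.Icc (0:ℝ) ε)
      = ((volume.restrict (Set.Icc (0:ℝ) 1)).withDensity (fun x => ENNReal.ofReal (g x)))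
        (Set.Icc (1 - ε) 1) := by
  rw [withDensity_apply _ measurableSet_Icc, withDensity_apply _ measurableSet_Icc,
    Measure.restrict_restrict measurableSet_Icc, Measure.restrict_restrict measurableSet_Icc,
    Set.inter_eq_left.mpr (Set.Icc_subset_Icc le_rfl hε1),
    Set.inter_eq_left.mpr (Set.Icc_subset_Icc (by linarith) le_rfl)]
  have hT : MeasurePreserving (fun x : ℝ => 1 - x) volume volume :=
    Measure.measurePreserving_sub_left volume 1
  have hTe : MeasurableEmbedding (fun x : ℝ => 1 - x) :=
    (MeasurableEquiv.subLeft (1:ℝ)).measurableEmbedding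
  have himg : (fun x : ℝ => 1 - x) '' Set.Icc (0:ℝ) ε = Set.Icc (1 - ε) 1 := by
    rw [Set.image_const_sub_Icc]; norm_num
  calc (∫⁻ x in Set.Icc (0:ℝ) ε, ENNReal.ofReal (g x) ∂volume)
      = ∫⁻ x in Set.Icc (0:ℝ) ε, ENNReal.ofReal (g (1 - x)) ∂volume := by
        apply lintegral_congr; intro x; rw [hg]
    _ = ∫⁻ y in (fun x : ℝ => 1 - x) '' Set.Icc (0:ℝ) ε, ENNReal.ofReal (g y) ∂volume :=
        hT.setLIntegral_comp_emb hTe (fun y => ENNReal.ofReal (g y)) _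
    _ = ∫⁻ y in Set.Icc (1 - ε) 1, ENNReal.ofReal (g y) ∂volume := by rw [himg]


lemma enn_half_add : (1/2 + 1/2 : ℝ≥0∞) = 1 := by
  rw [one_div, ENNReal.inv_two_add_inv_two]

lemma enn_two_half : (2 : ℝ≥0∞) * (1/2) = 1 := by
  rw [one_div, ENNReal.mul_inv_cancel two_ne_zero ENNReal.ofNat_ne_top]

/-- For `f_Y(x) = C_Y·exp(−x−√x)`: `(log f_Y)''(x) = (1/4)x^{−3/2} > 0`,
`d·(f_Y'(dx)/f_Y(dx) − f_Y'(d(1−x))/f_Y(d(1−x))) = (1/2)√d·(−x^{−1/2} + (1−x)^{−1/2}) → −∞`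
for `x ∈ (0,1/2)`, and `μ_d → (1/2)δ₀ + (1/2)δ₁` in distribution. -/
theorem stmt_17
    (CY : ℝ)
    (hCY : CY = (∫ y in Set.Ioi (0 : ℝ), Real.exp (-y - Real.sqrt y))⁻¹)
    (fY : ℝ → ℝ)
    (hfY : ∀ x, 0 < x → fY x = CY * Real.exp (-x - Real.sqrt x))
    (fZ : ℝ → ℝ → ℝ)
    (hfZ : ∀ d : ℝ, ∀ x ∈ Set.Ioo (0 : ℝ) 1, fZ d x =
      fY (d * x) * fY (d * (1 - x)) / ∫ y in (0 : ℝ)..1, fY (d * y) * fY (d * (1 - y)))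
    (μ : ℝ → Measure ℝ)
    (hμ : ∀ d, μ d = (volume.restrict (Set.Icc (0 : ℝ) 1)).withDensity
      (fun x => ENNReal.ofReal (fZ d x)))
    (hprob : ∀ d > (0 : ℝ), IsProbabilityMeasure (μ d)) :
    (∀ x > (0 : ℝ),
      deriv (deriv (fun t => Real.log (fY t))) x = (1 / 4) * x ^ (-(3 / 2) : ℝ) ∧
      0 < deriv (deriv (fun t => Real.log (fY t))) x) ∧
    (∀ x ∈ Set.Ioo (0 : ℝ) (1 / 2),
      (∀ d > (0 : ℝ),
        d * (deriv fY (d * x) / fY (d * x) - deriv fY (d * (1 - x)) / fY (d * (1 - x))) =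
          (1 / 2) * Real.sqrt d * (-x ^ (-(1 / 2) : ℝ) + (1 - x) ^ (-(1 / 2) : ℝ))) ∧
      Filter.Tendsto
        (fun d => d * (deriv fY (d * x) / fY (d * x) -
          deriv fY (d * (1 - x)) / fY (d * (1 - x))))
        Filter.atTop Filter.atBot) ∧
    (∀ A : Set ℝ, IsOpen A →
      ((1 / 2 : ℝ≥0∞) • Measure.dirac (0 : ℝ) + (1 / 2 : ℝ≥0∞) • Measure.dirac (1 : ℝ)) A ≤
        Filter.liminf (fun d => μ d A) Filter.atTop) := by

  have hCYpos : 0 < CY := hCY ▸ aux_CY_pos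
  refine ⟨?_, ?_, ?_⟩
  · -- Part 1
    intro x hx
    have h := aux_logderiv2 CY hCYpos fY hfY x hx
    refine ⟨h, ?_⟩
    rw [h]
    positivity
  · -- Part 2
    intro x hx
    exact ⟨aux_identity CY hCYpos fY hfY x hx, aux_tendsto CY hCYpos fY hfY x hx⟩
  · -- Part 3
    intro A hA
    have hmeasA := hA.measurableSet
    -- key rewrite of μ d
    have hkey : ∀ d > (0:ℝ), μ d = (volume.restrict (Set.Icc (0:ℝ) 1)).withDensity
        (fun x => ENNReal.ofReal (auxF CY d x / auxD CY d)) := fun d hd => by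
      rw [hμ d]; exact key_density CY fY hfY fZ hfZ hd
    -- total mass on [0,1]
    have huniv : ∀ d > (0:ℝ), (1:ℝ≥0∞) ≤ μ d (Set.Icc (0:ℝ) 1) := by
      intro d hd
      have hcompl : μ d ((Set.Icc (0:ℝ) 1)ᶜ) = 0 := by
        rw [hμ d, withDensity_apply _ measurableSet_Icc.compl,
          Measure.restrict_restrict measurableSet_Icc.compl, Set.compl_inter_self,
          Measure.restrict_empty, lintegral_zero_measure]
      have h1 : μ d Set.univ = 1 := (hprob d hd).measure_univ
      calc (1:ℝ≥0∞) = μ d Set.univ := h1.symm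
        _ = μ d (Set.Icc (0:ℝ) 1 ∪ (Set.Icc (0:ℝ) 1)ᶜ) := by rw [Set.union_compl_self]
        _ ≤ μ d (Set.Icc (0:ℝ) 1) + μ d ((Set.Icc (0:ℝ) 1)ᶜ) := measure_union_le _ _
        _ = μ d (Set.Icc (0:ℝ) 1) := by rw [hcompl, add_zero]
    -- concentration
    have hconc : ∀ ε : ℝ, 0 < ε → ε < 1/2 →
        Tendsto (fun d => μ d (Set.Icc ε (1 - ε))) atTop (nhds 0) := by
      intro ε hε0 hε2
      obtain ⟨η, hη, c, hc, hb⟩ := conc_bound CY hCYpos hε0 hε2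
      have hupper : Tendsto (fun d : ℝ => ENNReal.ofReal ((1/η) * Real.exp (-(Real.sqrt d * c))))
          atTop (nhds 0) := by
        have h1 : Tendsto (fun d : ℝ => Real.sqrt d * c) atTop atTop :=
          aux_sqrt_tendsto.atTop_mul_const hc
        have h2 : Tendsto (fun d : ℝ => -(Real.sqrt d * c)) atTop atBot :=
          tendsto_neg_atBot_iff.mpr h1
        have h3 : Tendsto (fun d : ℝ => Real.exp (-(Real.sqrt d * c))) atTop (nhds 0) :=
          Real.tendsto_exp_atBot.comp h2
        have h4 : Tendsto (fun d : ℝ => (1/η) * Real.exp (-(Real.sqrt d * c)))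
            atTop (nhds ((1/η) * 0)) := h3.const_mul _
        rw [mul_zero] at h4
        have h5 := ENNReal.tendsto_ofReal h4
        simpa using h5
      apply tendsto_of_tendsto_of_tendsto_of_le_of_le' tendsto_const_nhds hupper
      · filter_upwards with d using zero_le
      · filter_upwards [eventually_gt_atTop (0:ℝ)] with d hd
        rw [hkey d hd]
        exact wd_bound _ _ measurableSet_Icc
          (Set.Icc_subset_Icc (le_of_lt hε0) (by linarith)) _ (hb d hd)
    -- symmetry
    have hsymm : ∀ d > (0:ℝ), ∀ ε : ℝ, 0 ≤ ε → ε ≤ 1 →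
        μ d (Set.Icc (0:ℝ) ε) = μ d (Set.Icc (1 - ε) 1) := by
      intro d hd ε hε0 hε1
      rw [hkey d hd]
      exact wd_symm _ (fun x => by rw [auxF_symm]) hε0 hε1
    -- evaluate the limit measure on A
    rw [Measure.add_apply, Measure.smul_apply, Measure.smul_apply,
      Measure.dirac_apply' _ hmeasA, Measure.dirac_apply' _ hmeasA]
    -- helper for open balls
    have hball : ∀ z : ℝ, z ∈ A → ∃ r > (0:ℝ), ∀ y : ℝ, |y - z| ≤ r → y ∈ A := by
      intro z hz
      obtain ⟨r, hr, hsub⟩ := Metric.isOpen_iff.mp hA z hz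
      exact ⟨r/2, by linarith, fun y hy => hsub (by
        rw [Metric.mem_ball, Real.dist_eq]; linarith)⟩
    by_cases h0 : (0:ℝ) ∈ A <;> by_cases h1 : (1:ℝ) ∈ A
    · -- both endpoints in A
      simp only [Set.indicator_of_mem h0, Set.indicator_of_mem h1, Pi.one_apply, smul_eq_mul,
        mul_one]
      obtain ⟨r0, hr0, hs0⟩ := hball 0 h0
      obtain ⟨r1, hr1, hs1⟩ := hball 1 h1
      set ε := min (min r0 r1) (1/4) with hεdef
      have hε0 : 0 < ε := lt_min (lt_min hr0 hr1) (by norm_num)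
      have hε2 : ε < 1/2 := lt_of_le_of_lt (min_le_right _ _) (by norm_num)
      have hsubA : Set.Icc (0:ℝ) 1 ⊆ A ∪ Set.Icc ε (1 - ε) := by
        intro x hx
        rcases le_or_gt x ε with h | h
        · exact Or.inl (hs0 x (by
            rw [abs_of_nonneg (by linarith [hx.1])]
            simp only [sub_zero]
            exact le_trans h (le_trans (min_le_left _ _) (min_le_left _ _))))
        rcases le_or_gt (1 - ε) x with h' | h'
        · refine Or.inl (hs1 x ?_)
          rw [abs_le]
          constructor
          · have : ε ≤ r1 := le_trans (min_le_left _ _) (min_le_right _ _)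
            linarith
          · have : 0 < r1 := hr1
            linarith [hx.2]
        · exact Or.inr ⟨le_of_lt h, le_of_lt h'⟩
      have hineq : ∀ d > (0:ℝ), (1:ℝ≥0∞) ≤ μ d A + μ d (Set.Icc ε (1 - ε)) := by
        intro d hd
        calc (1:ℝ≥0∞) ≤ μ d (Set.Icc (0:ℝ) 1) := huniv d hd
          _ ≤ μ d (A ∪ Set.Icc ε (1 - ε)) := measure_mono hsubA
          _ ≤ μ d A + μ d (Set.Icc ε (1 - ε)) := measure_union_le _ _
      rw [le_liminf_iff]
      intro b hb
      have hb' : b < 1 := by rwa [enn_half_add] at hb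
      have hb1 : 0 < (1:ℝ≥0∞) - b := tsub_pos_iff_lt.mpr hb'
      filter_upwards [(hconc ε hε0 hε2).eventually (gt_mem_nhds hb1),
        eventually_gt_atTop (0:ℝ)] with d hk hd
      by_contra hcon
      push_neg at hcon
      have : (1:ℝ≥0∞) < 1 := by
        calc (1:ℝ≥0∞) ≤ μ d A + μ d (Set.Icc ε (1 - ε)) := hineq d hd
          _ ≤ b + μ d (Set.Icc ε (1 - ε)) := add_le_add_left hcon _
          _ < b + (1 - b) := ENNReal.add_lt_add_left (ne_top_of_lt hb') hk
          _ = 1 := add_tsub_cancel_of_le (le_of_lt hb')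
      exact absurd this (lt_irrefl _)
    · -- 0 ∈ A, 1 ∉ A
      simp only [Set.indicator_of_mem h0, Set.indicator_of_notMem h1, Pi.one_apply,
        smul_eq_mul, mul_one, mul_zero, add_zero]
      obtain ⟨r0, hr0, hs0⟩ := hball 0 h0
      set ε := min r0 (1/4) with hεdef
      have hε0 : 0 < ε := lt_min hr0 (by norm_num)
      have hε2 : ε < 1/2 := lt_of_le_of_lt (min_le_right _ _) (by norm_num)
      have hsubA : Set.Icc (0:ℝ) ε ⊆ A := by
        intro x hx
        exact hs0 x (by
          rw [abs_of_nonneg (by linarith [hx.1])]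
          simp only [sub_zero]
          exact le_trans hx.2 (min_le_left _ _))
      have hineq : ∀ d > (0:ℝ), (1:ℝ≥0∞) ≤ 2 * μ d (Set.Icc (0:ℝ) ε)
          + μ d (Set.Icc ε (1 - ε)) := by
        intro d hd
        have hsplit : Set.Icc (0:ℝ) 1 ⊆
            (Set.Icc (0:ℝ) ε ∪ Set.Icc ε (1 - ε)) ∪ Set.Icc (1 - ε) 1 := by
          intro x hx
          rcases le_or_gt x ε with h | h
          · exact Or.inl (Or.inl ⟨hx.1, h⟩)
          rcases le_or_gt x (1 - ε) with h' | h'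
          · exact Or.inl (Or.inr ⟨le_of_lt h, h'⟩)
          · exact Or.inr ⟨le_of_lt h', hx.2⟩
        calc (1:ℝ≥0∞) ≤ μ d (Set.Icc (0:ℝ) 1) := huniv d hd
          _ ≤ μ d ((Set.Icc (0:ℝ) ε ∪ Set.Icc ε (1 - ε)) ∪ Set.Icc (1 - ε) 1) :=
            measure_mono hsplit
          _ ≤ μ d (Set.Icc (0:ℝ) ε ∪ Set.Icc ε (1 - ε)) + μ d (Set.Icc (1 - ε) 1) :=
            measure_union_le _ _
          _ ≤ (μ d (Set.Icc (0:ℝ) ε) + μ d (Set.Icc ε (1 - ε))) + μ d (Set.Icc (1 - ε) 1) :=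
            add_le_add_left (measure_union_le _ _) _
          _ = 2 * μ d (Set.Icc (0:ℝ) ε) + μ d (Set.Icc ε (1 - ε)) := by
            rw [← hsymm d hd ε (le_of_lt hε0) (by linarith)]
            ring
      rw [le_liminf_iff]
      intro b hb
      have hb' : b < 1/2 := by simpa using hb
      have h2b : 2 * b < 1 := by
        calc 2 * b < 2 * (1/2) := by
              exact (ENNReal.mul_lt_mul_iff_right two_ne_zero ENNReal.ofNat_ne_top).mpr hb'
          _ = 1 := enn_two_half
      have hb1 : 0 < (1:ℝ≥0∞) - 2 * b := tsub_pos_iff_lt.mpr h2b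
      filter_upwards [(hconc ε hε0 hε2).eventually (gt_mem_nhds hb1),
        eventually_gt_atTop (0:ℝ)] with d hk hd
      by_contra hcon
      push_neg at hcon
      have hmA : μ d (Set.Icc (0:ℝ) ε) ≤ b := le_trans (measure_mono hsubA) hcon
      have : (1:ℝ≥0∞) < 1 := by
        calc (1:ℝ≥0∞) ≤ 2 * μ d (Set.Icc (0:ℝ) ε) + μ d (Set.Icc ε (1 - ε)) := hineq d hd
          _ ≤ 2 * b + μ d (Set.Icc ε (1 - ε)) :=
            add_le_add_left (mul_le_mul_right hmA 2) _
          _ < 2 * b + (1 - 2 * b) := ENNReal.add_lt_add_left (ne_top_of_lt h2b) hk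
          _ = 1 := add_tsub_cancel_of_le (le_of_lt h2b)
      exact absurd this (lt_irrefl _)
    · -- 0 ∉ A, 1 ∈ A
      simp only [Set.indicator_of_notMem h0, Set.indicator_of_mem h1, Pi.one_apply,
        smul_eq_mul, mul_one, mul_zero, zero_add]
      obtain ⟨r1, hr1, hs1⟩ := hball 1 h1
      set ε := min r1 (1/4) with hεdef
      have hε0 : 0 < ε := lt_min hr1 (by norm_num)
      have hε2 : ε < 1/2 := lt_of_le_of_lt (min_le_right _ _) (by norm_num)
      have hsubA : Set.Icc (1 - ε) 1 ⊆ A := by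
        intro x hx
        refine hs1 x ?_
        rw [abs_le]
        constructor
        · have : ε ≤ r1 := min_le_left _ _
          linarith [hx.1]
        · linarith [hx.2]
      have hineq : ∀ d > (0:ℝ), (1:ℝ≥0∞) ≤ 2 * μ d (Set.Icc (1 - ε) 1)
          + μ d (Set.Icc ε (1 - ε)) := by
        intro d hd
        have hsplit : Set.Icc (0:ℝ) 1 ⊆
            (Set.Icc (0:ℝ) ε ∪ Set.Icc ε (1 - ε)) ∪ Set.Icc (1 - ε) 1 := by
          intro x hx
          rcases le_or_gt x ε with h | h
          · exact Or.inl (Or.inl ⟨hx.1, h⟩)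
          rcases le_or_gt x (1 - ε) with h' | h'
          · exact Or.inl (Or.inr ⟨le_of_lt h, h'⟩)
          · exact Or.inr ⟨le_of_lt h', hx.2⟩
        calc (1:ℝ≥0∞) ≤ μ d (Set.Icc (0:ℝ) 1) := huniv d hd
          _ ≤ μ d ((Set.Icc (0:ℝ) ε ∪ Set.Icc ε (1 - ε)) ∪ Set.Icc (1 - ε) 1) :=
            measure_mono hsplit
          _ ≤ μ d (Set.Icc (0:ℝ) ε ∪ Set.Icc ε (1 - ε)) + μ d (Set.Icc (1 - ε) 1) :=
            measure_union_le _ _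
          _ ≤ (μ d (Set.Icc (0:ℝ) ε) + μ d (Set.Icc ε (1 - ε))) + μ d (Set.Icc (1 - ε) 1) :=
            add_le_add_left (measure_union_le _ _) _
          _ = 2 * μ d (Set.Icc (1 - ε) 1) + μ d (Set.Icc ε (1 - ε)) := by
            rw [hsymm d hd ε (le_of_lt hε0) (by linarith)]
            ring
      rw [le_liminf_iff]
      intro b hb
      have hb' : b < 1/2 := by simpa using hb
      have h2b : 2 * b < 1 := by
        calc 2 * b < 2 * (1/2) := by
              exact (ENNReal.mul_lt_mul_iff_right two_ne_zero ENNReal.ofNat_ne_top).mpr hb'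
          _ = 1 := enn_two_half
      have hb1 : 0 < (1:ℝ≥0∞) - 2 * b := tsub_pos_iff_lt.mpr h2b
      filter_upwards [(hconc ε hε0 hε2).eventually (gt_mem_nhds hb1),
        eventually_gt_atTop (0:ℝ)] with d hk hd
      by_contra hcon
      push_neg at hcon
      have hmA : μ d (Set.Icc (1 - ε) 1) ≤ b := le_trans (measure_mono hsubA) hcon
      have : (1:ℝ≥0∞) < 1 := by
        calc (1:ℝ≥0∞) ≤ 2 * μ d (Set.Icc (1 - ε) 1) + μ d (Set.Icc ε (1 - ε)) := hineq d hd
          _ ≤ 2 * b + μ d (Set.Icc ε (1 - ε)) :=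
            add_le_add_left (mul_le_mul_right hmA 2) _
          _ < 2 * b + (1 - 2 * b) := ENNReal.add_lt_add_left (ne_top_of_lt h2b) hk
          _ = 1 := add_tsub_cancel_of_le (le_of_lt h2b)
      exact absurd this (lt_irrefl _)
    · -- neither
      simp only [Set.indicator_of_notMem h0, Set.indicator_of_notMem h1, mul_zero,
        add_zero, smul_eq_mul]
      exact zero_le
end
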